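/- arXiv:0810.1824 — 3 statements merged into one kernel-verified Lean document; each statement's English description precedes it below -/
import Mathlib

section
/- Sewing map. Let V be a Banach space, T > 0, μ > 1 and 0 < ρ < μ. Let h assign to each triple 0 ≤ s ≤ u ≤ t ≤ T an element h_{tus} ∈ V, continuously in (t,u,s), such that (i) δh = 0, i.e. h_{uvs} − h_{tvs} + h_{tus} − h_{tuv} = 0 for all 0 ≤ s ≤ v ≤ u ≤ t ≤ T, and (ii) there is K ≥ 0 with ‖h_{tus}‖ ≤ K (t−u)^ρ (u−s)^{μ−ρ} for all s ≤ u ≤ t. Then there exists a unique continuous M : {(t,s) : 0 ≤ s ≤ t ≤ T} → V with M_{tt} = 0 for all t, such that M_{ts} − M_{tu} − M_{us} = h_{tus} for all s ≤ u ≤ t and sup_{s<t} ‖M_{ts}‖/(t−s)^μ < ∞. Moreover ‖M_{ts}‖ ≤ c_μ K (t−s)^μ for all s ≤ t, where c_μ = 2 + 2^μ ∑_{k=1}^∞ k^{−μ}. -/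
/-- The sewing constant `c_μ = 2 + 2^μ ∑_{k=1}^∞ k^{−μ}`. -/
noncomputable def cSewing (μ : ℝ) : ℝ := 2 + 2 ^ μ * ∑' k : ℕ, ((k : ℝ) + 1) ^ (-μ)

/- ------------------------------------------------------------------ -/
/- Auxiliary definitions for the sewing construction.                  -/
/- ------------------------------------------------------------------ -/

/-- `i`-th point of the uniform `n`-partition of `[s,t]`. -/
noncomputable def sewPt (s t : ℝ) (n i : ℕ) : ℝ := s + i * (t - s) / n

/-- Sum of the germ `h · · 0` over the uniform `n`-partition of `[s,t]`. -/
noncomputable def sewU {V : Type*} [NormedAddCommGroup V]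
    (h : ℝ → ℝ → ℝ → V) (n : ℕ) (t s : ℝ) : V :=
  ∑ i ∈ Finset.range n, h (sewPt s t n (i + 1)) (sewPt s t n i) 0

/-- The limit of dyadic uniform partition sums. -/
noncomputable def sewA {V : Type*} [NormedAddCommGroup V]
    (h : ℝ → ℝ → ℝ → V) (t s : ℝ) : V :=
  Filter.limUnder Filter.atTop fun a : ℕ => sewU h (2 ^ a) t s

lemma sewPt_zero (s t : ℝ) (n : ℕ) : sewPt s t n 0 = s := by simp [sewPt]

lemma sewPt_diag (t : ℝ) (n i : ℕ) : sewPt t t n i = t := by simp [sewPt]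

lemma sewPt_last (s t : ℝ) {n : ℕ} (hn : n ≠ 0) : sewPt s t n n = t := by
  have h0 : (n : ℝ) ≠ 0 := Nat.cast_ne_zero.mpr hn
  rw [sewPt]
  field_simp
  ring

lemma sewPt_step (s t : ℝ) (n i : ℕ) :
    sewPt s t n (i + 1) - sewPt s t n i = (t - s) / n := by
  rw [sewPt, sewPt]
  push_cast
  ring

lemma sewPt_ge {s t : ℝ} (hst : s ≤ t) (n i : ℕ) : s ≤ sewPt s t n i := by
  rw [sewPt]
  have : 0 ≤ (i : ℝ) * (t - s) / n :=
    div_nonneg (mul_nonneg (Nat.cast_nonneg i) (by linarith)) (Nat.cast_nonneg n)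
  linarith

lemma sewPt_le {s t : ℝ} (hst : s ≤ t) {n i : ℕ} (hin : i ≤ n) (hn : n ≠ 0) :
    sewPt s t n i ≤ t := by
  have hn0 : (0 : ℝ) < n := by exact_mod_cast Nat.pos_of_ne_zero hn
  rw [sewPt]
  have h1 : (i : ℝ) * (t - s) ≤ (n : ℝ) * (t - s) :=
    mul_le_mul_of_nonneg_right (by exact_mod_cast hin) (by linarith)
  have h2 : (i : ℝ) * (t - s) / n ≤ (n : ℝ) * (t - s) / n :=
    (div_le_div_iff_of_pos_right hn0).mpr h1
  have h3 : (n : ℝ) * (t - s) / n = t - s := by field_simp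
  linarith

lemma sewPt_mono {s t : ℝ} (hst : s ≤ t) (n : ℕ) {i j : ℕ} (hij : i ≤ j) :
    sewPt s t n i ≤ sewPt s t n j := by
  rcases Nat.eq_zero_or_pos n with hn | hn
  · subst hn; simp [sewPt]
  · have hn0 : (0 : ℝ) < n := by exact_mod_cast hn
    rw [sewPt, sewPt]
    have h1 : (i : ℝ) * (t - s) ≤ (j : ℝ) * (t - s) :=
      mul_le_mul_of_nonneg_right (by exact_mod_cast hij) (by linarith)
    have h2 : (i : ℝ) * (t - s) / n ≤ (j : ℝ) * (t - s) / n :=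
      (div_le_div_iff_of_pos_right hn0).mpr h1
    linarith

lemma sewPt_left {j n : ℕ} (hj : j ≠ 0) (hn : n ≠ 0) (s t : ℝ) (i : ℕ) :
    sewPt s (sewPt s t n j) j i = sewPt s t n i := by
  have hj0 : (j : ℝ) ≠ 0 := Nat.cast_ne_zero.mpr hj
  have hn0 : (n : ℝ) ≠ 0 := Nat.cast_ne_zero.mpr hn
  rw [sewPt, sewPt, sewPt]
  field_simp
  ring

lemma sewPt_right {j n : ℕ} (hjn : j < n) (s t : ℝ) (i : ℕ) :
    sewPt (sewPt s t n j) t (n - j) i = sewPt s t n (j + i) := by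
  have hn0 : (n : ℝ) ≠ 0 := Nat.cast_ne_zero.mpr (by omega)
  have hd0 : ((n : ℝ) - j) ≠ 0 := by
    have : (j : ℝ) < n := by exact_mod_cast hjn
    linarith
  rw [sewPt, sewPt, sewPt, Nat.cast_sub hjn.le]
  push_cast
  field_simp
  ring

lemma sewPt_mul {n j m : ℕ} (hm : m ≠ 0) (hn : n ≠ 0) (s t : ℝ) :
    sewPt s t (n * m) (j * m) = sewPt s t n j := by
  have hm0 : (m : ℝ) ≠ 0 := Nat.cast_ne_zero.mpr hm
  have hn0 : (n : ℝ) ≠ 0 := Nat.cast_ne_zero.mpr hn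
  rw [sewPt, sewPt]
  push_cast
  field_simp

lemma rpow_prod_le {μ ρ K x y z : ℝ} (hρ0 : 0 < ρ) (hρμ : ρ < μ) (hK : 0 ≤ K)
    (hx : 0 ≤ x) (hy : 0 ≤ y) (hxz : x ≤ z) (hyz : y ≤ z) :
    K * x ^ ρ * y ^ (μ - ρ) ≤ K * z ^ μ := by
  have hμ0 : (0 : ℝ) < μ := lt_trans hρ0 hρμ
  have hz : 0 ≤ z := le_trans hx hxz
  have h1 : x ^ ρ ≤ z ^ ρ := Real.rpow_le_rpow hx hxz hρ0.le
  have h2 : y ^ (μ - ρ) ≤ z ^ (μ - ρ) := Real.rpow_le_rpow hy hyz (by linarith)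
  have hsum : ρ + (μ - ρ) = μ := by ring
  have h3 : z ^ ρ * z ^ (μ - ρ) = z ^ μ := by
    rw [← Real.rpow_add' hz (by rw [hsum]; exact hμ0.ne')]
    rw [hsum]
  have h4 : x ^ ρ * y ^ (μ - ρ) ≤ z ^ ρ * z ^ (μ - ρ) :=
    mul_le_mul h1 h2 (Real.rpow_nonneg hy _) (Real.rpow_nonneg hz _)
  have h5 := mul_le_mul_of_nonneg_left h4 hK
  rw [h3] at h5
  calc K * x ^ ρ * y ^ (μ - ρ) = K * (x ^ ρ * y ^ (μ - ρ)) := by ring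
    _ ≤ K * z ^ μ := h5

lemma scale_rpow {μ : ℝ} (c x : ℝ) (hc : 0 < c) (hx : 0 ≤ x) :
    c * (x / c) ^ μ = x ^ μ * c ^ (1 - μ) := by
  rw [Real.div_rpow hx hc.le, Real.rpow_sub hc, Real.rpow_one]
  have hcμ : c ^ μ ≠ 0 := (Real.rpow_pos_of_pos hc μ).ne'
  field_simp

lemma pow_rpow_comm (a : ℕ) (y : ℝ) : ((2 : ℝ) ^ a) ^ y = ((2 : ℝ) ^ y) ^ a := by
  rw [← Real.rpow_natCast ((2 : ℝ) ^ y) a, ← Real.rpow_mul (by norm_num), mul_comm,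
    Real.rpow_mul (by norm_num), Real.rpow_natCast]

lemma sewU_one {V : Type*} [NormedAddCommGroup V] (h : ℝ → ℝ → ℝ → V) (t s : ℝ) :
    sewU h 1 t s = h t s 0 := by
  rw [sewU, Finset.sum_range_one, sewPt_zero, sewPt_last s t (by norm_num)]

lemma sewU_concat {V : Type*} [NormedAddCommGroup V] (h : ℝ → ℝ → ℝ → V)
    {n j : ℕ} (hj : j ≠ 0) (hjn : j < n) (t s : ℝ) :
    sewU h n t s = sewU h j (sewPt s t n j) s + sewU h (n - j) t (sewPt s t n j) := by
  have hn : n ≠ 0 := by omega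
  have hsplit : n = j + (n - j) := by omega
  rw [sewU, sewU, sewU]
  calc ∑ i ∈ Finset.range n, h (sewPt s t n (i + 1)) (sewPt s t n i) 0
      = ∑ i ∈ Finset.range (j + (n - j)), h (sewPt s t n (i + 1)) (sewPt s t n i) 0 := by
        rw [← hsplit]
    _ = (∑ i ∈ Finset.range j, h (sewPt s t n (i + 1)) (sewPt s t n i) 0)
        + ∑ i ∈ Finset.range (n - j), h (sewPt s t n (j + i + 1)) (sewPt s t n (j + i)) 0 := by
        rw [Finset.sum_range_add]
    _ = _ := by
        congr 1
        · refine Finset.sum_congr rfl fun i _ => ?_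
          rw [sewPt_left hj hn, sewPt_left hj hn]
        · refine Finset.sum_congr rfl fun i _ => ?_
          rw [sewPt_right hjn, sewPt_right hjn, Nat.add_assoc]

lemma sewU_group {V : Type*} [NormedAddCommGroup V] (h : ℝ → ℝ → ℝ → V)
    {m : ℕ} (hm : m ≠ 0) :
    ∀ (n : ℕ) (t s : ℝ), sewU h (n * m) t s
      = ∑ i ∈ Finset.range n, sewU h m (sewPt s t n (i + 1)) (sewPt s t n i) := by
  intro n
  induction n with
  | zero => intro t s; simp [sewU]
  | succ n ih =>
    intro t s
    rcases Nat.eq_zero_or_pos n with hn | hn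
    · subst hn
      rw [Finset.sum_range_one, sewPt_zero, sewPt_last s t (by norm_num : (1:ℕ) ≠ 0)]
      norm_num
    · have hj : n * m ≠ 0 := Nat.mul_ne_zero (by omega) hm
      have hadd : (n + 1) * m = n * m + m := by ring
      have hlt : n * m < (n + 1) * m := by
        have := Nat.pos_of_ne_zero hm; omega
      rw [sewU_concat h hj hlt t s]
      have hsub : (n + 1) * m - n * m = m := by omega
      have hu : sewPt s t ((n + 1) * m) (n * m) = sewPt s t (n + 1) n :=
        sewPt_mul hm (by omega) s t
      rw [hsub, hu, ih]
      rw [Finset.sum_range_succ]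
      congr 1
      · refine Finset.sum_congr rfl fun i _ => ?_
        rw [sewPt_left (by omega : n ≠ 0) (by omega : n + 1 ≠ 0),
          sewPt_left (by omega : n ≠ 0) (by omega : n + 1 ≠ 0)]
      · rw [sewPt_last s t (by omega : n + 1 ≠ 0)]

section SewMain
set_option linter.unusedSectionVars false

variable {V : Type*} [NormedAddCommGroup V] [NormedSpace ℝ V] [CompleteSpace V]
variable {T μ ρ K : ℝ} {h : ℝ → ℝ → ℝ → V}

/-- Crude bound: a uniform `m`-partition sum differs from the germ by at most
`(m-1) K (b-a)^μ`. -/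
lemma sewU_crude (hρ0 : 0 < ρ) (hρμ : ρ < μ) (hK : 0 ≤ K)
    (hrem : ∀ a b c : ℝ, 0 ≤ a → a ≤ b → b ≤ c → c ≤ T →
      ‖h c a 0 - h c b 0 - h b a 0‖ ≤ K * (c - b) ^ ρ * (b - a) ^ (μ - ρ)) :
    ∀ (m : ℕ), m ≠ 0 → ∀ a b : ℝ, 0 ≤ a → a ≤ b → b ≤ T →
      ‖sewU h m b a - h b a 0‖ ≤ ((m : ℝ) - 1) * (K * (b - a) ^ μ) := by
  intro m
  induction m with
  | zero => intro hm; exact absurd rfl hm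
  | succ m ih =>
    intro _ a b ha hab hbT
    rcases Nat.eq_zero_or_pos m with hm | hm
    · subst hm
      rw [sewU_one]
      simp [Real.rpow_nonneg (by linarith : (0:ℝ) ≤ b - a), hK]
    · have hmne : m ≠ 0 := by omega
      have hlt : m < m + 1 := by omega
      rw [sewU_concat h hmne hlt b a]
      have hsub : m + 1 - m = 1 := by omega
      rw [hsub, sewU_one]
      set u := sewPt a b (m + 1) m with hu
      have hau : a ≤ u := sewPt_ge hab (m + 1) m
      have hub : u ≤ b := sewPt_le hab (by omega) (by omega)
      have huT : u ≤ T := le_trans hub hbT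
      have h0u : 0 ≤ u := le_trans ha hau
      have e1 : sewU h m u a + h b u 0 - h b a 0
          = (sewU h m u a - h u a 0) - (h b a 0 - h b u 0 - h u a 0) := by abel
      rw [e1]
      refine le_trans (norm_sub_le _ _) ?_
      have i1 : ‖sewU h m u a - h u a 0‖ ≤ ((m : ℝ) - 1) * (K * (u - a) ^ μ) :=
        ih hmne a u ha hau huT
      have i2 : ‖h b a 0 - h b u 0 - h u a 0‖ ≤ K * (b - u) ^ ρ * (u - a) ^ (μ - ρ) :=
        hrem a u b ha hau hub hbT
      have i2' : K * (b - u) ^ ρ * (u - a) ^ (μ - ρ) ≤ K * (b - a) ^ μ :=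
        rpow_prod_le hρ0 hρμ hK (by linarith) (by linarith) (by linarith) (by linarith)
      have i1' : ((m : ℝ) - 1) * (K * (u - a) ^ μ) ≤ ((m : ℝ) - 1) * (K * (b - a) ^ μ) := by
        have hm1 : (1 : ℝ) ≤ (m : ℝ) := by exact_mod_cast hm
        have : (u - a) ^ μ ≤ (b - a) ^ μ :=
          Real.rpow_le_rpow (by linarith) (by linarith) (by linarith)
        have h2 : K * (u - a) ^ μ ≤ K * (b - a) ^ μ := mul_le_mul_of_nonneg_left this hK
        nlinarith
      push_cast
      nlinarith [norm_nonneg (sewU h m u a - h u a 0)]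

/-- Sharp factor-2 refinement bound. -/
lemma sewU_refine_two (hρ0 : 0 < ρ) (hρμ : ρ < μ) (hK : 0 ≤ K)
    (hrem : ∀ a b c : ℝ, 0 ≤ a → a ≤ b → b ≤ c → c ≤ T →
      ‖h c a 0 - h c b 0 - h b a 0‖ ≤ K * (c - b) ^ ρ * (b - a) ^ (μ - ρ)) :
    ∀ (n : ℕ), n ≠ 0 → ∀ s t : ℝ, 0 ≤ s → s ≤ t → t ≤ T →
      ‖sewU h (n * 2) t s - sewU h n t s‖ ≤ (n : ℝ) * (K * ((t - s) / n / 2) ^ μ) := by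
  intro n hn s t hs hst htT
  have hdiff : sewU h (n * 2) t s - sewU h n t s
      = ∑ i ∈ Finset.range n,
          (sewU h 2 (sewPt s t n (i + 1)) (sewPt s t n i)
            - h (sewPt s t n (i + 1)) (sewPt s t n i) 0) := by
    rw [sewU_group h (by norm_num : (2:ℕ) ≠ 0) n t s, sewU, ← Finset.sum_sub_distrib]
  rw [hdiff]
  refine le_trans (norm_sum_le _ _) ?_
  have hterm : ∀ i ∈ Finset.range n,
      ‖sewU h 2 (sewPt s t n (i + 1)) (sewPt s t n i)
        - h (sewPt s t n (i + 1)) (sewPt s t n i) 0‖ ≤ K * ((t - s) / n / 2) ^ μ := by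
    intro i hi
    have hin : i < n := Finset.mem_range.mp hi
    set a := sewPt s t n i with ha
    set b := sewPt s t n (i + 1) with hb
    have hsa : s ≤ a := sewPt_ge hst n i
    have hab : a ≤ b := sewPt_mono hst n (by omega)
    have hbt : b ≤ t := sewPt_le hst (by omega) (by omega)
    have h0a : 0 ≤ a := le_trans hs hsa
    have hbT : b ≤ T := le_trans hbt htT
    have hU2 : sewU h 2 b a = h (sewPt a b 2 1) a 0 + h b (sewPt a b 2 1) 0 := by
      rw [sewU, Finset.sum_range_succ, Finset.sum_range_one, sewPt_zero,
        sewPt_last a b (by norm_num)]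
    set m' := sewPt a b 2 1 with hm'
    have hm1 : m' - a = (b - a) / 2 := by rw [hm', sewPt]; push_cast; ring
    have hm2 : b - m' = (b - a) / 2 := by rw [hm', sewPt]; push_cast; ring
    have hhalf : 0 ≤ (b - a) / 2 := by linarith
    have ham : a ≤ m' := by linarith
    have hmb : m' ≤ b := by linarith
    rw [hU2]
    have e2 : h m' a 0 + h b m' 0 - h b a 0 = -(h b a 0 - h b m' 0 - h m' a 0) := by abel
    rw [e2, norm_neg]
    refine le_trans (hrem a m' b h0a ham hmb hbT) ?_
    rw [hm1, hm2]
    have hba : b - a = (t - s) / n := by rw [ha, hb, sewPt_step]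
    rw [hba]
    have hx0 : 0 ≤ (t - s) / n / 2 := by
      have h1 : (0:ℝ) ≤ t - s := by linarith
      positivity
    exact rpow_prod_le hρ0 hρμ hK hx0 hx0 le_rfl le_rfl
  calc ∑ i ∈ Finset.range n, ‖sewU h 2 (sewPt s t n (i + 1)) (sewPt s t n i)
        - h (sewPt s t n (i + 1)) (sewPt s t n i) 0‖
      ≤ ∑ _i ∈ Finset.range n, K * ((t - s) / n / 2) ^ μ := Finset.sum_le_sum hterm
    _ = (n : ℝ) * (K * ((t - s) / n / 2) ^ μ) := by
        rw [Finset.sum_const, Finset.card_range, nsmul_eq_mul]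

end SewMain

section SewLimit
set_option linter.unusedSectionVars false
set_option maxHeartbeats 1000000

variable {V : Type*} [NormedAddCommGroup V] [NormedSpace ℝ V] [CompleteSpace V]
variable {T μ ρ K : ℝ} {h : ℝ → ℝ → ℝ → V}

/-- General refinement bound. -/
lemma sewU_refine (hρ0 : 0 < ρ) (hρμ : ρ < μ) (hK : 0 ≤ K)
    (hrem : ∀ a b c : ℝ, 0 ≤ a → a ≤ b → b ≤ c → c ≤ T →
      ‖h c a 0 - h c b 0 - h b a 0‖ ≤ K * (c - b) ^ ρ * (b - a) ^ (μ - ρ)) :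
    ∀ (n m : ℕ), n ≠ 0 → m ≠ 0 → ∀ s t : ℝ, 0 ≤ s → s ≤ t → t ≤ T →
      ‖sewU h (n * m) t s - sewU h n t s‖
        ≤ (n : ℝ) * (((m : ℝ) - 1) * (K * ((t - s) / n) ^ μ)) := by
  intro n m hn hm s t hs hst htT
  have hdiff : sewU h (n * m) t s - sewU h n t s
      = ∑ i ∈ Finset.range n,
          (sewU h m (sewPt s t n (i + 1)) (sewPt s t n i)
            - h (sewPt s t n (i + 1)) (sewPt s t n i) 0) := by
    rw [sewU_group h hm n t s, sewU, ← Finset.sum_sub_distrib]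
  rw [hdiff]
  refine le_trans (norm_sum_le _ _) ?_
  have hterm : ∀ i ∈ Finset.range n,
      ‖sewU h m (sewPt s t n (i + 1)) (sewPt s t n i)
        - h (sewPt s t n (i + 1)) (sewPt s t n i) 0‖
        ≤ ((m : ℝ) - 1) * (K * ((t - s) / n) ^ μ) := by
    intro i hi
    have hin : i < n := Finset.mem_range.mp hi
    have hsa : s ≤ sewPt s t n i := sewPt_ge hst n i
    have hab : sewPt s t n i ≤ sewPt s t n (i + 1) := sewPt_mono hst n (by omega)
    have hbt : sewPt s t n (i + 1) ≤ t := sewPt_le hst (by omega) (by omega)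
    have hba : sewPt s t n (i + 1) - sewPt s t n i = (t - s) / n := sewPt_step s t n i
    have := sewU_crude hρ0 hρμ hK hrem m hm (sewPt s t n i) (sewPt s t n (i + 1))
      (le_trans hs hsa) hab (le_trans hbt htT)
    rwa [show sewPt s t n (i+1) - sewPt s t n i = (t-s)/n from hba] at this
  calc ∑ i ∈ Finset.range n, ‖sewU h m (sewPt s t n (i + 1)) (sewPt s t n i)
        - h (sewPt s t n (i + 1)) (sewPt s t n i) 0‖
      ≤ ∑ _i ∈ Finset.range n, ((m : ℝ) - 1) * (K * ((t - s) / n) ^ μ) :=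
        Finset.sum_le_sum hterm
    _ = (n : ℝ) * (((m : ℝ) - 1) * (K * ((t - s) / n) ^ μ)) := by
        rw [Finset.sum_const, Finset.card_range, nsmul_eq_mul]

/-- The geometric bound between consecutive dyadic sums. -/
lemma sewU_dyadic_dist (hμ1 : 1 < μ) (hρ0 : 0 < ρ) (hρμ : ρ < μ) (hK : 0 ≤ K)
    (hrem : ∀ a b c : ℝ, 0 ≤ a → a ≤ b → b ≤ c → c ≤ T →
      ‖h c a 0 - h c b 0 - h b a 0‖ ≤ K * (c - b) ^ ρ * (b - a) ^ (μ - ρ))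
    {s t : ℝ} (hs : 0 ≤ s) (hst : s ≤ t) (htT : t ≤ T) (a : ℕ) :
    dist (sewU h (2 ^ a) t s) (sewU h (2 ^ (a + 1)) t s)
      ≤ (K * (t - s) ^ μ * ((2 : ℝ) ^ (1 - μ) / 2)) * ((2 : ℝ) ^ (1 - μ)) ^ a := by
  have hts : (0:ℝ) ≤ t - s := by linarith
  have h2a : ((2:ℕ) ^ a : ℕ) ≠ 0 := by positivity
  have key := sewU_refine_two hρ0 hρμ hK hrem (2 ^ a) h2a s t hs hst htT
  rw [dist_eq_norm, ← norm_neg]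
  have e : -(sewU h (2 ^ a) t s - sewU h (2 ^ (a + 1)) t s)
      = sewU h (2 ^ a * 2) t s - sewU h (2 ^ a) t s := by
    rw [← pow_succ]; abel
  rw [e]
  refine le_trans key (le_of_eq ?_)
  -- arithmetic: 2^a * (K * ((t-s)/2^a/2)^μ) = K (t-s)^μ 2^(1-μ)/2 * (2^(1-μ))^a
  have hc : (0:ℝ) < (2:ℝ) ^ (a + 1) := by positivity
  have hcast : ((2 ^ a : ℕ) : ℝ) = (2:ℝ) ^ a := by push_cast; ring
  rw [hcast]
  have e1 : (t - s) / ((2:ℝ) ^ a) / 2 = (t - s) / ((2:ℝ) ^ (a + 1)) := by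
    rw [div_div, ← pow_succ]
  rw [e1]
  have e2 : (2:ℝ) ^ a = (2:ℝ) ^ (a + 1) / 2 := by rw [pow_succ]; ring
  rw [e2]
  have e3 := scale_rpow (μ := μ) ((2:ℝ) ^ (a+1)) (t - s) hc hts
  have e4 : ((2:ℝ) ^ (a+1)) ^ (1 - μ) = ((2:ℝ) ^ (1 - μ)) ^ (a + 1) := pow_rpow_comm (a+1) (1-μ)
  calc (2:ℝ) ^ (a+1) / 2 * (K * ((t - s) / 2 ^ (a+1)) ^ μ)
      = K / 2 * ((2:ℝ) ^ (a+1) * ((t - s) / 2 ^ (a+1)) ^ μ) := by ring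
    _ = K / 2 * ((t - s) ^ μ * ((2:ℝ) ^ (a+1)) ^ (1 - μ)) := by rw [e3]
    _ = K / 2 * ((t - s) ^ μ * ((2:ℝ) ^ (1 - μ)) ^ (a + 1)) := by rw [e4]
    _ = (K * (t - s) ^ μ * ((2 : ℝ) ^ (1 - μ) / 2)) * ((2 : ℝ) ^ (1 - μ)) ^ a := by
        rw [pow_succ]; ring

end SewLimit

section SewLimit2
set_option linter.unusedSectionVars false
set_option maxHeartbeats 1000000

open Filter Topology

variable {V : Type*} [NormedAddCommGroup V] [NormedSpace ℝ V] [CompleteSpace V]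
variable {T μ ρ K : ℝ} {h : ℝ → ℝ → ℝ → V}

lemma sew_r_pos (μ : ℝ) : (0:ℝ) < (2 : ℝ) ^ (1 - μ) := Real.rpow_pos_of_pos two_pos _

lemma sew_r_lt_one (hμ1 : 1 < μ) : (2 : ℝ) ^ (1 - μ) < 1 :=
  Real.rpow_lt_one_of_one_lt_of_neg one_lt_two (by linarith)

lemma sewA_tendsto (hμ1 : 1 < μ) (hρ0 : 0 < ρ) (hρμ : ρ < μ) (hK : 0 ≤ K)
    (hrem : ∀ a b c : ℝ, 0 ≤ a → a ≤ b → b ≤ c → c ≤ T →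
      ‖h c a 0 - h c b 0 - h b a 0‖ ≤ K * (c - b) ^ ρ * (b - a) ^ (μ - ρ))
    {s t : ℝ} (hs : 0 ≤ s) (hst : s ≤ t) (htT : t ≤ T) :
    Filter.Tendsto (fun a : ℕ => sewU h (2 ^ a) t s) Filter.atTop (𝓝 (sewA h t s)) := by
  have hc : CauchySeq (fun a : ℕ => sewU h (2 ^ a) t s) :=
    cauchySeq_of_le_geometric ((2:ℝ) ^ (1 - μ))
      (K * (t - s) ^ μ * ((2 : ℝ) ^ (1 - μ) / 2)) (sew_r_lt_one hμ1)
      (fun a => sewU_dyadic_dist hμ1 hρ0 hρμ hK hrem hs hst htT a)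
  exact hc.tendsto_limUnder

lemma sewA_dist (hμ1 : 1 < μ) (hρ0 : 0 < ρ) (hρμ : ρ < μ) (hK : 0 ≤ K)
    (hrem : ∀ a b c : ℝ, 0 ≤ a → a ≤ b → b ≤ c → c ≤ T →
      ‖h c a 0 - h c b 0 - h b a 0‖ ≤ K * (c - b) ^ ρ * (b - a) ^ (μ - ρ))
    {s t : ℝ} (hs : 0 ≤ s) (hst : s ≤ t) (htT : t ≤ T) (a : ℕ) :
    dist (sewU h (2 ^ a) t s) (sewA h t s)
      ≤ (K * (t - s) ^ μ * ((2 : ℝ) ^ (1 - μ) / 2)) * ((2 : ℝ) ^ (1 - μ)) ^ a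
          / (1 - (2 : ℝ) ^ (1 - μ)) :=
  dist_le_of_le_geometric_of_tendsto ((2:ℝ) ^ (1 - μ))
    (K * (t - s) ^ μ * ((2 : ℝ) ^ (1 - μ) / 2)) (sew_r_lt_one hμ1)
    (fun a => sewU_dyadic_dist hμ1 hρ0 hρμ hK hrem hs hst htT a)
    (sewA_tendsto hμ1 hρ0 hρμ hK hrem hs hst htT) a

lemma sewA_sub_h (hμ1 : 1 < μ) (hρ0 : 0 < ρ) (hρμ : ρ < μ) (hK : 0 ≤ K)
    (hrem : ∀ a b c : ℝ, 0 ≤ a → a ≤ b → b ≤ c → c ≤ T →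
      ‖h c a 0 - h c b 0 - h b a 0‖ ≤ K * (c - b) ^ ρ * (b - a) ^ (μ - ρ))
    {s t : ℝ} (hs : 0 ≤ s) (hst : s ≤ t) (htT : t ≤ T) :
    ‖sewA h t s - h t s 0‖
      ≤ K * (t - s) ^ μ * ((2 : ℝ) ^ (1 - μ) / 2 / (1 - (2 : ℝ) ^ (1 - μ))) := by
  have := sewA_dist hμ1 hρ0 hρμ hK hrem hs hst htT 0
  rw [pow_zero, pow_zero, sewU_one, dist_eq_norm, ← norm_neg] at this
  have e : -(h t s 0 - sewA h t s) = sewA h t s - h t s 0 := by abel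
  rw [e] at this
  calc ‖sewA h t s - h t s 0‖
      ≤ K * (t - s) ^ μ * ((2 : ℝ) ^ (1 - μ) / 2) * 1 / (1 - (2 : ℝ) ^ (1 - μ)) := this
    _ = K * (t - s) ^ μ * ((2 : ℝ) ^ (1 - μ) / 2 / (1 - (2 : ℝ) ^ (1 - μ))) := by ring

lemma sewA_tendsto_mul (hμ1 : 1 < μ) (hρ0 : 0 < ρ) (hρμ : ρ < μ) (hK : 0 ≤ K)
    (hrem : ∀ a b c : ℝ, 0 ≤ a → a ≤ b → b ≤ c → c ≤ T →
      ‖h c a 0 - h c b 0 - h b a 0‖ ≤ K * (c - b) ^ ρ * (b - a) ^ (μ - ρ))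
    {n : ℕ} (hn : n ≠ 0) {s t : ℝ} (hs : 0 ≤ s) (hst : s ≤ t) (htT : t ≤ T) :
    Filter.Tendsto (fun a : ℕ => sewU h (n * 2 ^ a) t s) Filter.atTop (𝓝 (sewA h t s)) := by
  have hts : (0:ℝ) ≤ t - s := by linarith
  have hd : ∀ a : ℕ, ‖sewU h (n * 2 ^ a) t s - sewU h (2 ^ a) t s‖
      ≤ (((n : ℝ) - 1) * (K * (t - s) ^ μ)) * ((2 : ℝ) ^ (1 - μ)) ^ a := by
    intro a
    have h2a : (2 ^ a : ℕ) ≠ 0 := by positivity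
    have key := sewU_refine hρ0 hρμ hK hrem (2 ^ a) n h2a hn s t hs hst htT
    rw [Nat.mul_comm] at key
    refine le_trans key (le_of_eq ?_)
    have hcast : ((2 ^ a : ℕ) : ℝ) = (2:ℝ) ^ a := by push_cast; ring
    have hc : (0:ℝ) < (2:ℝ) ^ a := by positivity
    rw [hcast]
    have e3 := scale_rpow (μ := μ) ((2:ℝ) ^ a) (t - s) hc hts
    have e4 : ((2:ℝ) ^ a) ^ (1 - μ) = ((2:ℝ) ^ (1 - μ)) ^ a := pow_rpow_comm a (1-μ)
    calc (2:ℝ) ^ a * (((n:ℝ) - 1) * (K * ((t - s) / 2 ^ a) ^ μ))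
        = ((n:ℝ) - 1) * K * ((2:ℝ) ^ a * ((t - s) / 2 ^ a) ^ μ) := by ring
      _ = ((n:ℝ) - 1) * K * ((t - s) ^ μ * ((2:ℝ) ^ a) ^ (1 - μ)) := by rw [e3]
      _ = (((n : ℝ) - 1) * (K * (t - s) ^ μ)) * ((2 : ℝ) ^ (1 - μ)) ^ a := by rw [e4]; ring
  have h0 : Filter.Tendsto (fun a : ℕ => sewU h (n * 2 ^ a) t s - sewU h (2 ^ a) t s)
      Filter.atTop (𝓝 0) := by
    refine squeeze_zero_norm hd ?_
    have := (tendsto_pow_atTop_nhds_zero_of_lt_one (sew_r_pos μ).le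
      (sew_r_lt_one hμ1)).const_mul (((n : ℝ) - 1) * (K * (t - s) ^ μ))
    simpa using this
  have := h0.add (sewA_tendsto hμ1 hρ0 hρμ hK hrem hs hst htT)
  simp only [sub_add_cancel, zero_add] at this
  exact this

lemma sewA_diag (hρ0 : 0 < ρ) (hρμ : ρ < μ) (hK : 0 ≤ K)
    (hzero : ∀ t : ℝ, 0 ≤ t → t ≤ T → h t t 0 = 0)
    {t : ℝ} (ht : 0 ≤ t) (htT : t ≤ T) : sewA h t t = 0 := by
  have hU : ∀ n : ℕ, sewU h n t t = 0 := by
    intro n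
    rw [sewU]
    refine Finset.sum_eq_zero fun i _ => ?_
    rw [sewPt_diag, sewPt_diag, hzero t ht htT]
  have : Filter.Tendsto (fun a : ℕ => sewU h (2 ^ a) t t) Filter.atTop (𝓝 (0 : V)) := by
    simp only [hU]
    exact tendsto_const_nhds
  exact this.limUnder_eq

lemma sewA_add_rat (hμ1 : 1 < μ) (hρ0 : 0 < ρ) (hρμ : ρ < μ) (hK : 0 ≤ K)
    (hrem : ∀ a b c : ℝ, 0 ≤ a → a ≤ b → b ≤ c → c ≤ T →
      ‖h c a 0 - h c b 0 - h b a 0‖ ≤ K * (c - b) ^ ρ * (b - a) ^ (μ - ρ))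
    {n j : ℕ} (hj : j ≠ 0) (hjn : j < n) {s t : ℝ} (hs : 0 ≤ s) (hst : s ≤ t) (htT : t ≤ T) :
    sewA h t s = sewA h (sewPt s t n j) s + sewA h t (sewPt s t n j) := by
  have hn : n ≠ 0 := by omega
  set u := sewPt s t n j with hu
  have hsu : s ≤ u := sewPt_ge hst n j
  have hut : u ≤ t := sewPt_le hst hjn.le hn
  have h0u : 0 ≤ u := le_trans hs hsu
  have huT : u ≤ T := le_trans hut htT
  have key : ∀ a : ℕ, sewU h (n * 2 ^ a) t s
      = sewU h (j * 2 ^ a) u s + sewU h ((n - j) * 2 ^ a) t u := by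
    intro a
    have h2a : (2 ^ a : ℕ) ≠ 0 := by positivity
    have hj2 : j * 2 ^ a ≠ 0 := Nat.mul_ne_zero hj h2a
    have hlt : j * 2 ^ a < n * 2 ^ a :=
      (Nat.mul_lt_mul_right (Nat.pos_of_ne_zero h2a)).mpr hjn
    have hc := sewU_concat h hj2 hlt t s
    have hmul : sewPt s t (n * 2 ^ a) (j * 2 ^ a) = u := sewPt_mul h2a hn s t
    have hsub : n * 2 ^ a - j * 2 ^ a = (n - j) * 2 ^ a := by
      rw [Nat.sub_mul]
    rw [hmul, hsub] at hc
    exact hc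
  have l1 : Filter.Tendsto (fun a : ℕ => sewU h (n * 2 ^ a) t s) Filter.atTop
      (𝓝 (sewA h t s)) := sewA_tendsto_mul hμ1 hρ0 hρμ hK hrem hn hs hst htT
  have l2 : Filter.Tendsto (fun a : ℕ => sewU h (j * 2 ^ a) u s + sewU h ((n - j) * 2 ^ a) t u)
      Filter.atTop (𝓝 (sewA h u s + sewA h t u)) :=
    (sewA_tendsto_mul hμ1 hρ0 hρμ hK hrem hj hs hsu huT).add
      (sewA_tendsto_mul hμ1 hρ0 hρμ hK hrem (by omega : n - j ≠ 0) h0u hut htT)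
  exact tendsto_nhds_unique (l1.congr key) l2

end SewLimit2

section SewCont
set_option linter.unusedSectionVars false
set_option linter.unusedVariables false
set_option maxHeartbeats 1000000

open Filter Topology Set

variable {V : Type*} [NormedAddCommGroup V] [NormedSpace ℝ V] [CompleteSpace V]
variable {T μ ρ K : ℝ} {h : ℝ → ℝ → ℝ → V}

lemma sewPt_continuous (n i : ℕ) : Continuous fun p : ℝ × ℝ => sewPt p.2 p.1 n i := by
  simp only [sewPt, div_eq_mul_inv]
  fun_prop

lemma sewU_contOn
    (hcont : ContinuousOn (fun p : ℝ × ℝ × ℝ => h p.1 p.2.1 p.2.2)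
      {p : ℝ × ℝ × ℝ | 0 ≤ p.2.2 ∧ p.2.2 ≤ p.2.1 ∧ p.2.1 ≤ p.1 ∧ p.1 ≤ T}) (n : ℕ) :
    ContinuousOn (fun p : ℝ × ℝ => sewU h n p.1 p.2)
      {p : ℝ × ℝ | 0 ≤ p.2 ∧ p.2 ≤ p.1 ∧ p.1 ≤ T} := by
  simp only [sewU]
  apply continuousOn_finset_sum
  intro i hi
  have hin : i < n := Finset.mem_range.mp hi
  have hmap : Set.MapsTo
      (fun p : ℝ × ℝ => (sewPt p.2 p.1 n (i + 1), sewPt p.2 p.1 n i, (0:ℝ)))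
      {p : ℝ × ℝ | 0 ≤ p.2 ∧ p.2 ≤ p.1 ∧ p.1 ≤ T}
      {p : ℝ × ℝ × ℝ | 0 ≤ p.2.2 ∧ p.2.2 ≤ p.2.1 ∧ p.2.1 ≤ p.1 ∧ p.1 ≤ T} := by
    intro p hp
    obtain ⟨h1, h2, h3⟩ := hp
    refine ⟨le_rfl, ?_, ?_, ?_⟩
    · exact le_trans h1 (sewPt_ge h2 n i)
    · exact sewPt_mono h2 n (by omega)
    · exact le_trans (sewPt_le h2 (by omega) (by omega)) h3
  exact hcont.comp
    (((sewPt_continuous n (i + 1)).prodMk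
      ((sewPt_continuous n i).prodMk continuous_const)).continuousOn) hmap

end SewCont

section SewCont2
set_option linter.unusedSectionVars false
set_option linter.unusedVariables false
set_option maxHeartbeats 1000000

open Filter Topology Set

variable {V : Type*} [NormedAddCommGroup V] [NormedSpace ℝ V] [CompleteSpace V]
variable {T μ ρ K : ℝ} {h : ℝ → ℝ → ℝ → V}

lemma sewA_contOn (hT : 0 < T) (hμ1 : 1 < μ) (hρ0 : 0 < ρ) (hρμ : ρ < μ) (hK : 0 ≤ K)
    (hrem : ∀ a b c : ℝ, 0 ≤ a → a ≤ b → b ≤ c → c ≤ T →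
      ‖h c a 0 - h c b 0 - h b a 0‖ ≤ K * (c - b) ^ ρ * (b - a) ^ (μ - ρ))
    (hcont : ContinuousOn (fun p : ℝ × ℝ × ℝ => h p.1 p.2.1 p.2.2)
      {p : ℝ × ℝ × ℝ | 0 ≤ p.2.2 ∧ p.2.2 ≤ p.2.1 ∧ p.2.1 ≤ p.1 ∧ p.1 ≤ T}) :
    ContinuousOn (fun p : ℝ × ℝ => sewA h p.1 p.2)
      {p : ℝ × ℝ | 0 ≤ p.2 ∧ p.2 ≤ p.1 ∧ p.1 ≤ T} := by
  set r : ℝ := (2:ℝ) ^ (1 - μ) with hr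
  have hr0 : 0 < r := sew_r_pos μ
  have hr1 : r < 1 := sew_r_lt_one hμ1
  have h1r : 0 < 1 - r := by linarith
  set C : ℝ := K * T ^ μ * (r / 2) / (1 - r) with hC
  have hC0 : 0 ≤ C := by
    apply div_nonneg _ h1r.le
    have : (0:ℝ) ≤ T ^ μ := Real.rpow_nonneg hT.le μ
    positivity
  have hunif : TendstoUniformlyOn (fun (a : ℕ) (p : ℝ × ℝ) => sewU h (2 ^ a) p.1 p.2)
      (fun p : ℝ × ℝ => sewA h p.1 p.2) Filter.atTop
      {p : ℝ × ℝ | 0 ≤ p.2 ∧ p.2 ≤ p.1 ∧ p.1 ≤ T} := by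
    rw [Metric.tendstoUniformlyOn_iff]
    intro ε hε
    have hlim : Filter.Tendsto (fun a : ℕ => C * r ^ a) Filter.atTop (𝓝 0) := by
      have := (tendsto_pow_atTop_nhds_zero_of_lt_one hr0.le hr1).const_mul C
      simpa using this
    filter_upwards [hlim.eventually_lt_const hε] with a ha p hp
    obtain ⟨h1, h2, h3⟩ := hp
    have hbd := sewA_dist hμ1 hρ0 hρμ hK hrem h1 h2 h3 a
    rw [dist_comm]
    refine lt_of_le_of_lt (le_trans hbd ?_) ha
    have hts : (0:ℝ) ≤ p.1 - p.2 := by linarith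
    have htsT : p.1 - p.2 ≤ T := by linarith
    have hmono : (p.1 - p.2) ^ μ ≤ T ^ μ :=
      Real.rpow_le_rpow hts htsT (by linarith)
    have : K * (p.1 - p.2) ^ μ * (r / 2) ≤ K * T ^ μ * (r / 2) := by
      have := mul_le_mul_of_nonneg_left hmono hK
      nlinarith
    calc K * (p.1 - p.2) ^ μ * (r / 2) * r ^ a / (1 - r)
        = (K * (p.1 - p.2) ^ μ * (r / 2) / (1 - r)) * r ^ a := by ring
      _ ≤ (K * T ^ μ * (r / 2) / (1 - r)) * r ^ a := by
          have hra : (0:ℝ) ≤ r ^ a := by positivity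
          exact mul_le_mul_of_nonneg_right ((div_le_div_iff_of_pos_right h1r).mpr this) hra
      _ = C * r ^ a := by rw [hC]
  exact hunif.continuousOn
    (Filter.Eventually.of_forall fun a => sewU_contOn hcont (2 ^ a)).frequently

end SewCont2

section SewAdd
set_option linter.unusedSectionVars false
set_option linter.unusedVariables false
set_option maxHeartbeats 4000000

open Filter Topology Set

variable {V : Type*} [NormedAddCommGroup V] [NormedSpace ℝ V] [CompleteSpace V]
variable {T μ ρ K : ℝ} {h : ℝ → ℝ → ℝ → V}

lemma sewA_add (hT : 0 < T) (hμ1 : 1 < μ) (hρ0 : 0 < ρ) (hρμ : ρ < μ) (hK : 0 ≤ K)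
    (hrem : ∀ a b c : ℝ, 0 ≤ a → a ≤ b → b ≤ c → c ≤ T →
      ‖h c a 0 - h c b 0 - h b a 0‖ ≤ K * (c - b) ^ ρ * (b - a) ^ (μ - ρ))
    (hcont : ContinuousOn (fun p : ℝ × ℝ × ℝ => h p.1 p.2.1 p.2.2)
      {p : ℝ × ℝ × ℝ | 0 ≤ p.2.2 ∧ p.2.2 ≤ p.2.1 ∧ p.2.1 ≤ p.1 ∧ p.1 ≤ T})
    (hzero : ∀ t : ℝ, 0 ≤ t → t ≤ T → h t t 0 = 0)
    {s u t : ℝ} (hs : 0 ≤ s) (hsu : s ≤ u) (hut : u ≤ t) (htT : t ≤ T) :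
    sewA h t s = sewA h u s + sewA h t u := by
  have h0u : 0 ≤ u := le_trans hs hsu
  have huT : u ≤ T := le_trans hut htT
  have hst : s ≤ t := le_trans hsu hut
  rcases eq_or_lt_of_le hsu with hsu' | hsu'
  · subst hsu'
    rw [sewA_diag hρ0 hρμ hK hzero hs huT, zero_add]
  rcases eq_or_lt_of_le hut with hut' | hut'
  · subst hut'
    rw [sewA_diag hρ0 hρμ hK hzero h0u htT, add_zero]
  -- now s < u < t
  have hts : (0:ℝ) < t - s := by linarith
  set θ : ℝ := (u - s) / (t - s) with hθ
  have hθ0 : 0 < θ := div_pos (by linarith) hts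
  have hθ1 : θ < 1 := by
    rw [hθ, div_lt_one hts]; linarith
  set jf : ℕ → ℕ := fun k => ⌊((k:ℝ) + 1) * θ⌋₊ with hjf
  set uk : ℕ → ℝ := fun k => sewPt s t (k + 1) (jf k) with huk
  have hθnn : ∀ k : ℕ, 0 ≤ ((k:ℝ) + 1) * θ := by
    intro k; positivity
  have hjk_lt : ∀ k : ℕ, jf k < k + 1 := by
    intro k
    rw [hjf]
    have : ((k:ℝ) + 1) * θ < ((k:ℝ) + 1) := by nlinarith
    exact Nat.floor_lt (hθnn k) |>.mpr (by push_cast; linarith)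
  have hukmem : ∀ k : ℕ, s ≤ uk k ∧ uk k ≤ t := by
    intro k
    exact ⟨sewPt_ge hst (k + 1) (jf k), sewPt_le hst (hjk_lt k).le (by omega)⟩
  -- uk tends to u
  have huktend : Filter.Tendsto uk Filter.atTop (𝓝 u) := by
    have hlow : ∀ k : ℕ, u - (t - s) / ((k:ℝ) + 1) ≤ uk k := by
      intro k
      have hfl : ((k:ℝ) + 1) * θ - 1 ≤ (jf k : ℝ) := by
        have := Nat.lt_floor_add_one (((k:ℝ) + 1) * θ)
        rw [hjf]; push_cast; linarith
      have hk1 : (0:ℝ) < (k:ℝ) + 1 := by positivity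
      simp only [huk, sewPt]
      have e : u = s + θ * (t - s) := by rw [hθ]; field_simp; ring
      have h1 : (((k:ℝ) + 1) * θ - 1) * (t - s) ≤ (jf k : ℝ) * (t - s) :=
        mul_le_mul_of_nonneg_right hfl hts.le
      have h2 : (((k:ℝ) + 1) * θ - 1) * (t - s) / ((k:ℝ) + 1)
          ≤ (jf k : ℝ) * (t - s) / ((k:ℝ) + 1) := (div_le_div_iff_of_pos_right hk1).mpr h1
      have e2 : (((k:ℝ) + 1) * θ - 1) * (t - s) / ((k:ℝ) + 1)
          = θ * (t - s) - (t - s) / ((k:ℝ) + 1) := by field_simp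
      rw [e2] at h2
      push_cast
      linarith
    have hhigh : ∀ k : ℕ, uk k ≤ u := by
      intro k
      have hfl : (jf k : ℝ) ≤ ((k:ℝ) + 1) * θ := Nat.floor_le (hθnn k)
      have hk1 : (0:ℝ) < (k:ℝ) + 1 := by positivity
      simp only [huk, sewPt]
      have e : u = s + θ * (t - s) := by rw [hθ]; field_simp; ring
      have h1 : (jf k : ℝ) * (t - s) ≤ (((k:ℝ) + 1) * θ) * (t - s) :=
        mul_le_mul_of_nonneg_right hfl hts.le
      have h2 : (jf k : ℝ) * (t - s) / ((k:ℝ) + 1)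
          ≤ (((k:ℝ) + 1) * θ) * (t - s) / ((k:ℝ) + 1) := (div_le_div_iff_of_pos_right hk1).mpr h1
      have e2 : (((k:ℝ) + 1) * θ) * (t - s) / ((k:ℝ) + 1) = θ * (t - s) := by field_simp
      rw [e2] at h2
      push_cast
      linarith
    have hlowtend : Filter.Tendsto (fun k : ℕ => u - (t - s) / ((k:ℝ) + 1))
        Filter.atTop (𝓝 u) := by
      have h1 : Filter.Tendsto (fun k : ℕ => (t - s) * (1 / ((k:ℝ) + 1)))
          Filter.atTop (𝓝 0) := by
        have := tendsto_one_div_add_atTop_nhds_zero_nat.const_mul (t - s)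
        simpa using this
      have h2 := tendsto_const_nhds (x := u) (f := Filter.atTop (α := ℕ)) |>.sub h1
      simp only [sub_zero] at h2
      refine h2.congr fun k => ?_
      ring
    exact tendsto_of_tendsto_of_tendsto_of_le_of_le hlowtend tendsto_const_nhds hlow hhigh
  -- eventually the additivity identity at the rational points uk
  have hθtend : Filter.Tendsto (fun k : ℕ => ((k:ℝ) + 1) * θ) Filter.atTop Filter.atTop := by
    apply Filter.Tendsto.atTop_mul_const hθ0
    exact Filter.tendsto_atTop_add_const_right _ 1 tendsto_natCast_atTop_atTop
  have hev : ∀ᶠ k in Filter.atTop, sewA h t s = sewA h (uk k) s + sewA h t (uk k) := by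
    filter_upwards [hθtend.eventually_ge_atTop 1] with k hk
    have hjne : jf k ≠ 0 := by
      have h1 : (1:ℕ) ≤ jf k := Nat.le_floor (by exact_mod_cast hk)
      omega
    exact sewA_add_rat hμ1 hρ0 hρμ hK hrem hjne (hjk_lt k) hs hst htT
  -- pass to the limit using continuity of sewA
  have hAc := sewA_contOn hT hμ1 hρ0 hρμ hK hrem hcont
  have hc1 : Filter.Tendsto (fun k : ℕ => sewA h (uk k) s) Filter.atTop (𝓝 (sewA h u s)) := by
    have hmem : (u, s) ∈ {p : ℝ × ℝ | 0 ≤ p.2 ∧ p.2 ≤ p.1 ∧ p.1 ≤ T} := ⟨hs, hsu, huT⟩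
    have hcw := (hAc (u, s) hmem).tendsto
    have hseq : Filter.Tendsto (fun k : ℕ => ((uk k, s) : ℝ × ℝ)) Filter.atTop
        (𝓝[{p : ℝ × ℝ | 0 ≤ p.2 ∧ p.2 ≤ p.1 ∧ p.1 ≤ T}] (u, s)) := by
      apply tendsto_nhdsWithin_of_tendsto_nhds_of_eventually_within
      · exact huktend.prodMk_nhds tendsto_const_nhds
      · refine Filter.Eventually.of_forall fun k => ?_
        exact ⟨hs, (hukmem k).1, le_trans (hukmem k).2 htT⟩
    have := hcw.comp hseq
    simpa [Function.comp_def] using this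
  have hc2 : Filter.Tendsto (fun k : ℕ => sewA h t (uk k)) Filter.atTop (𝓝 (sewA h t u)) := by
    have hmem : (t, u) ∈ {p : ℝ × ℝ | 0 ≤ p.2 ∧ p.2 ≤ p.1 ∧ p.1 ≤ T} := ⟨h0u, hut, htT⟩
    have hcw := (hAc (t, u) hmem).tendsto
    have hseq : Filter.Tendsto (fun k : ℕ => ((t, uk k) : ℝ × ℝ)) Filter.atTop
        (𝓝[{p : ℝ × ℝ | 0 ≤ p.2 ∧ p.2 ≤ p.1 ∧ p.1 ≤ T}] (t, u)) := by
      apply tendsto_nhdsWithin_of_tendsto_nhds_of_eventually_within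
      · exact tendsto_const_nhds.prodMk_nhds huktend
      · refine Filter.Eventually.of_forall fun k => ?_
        exact ⟨le_trans hs (hukmem k).1, (hukmem k).2, htT⟩
    have := hcw.comp hseq
    simpa [Function.comp_def] using this
  have hfinal : Filter.Tendsto (fun _ : ℕ => sewA h t s) Filter.atTop
      (𝓝 (sewA h u s + sewA h t u)) :=
    (hc1.add hc2).congr' (hev.mono fun k hk => hk.symm)
  exact tendsto_nhds_unique tendsto_const_nhds hfinal

end SewAdd

section SewConst
set_option maxHeartbeats 1000000

open Filter

lemma sew_const_le {μ : ℝ} (hμ1 : 1 < μ) :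
    (2:ℝ) ^ (1 - μ) / 2 / (1 - (2:ℝ) ^ (1 - μ)) ≤ cSewing μ := by
  have hr0 : 0 < (2:ℝ) ^ (1 - μ) := sew_r_pos μ
  have hr1 : (2:ℝ) ^ (1 - μ) < 1 := sew_r_lt_one hμ1
  have hr2 : (2:ℝ) ^ (1 - μ) / 2 = (2:ℝ) ^ (-μ) := by
    rw [show (1 - μ) = 1 + -μ by ring, Real.rpow_add two_pos, Real.rpow_one]
    ring
  have hsum : Summable (fun k : ℕ => ((k:ℝ) + 1) ^ (-μ)) := by
    have h1 : Summable (fun n : ℕ => (n:ℝ) ^ (-μ)) :=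
      Real.summable_nat_rpow.2 (by linarith)
    have h2 := (summable_nat_add_iff 1).mpr h1
    refine h2.congr fun k => ?_
    push_cast
    rfl
  have hnn : ∀ k : ℕ, 0 ≤ ((k:ℝ) + 1) ^ (-μ) := fun k => Real.rpow_nonneg (by positivity) _
  have hpart : ∀ a : ℕ, ∑ b ∈ Finset.range a, (2:ℝ) ^ (-μ) * ((2:ℝ) ^ (1 - μ)) ^ b
      ≤ ∑ k ∈ Finset.range (2 ^ a), ((k:ℝ) + 1) ^ (-μ) := by
    intro a
    induction a with
    | zero =>
      rw [Finset.sum_range_zero]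
      exact Finset.sum_nonneg fun k _ => hnn k
    | succ a ih =>
      rw [Finset.sum_range_succ]
      have hsplit : (2:ℕ) ^ (a + 1) = 2 ^ a + 2 ^ a := by rw [pow_succ]; omega
      rw [hsplit, Finset.sum_range_add]
      refine add_le_add ih ?_
      have hterm : ∀ i ∈ Finset.range (2 ^ a),
          ((2:ℝ) ^ (a + 1)) ^ (-μ) ≤ (((2 ^ a + i : ℕ) : ℝ) + 1) ^ (-μ) := by
        intro i hi
        have hi' : i < 2 ^ a := Finset.mem_range.mp hi
        apply Real.rpow_le_rpow_of_nonpos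
        · positivity
        · have hle : (2:ℕ) ^ a + i + 1 ≤ 2 ^ (a + 1) := by omega
          calc (((2 ^ a + i : ℕ) : ℝ) + 1) = ((2 ^ a + i + 1 : ℕ) : ℝ) := by push_cast; ring
            _ ≤ (((2:ℕ) ^ (a + 1) : ℕ) : ℝ) := by exact_mod_cast hle
            _ = (2:ℝ) ^ (a + 1) := by push_cast; ring
        · linarith
      have hconst : ∑ _i ∈ Finset.range (2 ^ a), ((2:ℝ) ^ (a + 1)) ^ (-μ)
          ≤ ∑ i ∈ Finset.range (2 ^ a), (((2 ^ a + i : ℕ) : ℝ) + 1) ^ (-μ) :=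
        Finset.sum_le_sum hterm
      refine le_trans (le_of_eq ?_) hconst
      rw [Finset.sum_const, Finset.card_range, nsmul_eq_mul]
      have e1 : ((2:ℝ) ^ (1 - μ)) ^ a = ((2:ℝ) ^ a) ^ (1 - μ) := (pow_rpow_comm a (1 - μ)).symm
      have e2 : ((2:ℝ) ^ a) ^ (1 - μ) = ((2:ℝ) ^ a) * ((2:ℝ) ^ a) ^ (-μ) := by
        rw [show (1 - μ) = 1 + -μ by ring, Real.rpow_add (by positivity), Real.rpow_one]
      have e3 : ((2:ℝ) ^ (a + 1)) ^ (-μ) = ((2:ℝ) ^ a) ^ (-μ) * (2:ℝ) ^ (-μ) := by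
        rw [pow_succ, Real.mul_rpow (by positivity) (by norm_num)]
      push_cast
      rw [e1, e2, e3]
      ring
  have hZ : (2:ℝ) ^ (-μ) * (1 - (2:ℝ) ^ (1 - μ))⁻¹ ≤ ∑' k : ℕ, ((k:ℝ) + 1) ^ (-μ) := by
    have hgeo : HasSum (fun b : ℕ => (2:ℝ) ^ (-μ) * ((2:ℝ) ^ (1 - μ)) ^ b)
        ((2:ℝ) ^ (-μ) * (1 - (2:ℝ) ^ (1 - μ))⁻¹) :=
      (hasSum_geometric_of_lt_one hr0.le hr1).mul_left _
    refine le_of_tendsto hgeo.tendsto_sum_nat (Filter.Eventually.of_forall fun a => ?_)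
    exact le_trans (hpart a) (Summable.sum_le_tsum _ (fun k _ => hnn k) hsum)
  have h2μ : (1:ℝ) ≤ (2:ℝ) ^ μ := Real.one_le_rpow one_le_two (by linarith)
  have hZ0 : 0 ≤ ∑' k : ℕ, ((k:ℝ) + 1) ^ (-μ) := tsum_nonneg hnn
  rw [cSewing]
  calc (2:ℝ) ^ (1 - μ) / 2 / (1 - (2:ℝ) ^ (1 - μ))
      = (2:ℝ) ^ (-μ) * (1 - (2:ℝ) ^ (1 - μ))⁻¹ := by rw [hr2]; ring
    _ ≤ ∑' k : ℕ, ((k:ℝ) + 1) ^ (-μ) := hZ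
    _ ≤ 2 + 2 ^ μ * ∑' k : ℕ, ((k:ℝ) + 1) ^ (-μ) := by nlinarith

end SewConst

open Filter Topology in
set_option maxHeartbeats 4000000 in
/-- The sewing map. -/
theorem sewing_map
    {V : Type*} [NormedAddCommGroup V] [NormedSpace ℝ V] [CompleteSpace V]
    (T : ℝ) (hT : 0 < T) (μ ρ : ℝ) (hμ : 1 < μ) (hρ : 0 < ρ) (hρμ : ρ < μ)
    (h : ℝ → ℝ → ℝ → V)
    (hcont : ContinuousOn (fun p : ℝ × ℝ × ℝ => h p.1 p.2.1 p.2.2)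
      {p : ℝ × ℝ × ℝ | 0 ≤ p.2.2 ∧ p.2.2 ≤ p.2.1 ∧ p.2.1 ≤ p.1 ∧ p.1 ≤ T})
    (hδ : ∀ s v u t : ℝ, 0 ≤ s → s ≤ v → v ≤ u → u ≤ t → t ≤ T →
      h u v s - h t v s + h t u s - h t u v = 0)
    (K : ℝ) (hK : 0 ≤ K)
    (hbound : ∀ s u t : ℝ, 0 ≤ s → s ≤ u → u ≤ t → t ≤ T →
      ‖h t u s‖ ≤ K * (t - u) ^ ρ * (u - s) ^ (μ - ρ)) :
    ∃ M : ℝ → ℝ → V,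
      (ContinuousOn (fun p : ℝ × ℝ => M p.1 p.2)
          {p : ℝ × ℝ | 0 ≤ p.2 ∧ p.2 ≤ p.1 ∧ p.1 ≤ T} ∧
        (∀ t : ℝ, 0 ≤ t → t ≤ T → M t t = 0) ∧
        (∀ s u t : ℝ, 0 ≤ s → s ≤ u → u ≤ t → t ≤ T →
          M t s - M t u - M u s = h t u s) ∧
        (∃ C : ℝ, ∀ s t : ℝ, 0 ≤ s → s < t → t ≤ T → ‖M t s‖ ≤ C * (t - s) ^ μ)) ∧
      (∀ s t : ℝ, 0 ≤ s → s ≤ t → t ≤ T → ‖M t s‖ ≤ cSewing μ * K * (t - s) ^ μ) ∧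
      (∀ M' : ℝ → ℝ → V,
        (ContinuousOn (fun p : ℝ × ℝ => M' p.1 p.2)
            {p : ℝ × ℝ | 0 ≤ p.2 ∧ p.2 ≤ p.1 ∧ p.1 ≤ T} ∧
          (∀ t : ℝ, 0 ≤ t → t ≤ T → M' t t = 0) ∧
          (∀ s u t : ℝ, 0 ≤ s → s ≤ u → u ≤ t → t ≤ T →
            M' t s - M' t u - M' u s = h t u s) ∧
          (∃ C : ℝ, ∀ s t : ℝ, 0 ≤ s → s < t → t ≤ T → ‖M' t s‖ ≤ C * (t - s) ^ μ)) →
        ∀ s t : ℝ, 0 ≤ s → s ≤ t → t ≤ T → M' t s = M t s) := by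
  have hzero : ∀ t : ℝ, 0 ≤ t → t ≤ T → h t t 0 = 0 := by
    intro t ht htT
    have hb := hbound 0 t t le_rfl ht le_rfl htT
    rw [sub_self, Real.zero_rpow hρ.ne'] at hb
    simp only [mul_zero, zero_mul] at hb
    exact norm_le_zero_iff.mp hb
  have hrem : ∀ a b c : ℝ, 0 ≤ a → a ≤ b → b ≤ c → c ≤ T →
      ‖h c a 0 - h c b 0 - h b a 0‖ ≤ K * (c - b) ^ ρ * (b - a) ^ (μ - ρ) := by
    intro a b c ha hab hbc hcT
    have e := hδ 0 a b c le_rfl ha hab hbc hcT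
    have e2 : h c a 0 - h c b 0 - h b a 0 = -(h c b a) := by
      have e3 : (h c a 0 - h c b 0 - h b a 0) - (-(h c b a))
          = -(h b a 0 - h c a 0 + h c b 0 - h c b a) := by abel
      have e4 : (h c a 0 - h c b 0 - h b a 0) - (-(h c b a)) = 0 := by
        rw [e3, e, neg_zero]
      exact sub_eq_zero.mp e4
    rw [e2, norm_neg]
    exact hbound a b c ha hab hbc hcT
  have hMdiag : ∀ t : ℝ, 0 ≤ t → t ≤ T → sewA h t t - h t t 0 = 0 := by
    intro t ht htT
    rw [sewA_diag hρ hρμ hK hzero ht htT, hzero t ht htT, sub_zero]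
  have hMdelta : ∀ s u t : ℝ, 0 ≤ s → s ≤ u → u ≤ t → t ≤ T →
      (sewA h t s - h t s 0) - (sewA h t u - h t u 0) - (sewA h u s - h u s 0) = h t u s := by
    intro s u t hs hsu hut htT
    have hadd := sewA_add hT hμ hρ hρμ hK hrem hcont hzero hs hsu hut htT
    have e := hδ 0 s u t le_rfl hs hsu hut htT
    have e1 : (sewA h t s - h t s 0) - (sewA h t u - h t u 0) - (sewA h u s - h u s 0)
          - h t u s
        = (sewA h t s - (sewA h u s + sewA h t u))
          + (h u s 0 - h t s 0 + h t u 0 - h t u s) := by abel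
    have e5 : (sewA h t s - h t s 0) - (sewA h t u - h t u 0) - (sewA h u s - h u s 0)
        - h t u s = 0 := by
      rw [e1, hadd, e]
      simp
    exact sub_eq_zero.mp e5
  have hMbound : ∀ s t : ℝ, 0 ≤ s → s ≤ t → t ≤ T →
      ‖sewA h t s - h t s 0‖ ≤ cSewing μ * K * (t - s) ^ μ := by
    intro s t hs hst htT
    have h1 := sewA_sub_h hμ hρ hρμ hK hrem hs hst htT
    have h2 := sew_const_le (μ := μ) hμ
    have h3 : (0:ℝ) ≤ K * (t - s) ^ μ :=
      mul_nonneg hK (Real.rpow_nonneg (by linarith) μ)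
    calc ‖sewA h t s - h t s 0‖
        ≤ K * (t - s) ^ μ * ((2:ℝ) ^ (1 - μ) / 2 / (1 - (2:ℝ) ^ (1 - μ))) := h1
      _ ≤ K * (t - s) ^ μ * cSewing μ := mul_le_mul_of_nonneg_left h2 h3
      _ = cSewing μ * K * (t - s) ^ μ := by ring
  have hMcont : ContinuousOn (fun p : ℝ × ℝ => sewA h p.1 p.2 - h p.1 p.2 0)
      {p : ℝ × ℝ | 0 ≤ p.2 ∧ p.2 ≤ p.1 ∧ p.1 ≤ T} := by
    apply ContinuousOn.sub (sewA_contOn hT hμ hρ hρμ hK hrem hcont)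
    have hmap : Set.MapsTo (fun p : ℝ × ℝ => ((p.1, p.2, (0:ℝ)) : ℝ × ℝ × ℝ))
        {p : ℝ × ℝ | 0 ≤ p.2 ∧ p.2 ≤ p.1 ∧ p.1 ≤ T}
        {p : ℝ × ℝ × ℝ | 0 ≤ p.2.2 ∧ p.2.2 ≤ p.2.1 ∧ p.2.1 ≤ p.1 ∧ p.1 ≤ T} :=
      fun p hp => ⟨le_rfl, hp.1, hp.2.1, hp.2.2⟩
    exact hcont.comp
      ((continuous_fst.prodMk (continuous_snd.prodMk continuous_const)).continuousOn) hmap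
  refine ⟨fun t s => sewA h t s - h t s 0,
    ⟨hMcont, hMdiag, hMdelta,
      ⟨cSewing μ * K, fun s t hs hst htT => hMbound s t hs hst.le htT⟩⟩,
    hMbound, ?_⟩
  rintro M' ⟨hcont', hdiag', hdelta', C', hC'⟩ s t hs hst htT
  rcases eq_or_lt_of_le hst with rfl | hlt
  · show M' s s = sewA h s s - h s s 0
    rw [hdiag' s hs htT, hMdiag s hs htT]
  · have hDadd : ∀ a b c : ℝ, 0 ≤ a → a ≤ b → b ≤ c → c ≤ T →
        M' c a - (sewA h c a - h c a 0)
          = (M' c b - (sewA h c b - h c b 0)) + (M' b a - (sewA h b a - h b a 0)) := by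
      intro a b c ha hab hbc hcT
      have e1 := hdelta' a b c ha hab hbc hcT
      have e2 := hMdelta a b c ha hab hbc hcT
      have e3 : (M' c a - (sewA h c a - h c a 0))
            - ((M' c b - (sewA h c b - h c b 0)) + (M' b a - (sewA h b a - h b a 0)))
          = (M' c a - M' c b - M' b a)
            - ((sewA h c a - h c a 0) - (sewA h c b - h c b 0) - (sewA h b a - h b a 0)) := by
        abel
      have e4 : (M' c a - (sewA h c a - h c a 0))
            - ((M' c b - (sewA h c b - h c b 0)) + (M' b a - (sewA h b a - h b a 0))) = 0 := by
        rw [e3, e1, e2, sub_self]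
      exact sub_eq_zero.mp e4
    have hiter : ∀ n : ℕ, n ≠ 0 → ∀ a b : ℝ, 0 ≤ a → a ≤ b → b ≤ T →
        M' b a - (sewA h b a - h b a 0) = ∑ i ∈ Finset.range n,
          (M' (sewPt a b n (i + 1)) (sewPt a b n i)
            - (sewA h (sewPt a b n (i + 1)) (sewPt a b n i)
                - h (sewPt a b n (i + 1)) (sewPt a b n i) 0)) := by
      intro n
      induction n with
      | zero => intro hn; exact absurd rfl hn
      | succ n ih =>
        intro _ a b ha hab hbT
        rcases Nat.eq_zero_or_pos n with hn | hn
        · subst hn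
          rw [Finset.sum_range_one, sewPt_zero, sewPt_last a b (by norm_num)]
        · have hau : a ≤ sewPt a b (n + 1) n := sewPt_ge hab (n + 1) n
          have hub : sewPt a b (n + 1) n ≤ b := sewPt_le hab (by omega) (by omega)
          have hterm : ∀ i ∈ Finset.range n,
              (M' (sewPt a (sewPt a b (n + 1) n) n (i + 1)) (sewPt a (sewPt a b (n + 1) n) n i)
                - (sewA h (sewPt a (sewPt a b (n + 1) n) n (i + 1))
                      (sewPt a (sewPt a b (n + 1) n) n i)
                    - h (sewPt a (sewPt a b (n + 1) n) n (i + 1))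
                      (sewPt a (sewPt a b (n + 1) n) n i) 0))
              = (M' (sewPt a b (n + 1) (i + 1)) (sewPt a b (n + 1) i)
                - (sewA h (sewPt a b (n + 1) (i + 1)) (sewPt a b (n + 1) i)
                    - h (sewPt a b (n + 1) (i + 1)) (sewPt a b (n + 1) i) 0)) := by
            intro i _
            rw [sewPt_left (by omega : n ≠ 0) (by omega : n + 1 ≠ 0),
              sewPt_left (by omega : n ≠ 0) (by omega : n + 1 ≠ 0)]
          rw [Finset.sum_range_succ, sewPt_last a b (by omega : n + 1 ≠ 0),
            ← Finset.sum_congr rfl hterm,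
            ← ih (by omega) a (sewPt a b (n + 1) n) ha hau (le_trans hub hbT)]
          rw [hDadd a (sewPt a b (n + 1) n) b ha hau hub hbT]
          abel
    have hCtot : ∀ n : ℕ, n ≠ 0 → ‖M' t s - (sewA h t s - h t s 0)‖
        ≤ (C' + cSewing μ * K) * (t - s) ^ μ * ((n:ℝ)) ^ (1 - μ) := by
      intro n hn
      have hn0 : (0:ℝ) < n := by exact_mod_cast Nat.pos_of_ne_zero hn
      rw [hiter n hn s t hs hst htT]
      refine le_trans (norm_sum_le _ _) ?_
      have hstep : ∀ i ∈ Finset.range n,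
          ‖M' (sewPt s t n (i + 1)) (sewPt s t n i)
            - (sewA h (sewPt s t n (i + 1)) (sewPt s t n i)
                - h (sewPt s t n (i + 1)) (sewPt s t n i) 0)‖
          ≤ (C' + cSewing μ * K) * ((t - s) / n) ^ μ := by
        intro i hi
        have hin : i < n := Finset.mem_range.mp hi
        have hsa : s ≤ sewPt s t n i := sewPt_ge hst n i
        have habs : sewPt s t n i < sewPt s t n (i + 1) := by
          have hd := sewPt_step s t n i
          have hpos : 0 < (t - s) / (n:ℝ) := div_pos (by linarith) hn0
          linarith
        have hbt : sewPt s t n (i + 1) ≤ t := sewPt_le hst (by omega) hn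
        refine le_trans (norm_sub_le _ _) ?_
        have h1' := hC' (sewPt s t n i) (sewPt s t n (i + 1))
          (le_trans hs hsa) habs (le_trans hbt htT)
        have h2' := hMbound (sewPt s t n i) (sewPt s t n (i + 1))
          (le_trans hs hsa) habs.le (le_trans hbt htT)
        rw [sewPt_step] at h1' h2'
        have hq : (0:ℝ) ≤ (t - s) / (n:ℝ) := le_of_lt (div_pos (by linarith) hn0)
        have hqq : (0:ℝ) ≤ ((t - s) / (n:ℝ)) ^ μ := Real.rpow_nonneg hq μ
        calc ‖M' (sewPt s t n (i + 1)) (sewPt s t n i)‖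
              + ‖sewA h (sewPt s t n (i + 1)) (sewPt s t n i)
                  - h (sewPt s t n (i + 1)) (sewPt s t n i) 0‖
            ≤ C' * ((t - s) / n) ^ μ + cSewing μ * K * ((t - s) / n) ^ μ :=
              add_le_add h1' h2'
          _ = (C' + cSewing μ * K) * ((t - s) / n) ^ μ := by ring
      calc ∑ i ∈ Finset.range n, ‖M' (sewPt s t n (i + 1)) (sewPt s t n i)
            - (sewA h (sewPt s t n (i + 1)) (sewPt s t n i)
                - h (sewPt s t n (i + 1)) (sewPt s t n i) 0)‖
          ≤ ∑ _i ∈ Finset.range n, (C' + cSewing μ * K) * ((t - s) / n) ^ μ :=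
            Finset.sum_le_sum hstep
        _ = (n:ℝ) * ((C' + cSewing μ * K) * ((t - s) / n) ^ μ) := by
            rw [Finset.sum_const, Finset.card_range, nsmul_eq_mul]
        _ = (C' + cSewing μ * K) * (t - s) ^ μ * ((n:ℝ)) ^ (1 - μ) := by
            have hsc := scale_rpow (μ := μ) (n:ℝ) (t - s) hn0 (by linarith)
            calc (n:ℝ) * ((C' + cSewing μ * K) * ((t - s) / n) ^ μ)
                = (C' + cSewing μ * K) * ((n:ℝ) * ((t - s) / n) ^ μ) := by ring
              _ = (C' + cSewing μ * K) * ((t - s) ^ μ * (n:ℝ) ^ (1 - μ)) := by rw [hsc]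
              _ = (C' + cSewing μ * K) * (t - s) ^ μ * ((n:ℝ)) ^ (1 - μ) := by ring
    have hlim : Filter.Tendsto
        (fun n : ℕ => (C' + cSewing μ * K) * (t - s) ^ μ * ((n:ℝ)) ^ (1 - μ))
        Filter.atTop (𝓝 0) := by
      have h1 : Filter.Tendsto (fun n : ℕ => ((n:ℝ)) ^ (1 - μ)) Filter.atTop (𝓝 0) := by
        have h2 := (tendsto_rpow_neg_atTop (by linarith : (0:ℝ) < μ - 1)).comp
          tendsto_natCast_atTop_atTop
        simpa [Function.comp_def, neg_sub] using h2
      have h3 := h1.const_mul ((C' + cSewing μ * K) * (t - s) ^ μ)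
      simpa [mul_assoc] using h3
    have hle : ‖M' t s - (sewA h t s - h t s 0)‖ ≤ 0 := by
      refine ge_of_tendsto hlim ?_
      filter_upwards [Filter.eventually_ge_atTop 1] with n hn
      exact hCtot n (by omega)
    exact sub_eq_zero.mp (norm_le_zero_iff.mp hle)
end

section
/- Integration of small increments. Let V be a Banach space, T > 0, μ > 1 and 0 < ρ < μ. Let g : {(t,s) : 0 ≤ s ≤ t ≤ T} → V be continuous with g_{tt} = 0 for all t, and suppose there is K ≥ 0 such that ‖(δg)_{tus}‖ = ‖g_{ts} − g_{tu} − g_{us}‖ ≤ K (t−u)^ρ (u−s)^{μ−ρ} for all s ≤ u ≤ t. Then for every 0 ≤ s ≤ t ≤ T the Riemann sums ∑_{i=0}^{n−1} g_{t_{i+1} t_i}, taken over partitions s = t_0 < t_1 < ⋯ < t_n = t, converge in V as the mesh of the partition tends to 0; the limit F_{ts} is additive (F_{ts} = F_{tu} + F_{us} for all s ≤ u ≤ t) and satisfies ‖F_{ts} − g_{ts}‖ ≤ c_μ K (t−s)^μ, where c_μ = 2 + 2^μ ∑_{k=1}^∞ k^{−μ}. -/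
namespace Sewing

open Finset Filter

variable {V : Type*} [NormedAddCommGroup V] [NormedSpace ℝ V] [CompleteSpace V]

noncomputable def zsum (μ : ℝ) : ℝ := ∑' k : ℕ, ((k : ℝ) + 1) ^ (-μ)

lemma summable_z {μ : ℝ} (hμ : 1 < μ) : Summable (fun k : ℕ => ((k : ℝ) + 1) ^ (-μ)) := by
  have h : Summable (fun k : ℕ => ((k : ℝ)) ^ (-μ)) := Real.summable_nat_rpow.2 (by linarith)
  have := (summable_nat_add_iff 1).2 h
  simpa using this

lemma zsum_nonneg (μ : ℝ) : 0 ≤ zsum μ :=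
  tsum_nonneg fun k => Real.rpow_nonneg (by positivity) _

lemma partial_le_zsum {μ : ℝ} (hμ : 1 < μ) (n : ℕ) :
    ∑ k ∈ range n, ((k : ℝ) + 1) ^ (-μ) ≤ zsum μ :=
  Summable.sum_le_tsum (range n) (fun k _ => Real.rpow_nonneg (by positivity) _) (summable_z hμ)

lemma mono_of {π : ℕ → ℝ} {n : ℕ} (h : ∀ j, j < n → π j ≤ π (j + 1)) :
    ∀ {a b : ℕ}, a ≤ b → b ≤ n → π a ≤ π b := by
  intro a b hab
  induction b with
  | zero => intro _; exact le_of_eq (congrArg π (Nat.le_zero.mp hab))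
  | succ b ihb =>
    intro hbn
    rcases Nat.lt_succ_iff_lt_or_eq.mp (Nat.lt_succ_of_le hab) with h' | h'
    · exact (ihb (by omega) (by omega)).trans (h b (by omega))
    · exact le_of_eq (congrArg π h')

lemma young (T μ ρ : ℝ) (hμ : 1 < μ) (hρ : 0 < ρ) (hρμ : ρ < μ)
    (g : ℝ → ℝ → V) (hgtt : ∀ t : ℝ, 0 ≤ t → t ≤ T → g t t = 0)
    (K : ℝ) (hK : 0 ≤ K)
    (hbound : ∀ s u t : ℝ, 0 ≤ s → s ≤ u → u ≤ t → t ≤ T →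
      ‖g t s - g t u - g u s‖ ≤ K * (t - u) ^ ρ * (u - s) ^ (μ - ρ)) :
    ∀ n : ℕ, ∀ π : ℕ → ℝ, (∀ j, j < n → π j ≤ π (j + 1)) → 0 ≤ π 0 → π n ≤ T →
      ‖(∑ j ∈ range n, g (π (j + 1)) (π j)) - g (π n) (π 0)‖
        ≤ 2 ^ μ * (∑ k ∈ range (n - 1), ((k : ℝ) + 1) ^ (-μ)) * K * (π n - π 0) ^ μ := by
  intro n
  induction n using Nat.strong_induction_on with
  | _ n ih =>
    match n with
    | 0 => intro π _ ha hb; simp [hgtt (π 0) ha hb]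
    | 1 => intro π _ _ _; simp
    | (m+2) =>
      intro π hmono h0 hT
      have hmn : ∀ {a b : ℕ}, a ≤ b → b ≤ m + 2 → π a ≤ π b := fun hab hbn => mono_of hmono hab hbn
      obtain ⟨i, hiI, hmin⟩ := Finset.exists_min_image (Finset.Icc 1 (m+1))
        (fun j => π (j+1) - π (j-1)) ⟨1, by simp⟩
      have hi1 : 1 ≤ i := (Finset.mem_Icc.mp hiI).1
      have hi2 : i ≤ m+1 := (Finset.mem_Icc.mp hiI).2
      obtain ⟨p, rfl⟩ : ∃ p, i = p + 1 := ⟨i - 1, by omega⟩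
      have hp : p ≤ m := by omega
      -- telescoping sum bound
      have hsum : ∑ j ∈ Finset.Icc 1 (m+1), (π (j+1) - π (j-1))
          = (π (m+2) - π 1) + (π (m+1) - π 0) := by
        have h1 : ∀ j ∈ Finset.Icc 1 (m+1),
            π (j+1) - π (j-1) = (π (j+1) - π j) + (π j - π (j-1)) := by
          intro j hj
          have : 1 ≤ j := (Finset.mem_Icc.mp hj).1
          ring
        rw [Finset.sum_congr rfl h1, Finset.sum_add_distrib]
        have hIco : Finset.Icc 1 (m+1) = Finset.Ico 1 (m+2) := by rw [show m+2 = m+1+1 from rfl, Finset.Ico_add_one_right_eq_Icc]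
        congr 1
        · rw [hIco, Finset.sum_Ico_eq_sum_range]
          have := Finset.sum_range_sub (fun k => π (k+1)) (m+1)
          simp only [Nat.add_sub_cancel, show m+2-1 = m+1 from rfl] at this ⊢
          rw [← this]
          refine Finset.sum_congr rfl fun k _ => ?_
          rw [show 1+k+1 = k+1+1 from by omega, show 1+k = k+1 from by omega]
        · rw [hIco, Finset.sum_Ico_eq_sum_range]
          have := Finset.sum_range_sub π (m+1)
          simp only [Nat.add_sub_cancel, show m+2-1 = m+1 from rfl] at this ⊢
          rw [← this]
          refine Finset.sum_congr rfl fun k _ => ?_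
          rw [show 1+k = k+1 from by omega, show k+1-1 = k from by omega]
      have hdle : ((m:ℝ)+1) * (π (p+2) - π p) ≤ 2 * (π (m+2) - π 0) := by
        have hle := Finset.card_nsmul_le_sum (Finset.Icc 1 (m+1))
          (fun j => π (j+1) - π (j-1)) (π (p+2) - π p)
          (fun j hj => by simpa using hmin j hj)
        rw [hsum] at hle
        have hcard : (Finset.Icc 1 (m+1)).card = m + 1 := by simp
        rw [hcard, nsmul_eq_mul] at hle
        push_cast at hle
        have h1 : π 0 ≤ π 1 := hmn (by omega) (by omega)
        have h2 : π (m+1) ≤ π (m+2) := hmn (by omega) (by omega)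
        linarith
      have hd0 : (0:ℝ) ≤ π (p+2) - π p := sub_nonneg.2 (hmn (by omega) (by omega))
      have hΔ0 : (0:ℝ) ≤ π (m+2) - π 0 := sub_nonneg.2 (hmn (by omega) (by omega))
      have hp01 : π p ≤ π (p+1) := hmn (by omega) (by omega)
      have hp12 : π (p+1) ≤ π (p+2) := hmn (by omega) (by omega)
      -- the removed-term bound
      have hdelta : ‖g (π (p+2)) (π p) - g (π (p+2)) (π (p+1)) - g (π (p+1)) (π p)‖
          ≤ K * (π (p+2) - π p) ^ μ := by
        refine (hbound (π p) (π (p+1)) (π (p+2)) (h0.trans (hmn (by omega) (by omega)))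
          hp01 hp12 ((hmn (by omega) (by omega)).trans hT)).trans ?_
        have h1 : (π (p+2) - π (p+1)) ^ ρ ≤ (π (p+2) - π p) ^ ρ :=
          Real.rpow_le_rpow (by linarith) (by linarith) hρ.le
        have h2 : (π (p+1) - π p) ^ (μ-ρ) ≤ (π (p+2) - π p) ^ (μ-ρ) :=
          Real.rpow_le_rpow (by linarith) (by linarith) (by linarith)
        have hmul : (π (p+2) - π p) ^ ρ * (π (p+2) - π p) ^ (μ-ρ) = (π (p+2) - π p) ^ μ := by
          rw [← Real.rpow_add' hd0 (by intro h; nlinarith)]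
          norm_num
        calc K * (π (p+2) - π (p+1)) ^ ρ * (π (p+1) - π p) ^ (μ-ρ)
            ≤ K * (π (p+2) - π p) ^ ρ * (π (p+2) - π p) ^ (μ-ρ) := by
              apply mul_le_mul
              · exact mul_le_mul_of_nonneg_left h1 hK
              · exact h2
              · exact Real.rpow_nonneg (by linarith) _
              · positivity
          _ = K * (π (p+2) - π p) ^ μ := by rw [mul_assoc, hmul]
      have hdmu : (π (p+2) - π p) ^ μ ≤ 2 ^ μ * ((m:ℝ)+1) ^ (-μ) * (π (m+2) - π 0) ^ μ := by
        have hm1 : (0:ℝ) < (m:ℝ)+1 := by positivity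
        have hdle2 : π (p+2) - π p ≤ 2 * (π (m+2) - π 0) / ((m:ℝ)+1) := by
          rw [le_div_iff₀ hm1]; linarith
        calc (π (p+2) - π p) ^ μ ≤ (2 * (π (m+2) - π 0) / ((m:ℝ)+1)) ^ μ :=
              Real.rpow_le_rpow hd0 hdle2 (by linarith)
          _ = 2 ^ μ * ((m:ℝ)+1) ^ (-μ) * (π (m+2) - π 0) ^ μ := by
              rw [Real.div_rpow (by linarith) hm1.le,
                Real.mul_rpow (by norm_num) hΔ0, Real.rpow_neg hm1.le, div_eq_mul_inv]
              ring
      -- the surgery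
      set π' : ℕ → ℝ := fun j => π (if j < p+1 then j else j+1) with hπ'
      have hm' : ∀ j, j < m+1 → π' j ≤ π' (j+1) := by
        intro j hj
        simp only [hπ']
        split_ifs with h1 h2 h2
        · exact hmono j (by omega)
        · exact hmn (by omega) (by omega)
        · omega
        · exact hmono (j+1) (by omega)
      have h0' : π' 0 = π 0 := by simp [hπ']
      have hl' : π' (m+1) = π (m+2) := by
        simp only [hπ']
        rw [if_neg (by omega)]
      have hsurg : (∑ j ∈ range (m+1), g (π' (j+1)) (π' j))
          = (∑ j ∈ range (m+2), g (π (j+1)) (π j))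
            + (g (π (p+2)) (π p) - g (π (p+2)) (π (p+1)) - g (π (p+1)) (π p)) := by
        have e1 : ∑ j ∈ range (m+1), g (π' (j+1)) (π' j)
            = (∑ j ∈ Finset.Ico 0 p, g (π' (j+1)) (π' j))
              + ∑ j ∈ Finset.Ico p (m+1), g (π' (j+1)) (π' j) := by
          rw [Finset.sum_Ico_consecutive _ (Nat.zero_le p) (by omega), ← Finset.range_eq_Ico]
        have e2 : ∑ j ∈ Finset.Ico p (m+1), g (π' (j+1)) (π' j)
            = g (π' (p+1)) (π' p) + ∑ j ∈ Finset.Ico (p+1) (m+1), g (π' (j+1)) (π' j) :=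
          Finset.sum_eq_sum_Ico_succ_bot (by omega) _
        have e3 : ∑ j ∈ Finset.Ico 0 p, g (π' (j+1)) (π' j)
            = ∑ j ∈ Finset.Ico 0 p, g (π (j+1)) (π j) := by
          refine Finset.sum_congr rfl fun j hj => ?_
          have hjp : j < p := (Finset.mem_Ico.mp hj).2
          simp only [hπ']
          rw [if_pos (by omega), if_pos (by omega)]
        have e4 : g (π' (p+1)) (π' p) = g (π (p+2)) (π p) := by
          simp only [hπ']
          rw [if_neg (by omega), if_pos (by omega)]
        have e5 : ∑ j ∈ Finset.Ico (p+1) (m+1), g (π' (j+1)) (π' j)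
            = ∑ j ∈ Finset.Ico (p+2) (m+2), g (π (j+1)) (π j) := by
          rw [Finset.sum_Ico_eq_sum_range, Finset.sum_Ico_eq_sum_range]
          simp only [show m+1-(p+1) = m-p from by omega, show m+2-(p+2) = m-p from by omega]
          refine Finset.sum_congr rfl fun k _ => ?_
          simp only [hπ']
          rw [if_neg (by omega), if_neg (by omega)]
          rw [show p+1+k+1+1 = p+2+k+1 from by omega, show p+1+k+1 = p+2+k from by omega]
        have e6 : ∑ j ∈ range (m+2), g (π (j+1)) (π j)
            = (∑ j ∈ Finset.Ico 0 p, g (π (j+1)) (π j))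
              + (g (π (p+1)) (π p) + (g (π (p+2)) (π (p+1))
                + ∑ j ∈ Finset.Ico (p+2) (m+2), g (π (j+1)) (π j))) := by
          rw [Finset.range_eq_Ico,
            ← Finset.sum_Ico_consecutive (fun j => g (π (j+1)) (π j)) (Nat.zero_le p)
              (show p ≤ m+2 by omega),
            Finset.sum_eq_sum_Ico_succ_bot (show p < m+2 by omega),
            Finset.sum_eq_sum_Ico_succ_bot (show p+1 < m+2 by omega)]
        rw [e1, e2, e3, e4, e5, e6]
        abel
      -- put everything together
      have hIH := ih (m+1) (by omega) π' hm' (by rw [h0']; exact h0) (by rw [hl']; exact hT)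
      rw [h0', hl'] at hIH
      simp only [Nat.add_sub_cancel] at hIH ⊢
      have goalEq : (∑ j ∈ range (m+2), g (π (j+1)) (π j)) - g (π (m+2)) (π 0)
          = ((∑ j ∈ range (m+1), g (π' (j+1)) (π' j)) - g (π (m+2)) (π 0))
            - (g (π (p+2)) (π p) - g (π (p+2)) (π (p+1)) - g (π (p+1)) (π p)) := by
        rw [hsurg]; abel
      rw [goalEq]
      refine (norm_sub_le _ _).trans ?_
      have hstep : ‖g (π (p+2)) (π p) - g (π (p+2)) (π (p+1)) - g (π (p+1)) (π p)‖
          ≤ K * (2 ^ μ * ((m:ℝ)+1) ^ (-μ) * (π (m+2) - π 0) ^ μ) :=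
        hdelta.trans (mul_le_mul_of_nonneg_left hdmu hK)
      refine (add_le_add hIH hstep).trans ?_
      rw [show m+2-1 = m+1 from rfl, Finset.sum_range_succ]
      apply le_of_eq
      push_cast
      ring

def clamp (a b x : ℝ) : ℝ := max a (min b x)

lemma clamp_swap (T : ℝ) (g : ℝ → ℝ → V) (hgtt : ∀ t : ℝ, 0 ≤ t → t ≤ T → g t t = 0)
    {a b c d : ℝ} (hab : a ≤ b) (hcd : c ≤ d) (h0a : 0 ≤ a) (h0c : 0 ≤ c)
    (hbT : b ≤ T) (hdT : d ≤ T) :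
    g (clamp a b d) (clamp a b c) = g (clamp c d b) (clamp c d a) := by
  unfold clamp
  rcases le_or_gt b c with h1 | h1
  · rw [min_eq_left (h1.trans hcd), min_eq_left h1, max_eq_right hab,
      min_eq_right (h1.trans hcd), max_eq_left h1, min_eq_right (hab.trans (h1.trans hcd)),
      max_eq_left (hab.trans h1)]
    rw [hgtt b (h0a.trans hab) hbT, hgtt c h0c (hcd.trans hdT)]
  · rcases le_or_gt d a with h2 | h2
    · rw [min_eq_right (h2.trans hab), max_eq_left h2,
        min_eq_right ((hcd.trans h2).trans hab), max_eq_left (hcd.trans h2),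
        min_eq_left (h2.trans hab), max_eq_right hcd, min_eq_left h2, max_eq_right hcd]
      rw [hgtt a h0a (hab.trans hbT), hgtt d (h0c.trans hcd) hdT]
    · rw [max_eq_right (le_min hab h2.le), min_eq_right h1.le, max_eq_right (le_min hcd h1.le),
        min_eq_right h2.le]
      rw [min_comm, max_comm]

lemma sref_close (T μ ρ : ℝ) (hμ : 1 < μ) (hρ : 0 < ρ) (hρμ : ρ < μ)
    (g : ℝ → ℝ → V) (hgtt : ∀ t : ℝ, 0 ≤ t → t ≤ T → g t t = 0)
    (K : ℝ) (hK : 0 ≤ K)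
    (hbound : ∀ s u t : ℝ, 0 ≤ s → s ≤ u → u ≤ t → t ≤ T →
      ‖g t s - g t u - g u s‖ ≤ K * (t - u) ^ ρ * (u - s) ^ (μ - ρ))
    (n1 n2 : ℕ) (π1 π2 : ℕ → ℝ)
    (hm1 : ∀ j, j < n1 → π1 j ≤ π1 (j + 1)) (hm2 : ∀ i, i < n2 → π2 i ≤ π2 (i + 1))
    (h0 : 0 ≤ π1 0) (hT1 : π1 n1 ≤ T)
    (he0 : π2 0 = π1 0) (hen : π2 n2 = π1 n1)
    (δ : ℝ) (hδ : 0 ≤ δ) (hmesh : ∀ j, j < n1 → π1 (j+1) - π1 j ≤ δ) :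
    ‖(∑ j ∈ range n1, ∑ i ∈ range n2,
        g (clamp (π1 j) (π1 (j+1)) (π2 (i+1))) (clamp (π1 j) (π1 (j+1)) (π2 i)))
      - ∑ j ∈ range n1, g (π1 (j+1)) (π1 j)‖
      ≤ 2 ^ μ * zsum μ * K * δ ^ (μ - 1) * (π1 n1 - π1 0) := by
  rw [← Finset.sum_sub_distrib]
  refine (norm_sum_le _ _).trans ?_
  have key : ∀ j, j < n1 →
      ‖(∑ i ∈ range n2,
          g (clamp (π1 j) (π1 (j+1)) (π2 (i+1))) (clamp (π1 j) (π1 (j+1)) (π2 i)))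
        - g (π1 (j+1)) (π1 j)‖
        ≤ 2 ^ μ * zsum μ * K * δ ^ (μ-1) * (π1 (j+1) - π1 j) := by
    intro j hj
    set σ : ℕ → ℝ := fun i => clamp (π1 j) (π1 (j+1)) (π2 i) with hσ
    have hjj : π1 j ≤ π1 (j+1) := hm1 j hj
    have h0j : π1 0 ≤ π1 j := mono_of hm1 (Nat.zero_le j) hj.le
    have hjn : π1 (j+1) ≤ π1 n1 := mono_of hm1 (by omega) (by omega)
    have hσ0 : σ 0 = π1 j := by
      simp only [hσ, clamp, he0]
      rw [min_eq_right (h0j.trans hjj), max_eq_left h0j]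
    have hσn : σ n2 = π1 (j+1) := by
      simp only [hσ, clamp, hen]
      rw [min_eq_left hjn, max_eq_right hjj]
    have hσm : ∀ i, i < n2 → σ i ≤ σ (i+1) := fun i hi =>
      max_le_max le_rfl (min_le_min le_rfl (hm2 i hi))
    have hy := young T μ ρ hμ hρ hρμ g hgtt K hK hbound n2 σ hσm
      (by rw [hσ0]; exact h0.trans h0j) (by rw [hσn]; exact hjn.trans hT1)
    rw [hσ0, hσn] at hy
    refine hy.trans ?_
    have hsub : (0:ℝ) ≤ π1 (j+1) - π1 j := by linarith
    have h1 : 2 ^ μ * (∑ k ∈ range (n2-1), ((k:ℝ)+1)^(-μ)) * K * (π1 (j+1) - π1 j) ^ μ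
        ≤ 2 ^ μ * zsum μ * K * (π1 (j+1) - π1 j) ^ μ := by
      refine mul_le_mul_of_nonneg_right (mul_le_mul_of_nonneg_right
        (mul_le_mul_of_nonneg_left (partial_le_zsum hμ (n2-1)) (by positivity)) hK)
        (Real.rpow_nonneg hsub μ)
    refine h1.trans ?_
    have h2 : (π1 (j+1) - π1 j) ^ μ ≤ δ ^ (μ-1) * (π1 (j+1) - π1 j) := by
      have e : (π1 (j+1) - π1 j) ^ μ = (π1 (j+1) - π1 j) ^ (μ-1) * (π1 (j+1) - π1 j) := by
        nth_rewrite 1 [show μ = (μ-1)+1 by ring]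
        rw [Real.rpow_add' hsub (by linarith), Real.rpow_one]
      rw [e]
      exact mul_le_mul_of_nonneg_right
        (Real.rpow_le_rpow hsub (hmesh j hj) (by linarith)) hsub
    calc 2 ^ μ * zsum μ * K * (π1 (j+1) - π1 j) ^ μ
        ≤ 2 ^ μ * zsum μ * K * (δ ^ (μ-1) * (π1 (j+1) - π1 j)) := by
          refine mul_le_mul_of_nonneg_left h2 ?_
          have := zsum_nonneg μ
          positivity
      _ = 2 ^ μ * zsum μ * K * δ ^ (μ-1) * (π1 (j+1) - π1 j) := by ring
  calc ∑ j ∈ range n1, ‖(∑ i ∈ range n2,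
          g (clamp (π1 j) (π1 (j+1)) (π2 (i+1))) (clamp (π1 j) (π1 (j+1)) (π2 i)))
        - g (π1 (j+1)) (π1 j)‖
      ≤ ∑ j ∈ range n1, 2 ^ μ * zsum μ * K * δ ^ (μ-1) * (π1 (j+1) - π1 j) :=
        Finset.sum_le_sum fun j hj => key j (Finset.mem_range.mp hj)
    _ = 2 ^ μ * zsum μ * K * δ ^ (μ-1) * (π1 n1 - π1 0) := by
        rw [← Finset.mul_sum, Finset.sum_range_sub π1 n1]

lemma sref_symm (T : ℝ) (g : ℝ → ℝ → V) (hgtt : ∀ t : ℝ, 0 ≤ t → t ≤ T → g t t = 0)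
    (n1 n2 : ℕ) (π1 π2 : ℕ → ℝ)
    (hm1 : ∀ j, j < n1 → π1 j ≤ π1 (j + 1)) (hm2 : ∀ i, i < n2 → π2 i ≤ π2 (i + 1))
    (h01 : 0 ≤ π1 0) (hT1 : π1 n1 ≤ T) (h02 : 0 ≤ π2 0) (hT2 : π2 n2 ≤ T) :
    (∑ j ∈ range n1, ∑ i ∈ range n2,
        g (clamp (π1 j) (π1 (j+1)) (π2 (i+1))) (clamp (π1 j) (π1 (j+1)) (π2 i)))
    = ∑ i ∈ range n2, ∑ j ∈ range n1,
        g (clamp (π2 i) (π2 (i+1)) (π1 (j+1))) (clamp (π2 i) (π2 (i+1)) (π1 j)) := by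
  rw [Finset.sum_comm]
  refine Finset.sum_congr rfl fun i hi => Finset.sum_congr rfl fun j hj => ?_
  have hi' := Finset.mem_range.mp hi
  have hj' := Finset.mem_range.mp hj
  exact clamp_swap T g hgtt (hm1 j hj') (hm2 i hi')
    (h01.trans (mono_of hm1 (Nat.zero_le j) hj'.le))
    (h02.trans (mono_of hm2 (Nat.zero_le i) hi'.le))
    ((mono_of hm1 (by omega) (by omega)).trans hT1)
    ((mono_of hm2 (by omega) (by omega)).trans hT2)

lemma compare (T μ ρ : ℝ) (hμ : 1 < μ) (hρ : 0 < ρ) (hρμ : ρ < μ)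
    (g : ℝ → ℝ → V) (hgtt : ∀ t : ℝ, 0 ≤ t → t ≤ T → g t t = 0)
    (K : ℝ) (hK : 0 ≤ K)
    (hbound : ∀ s u t : ℝ, 0 ≤ s → s ≤ u → u ≤ t → t ≤ T →
      ‖g t s - g t u - g u s‖ ≤ K * (t - u) ^ ρ * (u - s) ^ (μ - ρ))
    (n1 n2 : ℕ) (π1 π2 : ℕ → ℝ)
    (hm1 : ∀ j, j < n1 → π1 j ≤ π1 (j + 1)) (hm2 : ∀ i, i < n2 → π2 i ≤ π2 (i + 1))
    (h0 : 0 ≤ π1 0) (hT1 : π1 n1 ≤ T)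
    (he0 : π2 0 = π1 0) (hen : π2 n2 = π1 n1)
    (δ1 δ2 : ℝ) (hδ1 : 0 ≤ δ1) (hδ2 : 0 ≤ δ2)
    (hmesh1 : ∀ j, j < n1 → π1 (j+1) - π1 j ≤ δ1)
    (hmesh2 : ∀ i, i < n2 → π2 (i+1) - π2 i ≤ δ2) :
    ‖(∑ j ∈ range n1, g (π1 (j+1)) (π1 j)) - ∑ i ∈ range n2, g (π2 (i+1)) (π2 i)‖
      ≤ 2 ^ μ * zsum μ * K * (δ1 ^ (μ-1) + δ2 ^ (μ-1)) * (π1 n1 - π1 0) := by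
  have h02 : 0 ≤ π2 0 := he0 ▸ h0
  have hT2 : π2 n2 ≤ T := hen ▸ hT1
  have hA := sref_close T μ ρ hμ hρ hρμ g hgtt K hK hbound n1 n2 π1 π2 hm1 hm2 h0 hT1
    he0 hen δ1 hδ1 hmesh1
  have hB := sref_close T μ ρ hμ hρ hρμ g hgtt K hK hbound n2 n1 π2 π1 hm2 hm1 h02 hT2
    he0.symm hen.symm δ2 hδ2 hmesh2
  rw [he0, hen] at hB
  have hsym := sref_symm T g hgtt n1 n2 π1 π2 hm1 hm2 h0 hT1 h02 hT2
  have hdiff : (∑ j ∈ range n1, g (π1 (j+1)) (π1 j)) - ∑ i ∈ range n2, g (π2 (i+1)) (π2 i)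
      = ((∑ i ∈ range n2, ∑ j ∈ range n1,
            g (clamp (π2 i) (π2 (i+1)) (π1 (j+1))) (clamp (π2 i) (π2 (i+1)) (π1 j)))
          - ∑ i ∈ range n2, g (π2 (i+1)) (π2 i))
        - ((∑ j ∈ range n1, ∑ i ∈ range n2,
            g (clamp (π1 j) (π1 (j+1)) (π2 (i+1))) (clamp (π1 j) (π1 (j+1)) (π2 i)))
          - ∑ j ∈ range n1, g (π1 (j+1)) (π1 j)) := by
    rw [← hsym]; abel
  rw [hdiff]
  refine (norm_sub_le _ _).trans ?_
  refine (add_le_add hB hA).trans (le_of_eq ?_)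
  ring
noncomputable def unif (s t : ℝ) (m i : ℕ) : ℝ := s + (t - s) * i / m

lemma unif_zero (s t : ℝ) (m : ℕ) : unif s t m 0 = s := by simp [unif]

lemma unif_last (s t : ℝ) (m : ℕ) (hm : m ≠ 0) : unif s t m m = t := by
  have : (m:ℝ) ≠ 0 := Nat.cast_ne_zero.mpr hm
  simp [unif, this]

lemma unif_step (s t : ℝ) (m : ℕ) (hm : m ≠ 0) (i : ℕ) :
    unif s t m (i+1) - unif s t m i = (t - s) / m := by
  have : (m:ℝ) ≠ 0 := Nat.cast_ne_zero.mpr hm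
  simp only [unif]
  field_simp
  push_cast
  ring

lemma unif_mono (s t : ℝ) (hst : s ≤ t) (m : ℕ) (hm : m ≠ 0) (i : ℕ) :
    unif s t m i ≤ unif s t m (i+1) := by
  rw [← sub_nonneg, unif_step s t m hm i]
  exact div_nonneg (sub_nonneg.2 hst) (Nat.cast_nonneg m)

end Sewing

open Sewing Finset Filter in
/-- Integration of small increments. -/
theorem integration_of_small_increments
    {V : Type*} [NormedAddCommGroup V] [NormedSpace ℝ V] [CompleteSpace V]
    (T : ℝ) (hT : 0 < T) (μ ρ : ℝ) (hμ : 1 < μ) (hρ : 0 < ρ) (hρμ : ρ < μ)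
    (g : ℝ → ℝ → V)
    (hcont : ContinuousOn (fun p : ℝ × ℝ => g p.1 p.2)
      {p : ℝ × ℝ | 0 ≤ p.2 ∧ p.2 ≤ p.1 ∧ p.1 ≤ T})
    (hgtt : ∀ t : ℝ, 0 ≤ t → t ≤ T → g t t = 0)
    (K : ℝ) (hK : 0 ≤ K)
    (hbound : ∀ s u t : ℝ, 0 ≤ s → s ≤ u → u ≤ t → t ≤ T →
      ‖g t s - g t u - g u s‖ ≤ K * (t - u) ^ ρ * (u - s) ^ (μ - ρ)) :
    ∃ F : ℝ → ℝ → V,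
      -- additivity of the limit
      (∀ s u t : ℝ, 0 ≤ s → s ≤ u → u ≤ t → t ≤ T → F t s = F t u + F u s) ∧
      -- the limit is close to g
      (∀ s t : ℝ, 0 ≤ s → s ≤ t → t ≤ T →
        ‖F t s - g t s‖ ≤ cSewing μ * K * (t - s) ^ μ) ∧
      -- convergence of Riemann sums along partitions whose mesh tends to zero
      (∀ s t : ℝ, 0 ≤ s → s ≤ t → t ≤ T → ∀ ε : ℝ, 0 < ε → ∃ δ : ℝ, 0 < δ ∧
        ∀ (n : ℕ) (π : ℕ → ℝ), π 0 = s → π n = t →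
          (∀ i : ℕ, i < n → π i < π (i + 1)) →
          (∀ i : ℕ, i < n → π (i + 1) - π i < δ) →
          ‖(∑ i ∈ Finset.range n, g (π (i + 1)) (π i)) - F t s‖ < ε) := by
  classical
  have hz0 : 0 ≤ zsum μ := zsum_nonneg μ
  set Z : ℝ := 2 ^ μ * zsum μ with hZdef
  have hZ0 : 0 ≤ Z := mul_nonneg (Real.rpow_nonneg (by norm_num) μ) hz0
  have hμ1 : (0:ℝ) < μ - 1 := by linarith
  set S : ℝ → ℝ → ℕ → V :=
    fun s t m => ∑ i ∈ Finset.range m, g (unif s t m (i+1)) (unif s t m i) with hSdef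
  set F : ℝ → ℝ → V := fun t s => limUnder atTop (fun m : ℕ => S s t (m+1)) with hFdef
  -- mesh-to-zero auxiliary limit
  have hmesh0 : ∀ c : ℝ, Tendsto (fun N : ℕ => (c / ((N:ℝ)+1)) ^ (μ-1)) atTop (nhds 0) := by
    intro c
    have h1 : Tendsto (fun N : ℕ => c / ((N:ℝ)+1)) atTop (nhds 0) :=
      Tendsto.div_atTop tendsto_const_nhds
        (tendsto_atTop_add_const_right _ 1 tendsto_natCast_atTop_atTop)
    have hc : ContinuousAt (fun x : ℝ => x ^ (μ-1)) 0 :=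
      Real.continuousAt_rpow_const 0 (μ-1) (Or.inr hμ1.le)
    have := hc.tendsto.comp h1
    simpa [Function.comp_def, Real.zero_rpow (ne_of_gt hμ1)] using this
  -- generic comparison of any partition with the uniform sums
  have hcomp : ∀ s t : ℝ, 0 ≤ s → s ≤ t → t ≤ T →
      ∀ n (π : ℕ → ℝ), (∀ j, j < n → π j ≤ π (j+1)) → π 0 = s → π n = t →
      ∀ δ, 0 ≤ δ → (∀ j, j < n → π (j+1) - π j ≤ δ) → ∀ m : ℕ,
      ‖(∑ i ∈ Finset.range n, g (π (i+1)) (π i)) - S s t (m+1)‖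
        ≤ Z * K * (δ ^ (μ-1) + ((t-s)/((m:ℝ)+1)) ^ (μ-1)) * (t - s) := by
    intro s t hs hst ht n π hmono h0 hn δ hδ hmesh m
    have hms : ((m:ℕ)+1) ≠ 0 := Nat.succ_ne_zero m
    have hcast : ((m+1 : ℕ):ℝ) = (m:ℝ)+1 := by push_cast; ring
    have hΔ : 0 ≤ t - s := sub_nonneg.2 hst
    have h := compare T μ ρ hμ hρ hρμ g hgtt K hK hbound n (m+1) π (unif s t (m+1))
      hmono (fun i _ => unif_mono s t hst (m+1) hms i)
      (by rw [h0]; exact hs) (by rw [hn]; exact ht)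
      (by rw [unif_zero, h0]) (by rw [unif_last s t (m+1) hms, hn])
      δ ((t-s)/((m:ℝ)+1)) hδ (div_nonneg hΔ (by positivity))
      hmesh
      (fun i _ => by rw [unif_step s t (m+1) hms i, hcast])
    rw [h0, hn] at h
    exact h
  -- convergence of the uniform sums
  have hconv : ∀ s t : ℝ, 0 ≤ s → s ≤ t → t ≤ T →
      Tendsto (fun m : ℕ => S s t (m+1)) atTop (nhds (F t s)) := by
    intro s t hs hst ht
    have hΔ : 0 ≤ t - s := sub_nonneg.2 hst
    have hcauchy : CauchySeq (fun m : ℕ => S s t (m+1)) := by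
      refine cauchySeq_of_le_tendsto_0
        (fun N : ℕ => Z * K * (((t-s)/((N:ℝ)+1)) ^ (μ-1) + ((t-s)/((N:ℝ)+1)) ^ (μ-1)) * (t-s))
        (fun a b N ha hb => ?_) ?_
      · rw [dist_eq_norm]
        have hms : ((a:ℕ)+1) ≠ 0 := Nat.succ_ne_zero a
        have hcast : ((a+1 : ℕ):ℝ) = (a:ℝ)+1 := by push_cast; ring
        have hNa : ((N:ℝ)+1) ≤ (a:ℝ)+1 := by
          have : (N:ℝ) ≤ (a:ℝ) := Nat.cast_le.mpr ha
          linarith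
        have hNb : ((N:ℝ)+1) ≤ (b:ℝ)+1 := by
          have : (N:ℝ) ≤ (b:ℝ) := Nat.cast_le.mpr hb
          linarith
        have hda : (t-s)/((a:ℝ)+1) ≤ (t-s)/((N:ℝ)+1) := by gcongr
        have h := hcomp s t hs hst ht (a+1) (unif s t (a+1))
          (fun i _ => unif_mono s t hst (a+1) hms i) (unif_zero _ _ _)
          (unif_last _ _ _ hms) ((t-s)/((N:ℝ)+1)) (div_nonneg hΔ (by positivity))
          (fun i _ => by rw [unif_step s t (a+1) hms i, hcast]; exact hda) b
        refine h.trans ?_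
        have h2 : ((t-s)/((b:ℝ)+1)) ^ (μ-1) ≤ ((t-s)/((N:ℝ)+1)) ^ (μ-1) :=
          Real.rpow_le_rpow (div_nonneg hΔ (by positivity)) (by gcongr) hμ1.le
        exact mul_le_mul_of_nonneg_right
          (mul_le_mul_of_nonneg_left (add_le_add le_rfl h2) (mul_nonneg hZ0 hK)) hΔ
      · have := (((hmesh0 (t-s)).add (hmesh0 (t-s))).const_mul (Z*K)).mul_const (t-s)
        simpa [mul_assoc] using this
    obtain ⟨x, hx⟩ := cauchySeq_tendsto_of_complete hcauchy
    have hFx : F t s = x := hx.limUnder_eq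
    rwa [hFx]
  -- distance from any fine partition sum to F
  have hclose : ∀ s t : ℝ, 0 ≤ s → s ≤ t → t ≤ T →
      ∀ n (π : ℕ → ℝ), (∀ j, j < n → π j ≤ π (j+1)) → π 0 = s → π n = t →
      ∀ δ, 0 ≤ δ → (∀ j, j < n → π (j+1) - π j ≤ δ) →
      ‖(∑ i ∈ Finset.range n, g (π (i+1)) (π i)) - F t s‖ ≤ Z * K * δ ^ (μ-1) * (t-s) := by
    intro s t hs hst ht n π hmono h0 hn δ hδ hmesh
    have hf : Tendsto (fun m : ℕ => ‖(∑ i ∈ Finset.range n, g (π (i+1)) (π i)) - S s t (m+1)‖)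
        atTop (nhds ‖(∑ i ∈ Finset.range n, g (π (i+1)) (π i)) - F t s‖) :=
      (tendsto_const_nhds.sub (hconv s t hs hst ht)).norm
    have hg2 : Tendsto (fun m : ℕ => Z * K * (δ ^ (μ-1) + ((t-s)/((m:ℝ)+1)) ^ (μ-1)) * (t-s))
        atTop (nhds (Z * K * (δ ^ (μ-1) + 0) * (t-s))) :=
      ((tendsto_const_nhds.add (hmesh0 (t-s))).const_mul (Z*K)).mul_const (t-s)
    have hle := le_of_tendsto_of_tendsto' hf hg2
      (fun m => hcomp s t hs hst ht n π hmono h0 hn δ hδ hmesh m)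
    calc ‖(∑ i ∈ Finset.range n, g (π (i+1)) (π i)) - F t s‖
        ≤ Z * K * (δ ^ (μ-1) + 0) * (t-s) := hle
      _ = Z * K * δ ^ (μ-1) * (t-s) := by ring
  refine ⟨F, ?_, ?_, ?_⟩
  · -- additivity
    intro s u t hs hsu hut ht
    have hst : s ≤ t := hsu.trans hut
    have h0u : 0 ≤ u := hs.trans hsu
    have huT : u ≤ T := hut.trans ht
    set ω : ℕ → ℕ → ℝ :=
      fun m i => if i ≤ m+1 then unif s u (m+1) i else unif u t (m+1) (i - (m+1)) with hω
    have hms : ∀ m : ℕ, ((m:ℕ)+1) ≠ 0 := fun m => Nat.succ_ne_zero m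
    have hω0 : ∀ m, ω m 0 = s := by
      intro m; simp only [hω]; rw [if_pos (by omega), unif_zero]
    have hωn : ∀ m, ω m (2*(m+1)) = t := by
      intro m; simp only [hω]
      rw [if_neg (by omega), show 2*(m+1)-(m+1) = m+1 by omega, unif_last _ _ _ (hms m)]
    have hωmono : ∀ m, ∀ j, j < 2*(m+1) → ω m j ≤ ω m (j+1) := by
      intro m j _
      simp only [hω]
      split_ifs with h1 h2 h2
      · exact unif_mono s u hsu (m+1) (hms m) j
      · have hj' : j = m+1 := by omega
        subst hj'
        rw [unif_last _ _ _ (hms m), show m+1+1-(m+1) = 1 by omega]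
        calc u = unif u t (m+1) 0 := (unif_zero _ _ _).symm
          _ ≤ unif u t (m+1) 1 := unif_mono u t hut (m+1) (hms m) 0
      · omega
      · rw [show j+1-(m+1) = (j-(m+1))+1 by omega]
        exact unif_mono u t hut (m+1) (hms m) _
    have hωmesh : ∀ m, ∀ j, j < 2*(m+1) → ω m (j+1) - ω m j ≤ (t-s)/((m:ℝ)+1) := by
      intro m j _
      have hcast : ((m+1:ℕ):ℝ) = (m:ℝ)+1 := by push_cast; ring
      have hm1 : (0:ℝ) < (m:ℝ)+1 := by positivity
      simp only [hω]
      split_ifs with h1 h2 h2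
      · rw [unif_step s u (m+1) (hms m) j, hcast]
        gcongr
      · omega
      · have hj' : j = m+1 := by omega
        subst hj'
        rw [unif_last _ _ _ (hms m), show m+1+1-(m+1) = 1 by omega]
        have hstep := unif_step u t (m+1) (hms m) 0
        rw [unif_zero, hcast] at hstep
        have heq : unif u t (m+1) 1 - u = (t-u)/((m:ℝ)+1) := by linarith [hstep]
        rw [heq]
        gcongr
      · rw [show j+1-(m+1) = (j-(m+1))+1 by omega, unif_step u t (m+1) (hms m) _, hcast]
        gcongr
    have hsplit : ∀ m, (∑ i ∈ Finset.range (2*(m+1)), g (ω m (i+1)) (ω m i))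
        = S s u (m+1) + S u t (m+1) := by
      intro m
      have e1 : ∑ i ∈ Finset.range (2*(m+1)), g (ω m (i+1)) (ω m i)
          = (∑ i ∈ Finset.Ico 0 (m+1), g (ω m (i+1)) (ω m i))
            + ∑ i ∈ Finset.Ico (m+1) (2*(m+1)), g (ω m (i+1)) (ω m i) := by
        rw [Finset.sum_Ico_consecutive _ (Nat.zero_le (m+1)) (by omega), ← Finset.range_eq_Ico]
      have e2 : ∑ i ∈ Finset.Ico 0 (m+1), g (ω m (i+1)) (ω m i) = S s u (m+1) := by
        rw [← Finset.range_eq_Ico, hSdef]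
        refine Finset.sum_congr rfl fun i hi => ?_
        have hi' := Finset.mem_range.mp hi
        simp only [hω]
        rw [if_pos (by omega), if_pos (by omega)]
      have e3 : ∑ i ∈ Finset.Ico (m+1) (2*(m+1)), g (ω m (i+1)) (ω m i) = S u t (m+1) := by
        rw [Finset.sum_Ico_eq_sum_range, show 2*(m+1)-(m+1) = m+1 by omega, hSdef]
        refine Finset.sum_congr rfl fun k _ => ?_
        simp only [hω]
        rcases Nat.eq_zero_or_pos k with hk | hk
        · subst hk
          rw [if_neg (by omega), if_pos (by omega)]
          simp only [Nat.add_zero, Nat.add_sub_cancel_left, Nat.zero_add]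
          rw [unif_last _ _ _ (hms m), unif_zero]
        · rw [if_neg (by omega), if_neg (by omega),
            show m+1+k+1-(m+1) = k+1 by omega, show m+1+k-(m+1) = k by omega]
      rw [e1, e2, e3]
    have hSlim : Tendsto (fun m : ℕ => S s u (m+1) + S u t (m+1)) atTop
        (nhds (F u s + F t u)) := (hconv s u hs hsu huT).add (hconv u t h0u hut ht)
    have hclose2 : ∀ m : ℕ, ‖(S s u (m+1) + S u t (m+1)) - F t s‖
        ≤ Z*K*((t-s)/((m:ℝ)+1))^(μ-1)*(t-s) := by
      intro m
      rw [← hsplit m]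
      exact hclose s t hs hst ht (2*(m+1)) (ω m) (hωmono m) (hω0 m) (hωn m)
        ((t-s)/((m:ℝ)+1)) (div_nonneg (sub_nonneg.2 hst) (by positivity)) (hωmesh m)
    have h0lim : Tendsto (fun m : ℕ => Z*K*((t-s)/((m:ℝ)+1))^(μ-1)*(t-s)) atTop (nhds 0) := by
      have := ((hmesh0 (t-s)).const_mul (Z*K)).mul_const (t-s)
      simpa using this
    have hz : Tendsto (fun m : ℕ => (S s u (m+1) + S u t (m+1)) - F t s) atTop (nhds 0) :=
      squeeze_zero_norm hclose2 h0lim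
    have h2 : Tendsto (fun m : ℕ => S s u (m+1) + S u t (m+1)) atTop (nhds (F t s)) := by
      have h3 := hz.add_const (F t s)
      simpa using h3
    rw [tendsto_nhds_unique h2 hSlim]
    exact add_comm _ _
  · -- closeness to g
    intro s t hs hst ht
    have hΔ : 0 ≤ t - s := sub_nonneg.2 hst
    have hy : ∀ m : ℕ, ‖S s t (m+1) - g t s‖ ≤ Z * K * (t-s)^μ := by
      intro m
      have hms : ((m:ℕ)+1) ≠ 0 := Nat.succ_ne_zero m
      have h := young T μ ρ hμ hρ hρμ g hgtt K hK hbound (m+1) (unif s t (m+1))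
        (fun i _ => unif_mono s t hst (m+1) hms i) (by rw [unif_zero]; exact hs)
        (by rw [unif_last s t _ hms]; exact ht)
      rw [unif_zero, unif_last s t _ hms] at h
      refine h.trans ?_
      exact mul_le_mul_of_nonneg_right (mul_le_mul_of_nonneg_right
        (mul_le_mul_of_nonneg_left (partial_le_zsum hμ _) (by positivity)) hK)
        (Real.rpow_nonneg hΔ μ)
    have hlim : Tendsto (fun m : ℕ => ‖S s t (m+1) - g t s‖) atTop
        (nhds ‖F t s - g t s‖) := ((hconv s t hs hst ht).sub_const (g t s)).norm
    have hle := le_of_tendsto' hlim hy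
    refine hle.trans ?_
    have h1 : 0 ≤ K * (t-s)^μ := mul_nonneg hK (Real.rpow_nonneg hΔ μ)
    have hcs : cSewing μ = 2 + Z := rfl
    rw [hcs]
    nlinarith
  · -- convergence of Riemann sums
    intro s t hs hst ht ε hε
    have hΔ : 0 ≤ t - s := sub_nonneg.2 hst
    rcases eq_or_lt_of_le (mul_nonneg (mul_nonneg hZ0 hK) hΔ) with hAz | hAz
    · refine ⟨1, one_pos, ?_⟩
      intro n π h0 hn hstrict hmesh
      have h := hclose s t hs hst ht n π (fun j hj => (hstrict j hj).le) h0 hn 1 zero_le_one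
        (fun j hj => (hmesh j hj).le)
      have hzz : Z*K*(1:ℝ)^(μ-1)*(t-s) = 0 := by
        rw [Real.one_rpow]
        calc Z*K*1*(t-s) = Z*K*(t-s) := by ring
          _ = 0 := hAz.symm
      rw [hzz] at h
      exact lt_of_le_of_lt h hε
    · set δ0 : ℝ := (ε/(2*(Z*K*(t-s))))^((μ-1)⁻¹) with hδ0def
      have hδ0 : 0 < δ0 := Real.rpow_pos_of_pos (div_pos hε (by linarith)) _
      refine ⟨min 1 δ0, lt_min one_pos hδ0, ?_⟩
      intro n π h0 hn hstrict hmesh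
      have hδm : 0 ≤ min 1 δ0 := (lt_min one_pos hδ0).le
      have h := hclose s t hs hst ht n π (fun j hj => (hstrict j hj).le) h0 hn (min 1 δ0) hδm
        (fun j hj => (hmesh j hj).le)
      have hpow : (min 1 δ0)^(μ-1) ≤ ε/(2*(Z*K*(t-s))) := by
        calc (min 1 δ0)^(μ-1) ≤ δ0^(μ-1) :=
              Real.rpow_le_rpow hδm (min_le_right _ _) hμ1.le
          _ = ε/(2*(Z*K*(t-s))) := Real.rpow_inv_rpow (le_of_lt (div_pos hε (by linarith))) (ne_of_gt hμ1)
      have hchain : Z*K*(min 1 δ0)^(μ-1)*(t-s) ≤ ε/2 := by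
        have h1 : Z*K*(min 1 δ0)^(μ-1)*(t-s) ≤ Z*K*(ε/(2*(Z*K*(t-s))))*(t-s) :=
          mul_le_mul_of_nonneg_right (mul_le_mul_of_nonneg_left hpow (mul_nonneg hZ0 hK)) hΔ
        have hA' : Z*K*(t-s) ≠ 0 := ne_of_gt hAz
        have h2 : Z*K*(ε/(2*(Z*K*(t-s))))*(t-s) = ε/2 := by
          rw [show Z*K*(ε/(2*(Z*K*(t-s))))*(t-s) = (Z*K*(t-s))*ε/((Z*K*(t-s))*2) by ring,
            mul_div_mul_left ε 2 hA']
        linarith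
      exact lt_of_le_of_lt (h.trans hchain) (by linarith)
end

section
/- Garsia–Rodemich–Rumsey inequality for twisted increments. Let (V,‖·‖) be a Banach space, T > 0 and ξ ≥ 0. Let R : {(t,s) : 0 ≤ s ≤ t ≤ T} → V be continuous with R_{tt} = 0 for all t. Let ψ, φ : [0,∞) → [0,∞) be continuous and strictly increasing with ψ(0) = 0, φ(0) = 0 and ψ(x) → ∞ as x → ∞, and set U = ∬_{0<v<w<T} ψ( ‖R_{wv}‖/φ(w−v) ) dv dw. Assume there exists C ≥ 0 such that for all 0 ≤ s < t ≤ T, sup_{s ≤ u ≤ t} ‖R_{ts} − R_{tu} − e^{−ξ(t−u)} R_{us}‖ ≤ ψ^{−1}( 4C/(t−s)² ) φ(t−s). Then for all 0 ≤ s ≤ t ≤ T, ‖R_{ts}‖ ≤ 8 ∫₀^{t−s} ψ^{−1}(4U/r²) dφ(r) + 9 ∫₀^{t−s} ψ^{−1}(4C/r²) dφ(r), where the integrals are Lebesgue–Stieltjes integrals with respect to the increasing continuous function φ, with values in [0,∞] (the inequality being trivially true when the right-hand side is infinite). -/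
open MeasureTheory
open scoped ENNReal

section GRRAux

lemma grr_meas_indicator_of_continuousOn {E : Set (ℝ × ℝ)} (hE : IsOpen E)
    {f : ℝ × ℝ → ℝ≥0∞} (hf : ContinuousOn f E) : Measurable (E.indicator f) := by
  refine measurable_of_isOpen fun U hU => ?_
  by_cases h0 : (0 : ℝ≥0∞) ∈ U
  · have : E.indicator f ⁻¹' U = (E ∩ f ⁻¹' U) ∪ Eᶜ := by
      ext p
      simp only [Set.mem_union, Set.mem_inter_iff, Set.mem_preimage, Set.mem_compl_iff,
        Set.indicator_apply]
      by_cases hpE : p ∈ E <;> simp [hpE, h0]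
    rw [this]
    exact ((hf.isOpen_inter_preimage hE hU).measurableSet).union hE.measurableSet.compl
  · have : E.indicator f ⁻¹' U = E ∩ f ⁻¹' U := by
      ext p
      simp only [Set.mem_inter_iff, Set.mem_preimage, Set.indicator_apply]
      by_cases hpE : p ∈ E <;> simp [hpE, h0]
    rw [this]
    exact (hf.isOpen_inter_preimage hE hU).measurableSet

lemma grr_exists_le_one_of_lintegral_le {g : ℝ → ℝ≥0∞} (hg : Measurable g) {α β : ℝ}
    (hab : α < β) (h : ∫⁻ v in Set.Ioo α β, g v ≤ ENNReal.ofReal (β - α)) :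
    ∃ v ∈ Set.Ioo α β, g v ≤ 1 := by
  by_contra hcon
  push_neg at hcon
  have hcover : Set.Ioo α β ⊆ ⋃ n : ℕ, {v ∈ Set.Ioo α β | 1 + ((n : ℝ≥0∞))⁻¹ ≤ g v} := by
    intro v hv
    have h1 : 1 < g v := hcon v hv
    have hne : g v - 1 ≠ 0 := by
      simp only [ne_eq, tsub_eq_zero_iff_le, not_le]; exact h1
    obtain ⟨n, hn⟩ := ENNReal.exists_inv_nat_lt hne
    refine Set.mem_iUnion.2 ⟨n, hv, ?_⟩
    calc (1 : ℝ≥0∞) + (n : ℝ≥0∞)⁻¹ ≤ 1 + (g v - 1) := add_le_add_right hn.le 1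
      _ = g v := add_tsub_cancel_of_le h1.le
  have hμ : (volume : Measure ℝ) (Set.Ioo α β) = ENNReal.ofReal (β - α) := Real.volume_Ioo
  have hpos : (0 : ℝ≥0∞) < ENNReal.ofReal (β - α) := by
    rw [ENNReal.ofReal_pos]; linarith
  have : ∃ n : ℕ, 0 < volume {v ∈ Set.Ioo α β | 1 + ((n : ℝ≥0∞))⁻¹ ≤ g v} := by
    by_contra hall
    push_neg at hall
    have h0 : volume (⋃ n : ℕ, {v ∈ Set.Ioo α β | 1 + ((n : ℝ≥0∞))⁻¹ ≤ g v}) = 0 :=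
      measure_iUnion_null fun n => le_antisymm (hall n) (zero_le)
    have := measure_mono_null hcover h0
    rw [hμ] at this; exact hpos.ne' this
  obtain ⟨n, hn⟩ := this
  set S := {v ∈ Set.Ioo α β | 1 + ((n : ℝ≥0∞))⁻¹ ≤ g v} with hS
  have hSmeas : MeasurableSet S := by
    have hSeq : S = Set.Ioo α β ∩ {v | 1 + ((n : ℝ≥0∞))⁻¹ ≤ g v} := rfl
    rw [hSeq]
    exact measurableSet_Ioo.inter (hg measurableSet_Ici)
  have hSsub : S ⊆ Set.Ioo α β := fun v hv => hv.1
  have hsplit : ∫⁻ v in Set.Ioo α β, g v = (∫⁻ v in S, g v) + ∫⁻ v in Set.Ioo α β \ S, g v := by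
    rw [← lintegral_union (measurableSet_Ioo.diff hSmeas) disjoint_sdiff_self_right,
      Set.union_diff_cancel hSsub]
  have hb1 : (1 + ((n : ℝ≥0∞))⁻¹) * volume S ≤ ∫⁻ v in S, g v := by
    rw [← setLIntegral_const S _]
    refine lintegral_mono_ae ((ae_restrict_iff' hSmeas).2 (Filter.Eventually.of_forall ?_))
    exact fun v hv => hv.2
  have hb2 : 1 * volume (Set.Ioo α β \ S) ≤ ∫⁻ v in Set.Ioo α β \ S, g v := by
    rw [← setLIntegral_const _ _]
    refine lintegral_mono_ae ((ae_restrict_iff' (measurableSet_Ioo.diff hSmeas)).2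
      (Filter.Eventually.of_forall ?_))
    exact fun v hv => (hcon v hv.1).le
  have hadd : volume S + volume (Set.Ioo α β \ S) = ENNReal.ofReal (β - α) := by
    rw [← hμ, ← measure_union (disjoint_sdiff_self_right) (measurableSet_Ioo.diff hSmeas),
      Set.union_diff_cancel hSsub]
  have hlb : ENNReal.ofReal (β - α) + ((n : ℝ≥0∞))⁻¹ * volume S ≤ ∫⁻ v in Set.Ioo α β, g v := by
    calc ENNReal.ofReal (β - α) + ((n : ℝ≥0∞))⁻¹ * volume S
        = (1 + ((n : ℝ≥0∞))⁻¹) * volume S + 1 * volume (Set.Ioo α β \ S) := by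
          rw [add_mul, one_mul, one_mul, ← hadd]; ring
      _ ≤ _ := by rw [hsplit]; exact add_le_add hb1 hb2
  have hnpos : (0:ℝ≥0∞) < ((n : ℝ≥0∞))⁻¹ * volume S := by
    apply ENNReal.mul_pos
    · simp only [ne_eq, ENNReal.inv_eq_zero]
      exact ENNReal.natCast_ne_top n
    · exact hn.ne'
  have hfin : ENNReal.ofReal (β - α) < ∫⁻ v in Set.Ioo α β, g v := by
    calc ENNReal.ofReal (β - α) < ENNReal.ofReal (β - α) + ((n : ℝ≥0∞))⁻¹ * volume S :=
          ENNReal.lt_add_right (by simp) hnpos.ne'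
      _ ≤ _ := hlb
  exact absurd h (not_le.2 hfin)

lemma grr_le_div_of_mul_div_le {x y : ℝ≥0∞} {δ : ℝ} (hδ : 0 < δ)
    (h : x * (ENNReal.ofReal δ / y) ≤ 1) : x ≤ y / ENNReal.ofReal δ := by
  have hδ0 : ENNReal.ofReal δ ≠ 0 := by
    simp only [ne_eq, ENNReal.ofReal_eq_zero, not_le]; exact hδ
  have hδt : ENNReal.ofReal δ ≠ ⊤ := ENNReal.ofReal_ne_top
  rcases eq_or_ne y 0 with rfl | hy0
  · rw [ENNReal.div_zero hδ0] at h
    have hx : x = 0 := by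
      by_contra hx
      rw [ENNReal.mul_top hx] at h
      exact absurd h (by simp)
    simp [hx]
  rcases eq_or_ne y ⊤ with rfl | hyt
  · rw [ENNReal.top_div_of_ne_top hδt]; exact le_top
  have hq : ENNReal.ofReal δ / y ≠ 0 := by
    simp [ENNReal.div_eq_zero_iff, hδ0, hyt]
  have hqt : ENNReal.ofReal δ / y ≠ ⊤ := by
    simp [ENNReal.div_eq_top, hδ0, hy0, hδt]
  have h2 := (ENNReal.le_div_iff_mul_le (Or.inl hq) (Or.inl hqt)).2 h
  calc x ≤ 1 / (ENNReal.ofReal δ / y) := h2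
    _ = y / ENNReal.ofReal δ := by
        rw [one_div, ENNReal.inv_div (Or.inr hδt) (Or.inr hδ0)]

lemma grr_sum_lintegral_Ioc_le (μ : Measure ℝ) (f : ℝ → ℝ≥0∞) (a : ℕ → ℝ) (h : ℝ)
    (hpos : ∀ n, 0 < a n) (hdec : ∀ n, a (n + 1) ≤ a n) (ha0 : a 0 ≤ h) (N : ℕ) :
    ∑ n ∈ Finset.range N, ∫⁻ r in Set.Ioc (a (n + 1)) (a n), f r ∂μ
      ≤ ∫⁻ r in Set.Ioc (0 : ℝ) h, f r ∂μ := by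
  have haN0 : ∀ N, a N ≤ a 0 := by
    intro N
    induction N with
    | zero => exact le_refl _
    | succ M ihM => exact le_trans (hdec M) ihM
  have key : ∀ M, ∑ n ∈ Finset.range M, (∫⁻ r in Set.Ioc (a (n + 1)) (a n), f r ∂μ)
      = ∫⁻ r in Set.Ioc (a M) (a 0), f r ∂μ := by
    intro M
    induction M with
    | zero => simp
    | succ M ih =>
      rw [Finset.sum_range_succ, ih]
      have hd : Disjoint (Set.Ioc (a M) (a 0)) (Set.Ioc (a (M+1)) (a M)) := by
        rw [Set.disjoint_left]
        rintro x ⟨h1, _⟩ ⟨_, h2⟩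
        exact absurd h1 (not_lt.2 h2)
      rw [← lintegral_union measurableSet_Ioc hd, Set.union_comm,
        Set.Ioc_union_Ioc_eq_Ioc (hdec M) (haN0 M)]
  rw [key N]
  exact lintegral_mono_set (Set.Ioc_subset_Ioc (hpos N).le ha0)

end GRRAux

/-- Extension of the inverse `ψ⁻¹` to `[0,∞]`, sending `∞` to `∞`. -/
noncomputable def psiInvE (ψinv : ℝ → ℝ) (y : ℝ≥0∞) : ℝ≥0∞ :=
  if y = ⊤ then ⊤ else ENNReal.ofReal (ψinv y.toReal)

set_option maxHeartbeats 2000000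
/-- Garsia–Rodemich–Rumsey inequality for twisted increments.
The increasing function `φ` is encoded as a Stieltjes function (monotone,
right-continuous), so that the Lebesgue–Stieltjes integrals `∫ … dφ(r)` are
integrals against `φ.measure`; they take values in `[0,∞]`. -/
theorem grr_twisted_increments
    {V : Type*} [NormedAddCommGroup V] [NormedSpace ℝ V] [CompleteSpace V]
    (T : ℝ) (hT : 0 < T) (ξ : ℝ) (hξ : 0 ≤ ξ)
    (R : ℝ → ℝ → V)
    (hRcont : ContinuousOn (fun p : ℝ × ℝ => R p.1 p.2)
      {p : ℝ × ℝ | 0 ≤ p.2 ∧ p.2 ≤ p.1 ∧ p.1 ≤ T})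
    (hRtt : ∀ t : ℝ, 0 ≤ t → t ≤ T → R t t = 0)
    (ψ : ℝ → ℝ) (φ : StieltjesFunction ℝ)
    (hψcont : ContinuousOn ψ (Set.Ici 0)) (hψmono : StrictMonoOn ψ (Set.Ici 0))
    (hψ0 : ψ 0 = 0) (hψtop : Filter.Tendsto ψ Filter.atTop Filter.atTop)
    (hφcont : ContinuousOn φ (Set.Ici 0)) (hφmono : StrictMonoOn φ (Set.Ici 0))
    (hφ0 : φ 0 = 0)
    -- ψ⁻¹ : the inverse of ψ on [0,∞)
    (ψinv : ℝ → ℝ)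
    (hψinv1 : ∀ x : ℝ, 0 ≤ x → ψinv (ψ x) = x)
    (hψinv2 : ∀ y : ℝ, 0 ≤ y → ψ (ψinv y) = y)
    (hψinv3 : ∀ y : ℝ, 0 ≤ y → 0 ≤ ψinv y)
    (C : ℝ) (hC : 0 ≤ C)
    (hδR : ∀ s t : ℝ, 0 ≤ s → s < t → t ≤ T → ∀ u : ℝ, s ≤ u → u ≤ t →
      ‖R t s - R t u - Real.exp (-ξ * (t - u)) • R u s‖
        ≤ ψinv (4 * C / (t - s) ^ 2) * φ (t - s)) :
    ∀ s t : ℝ, 0 ≤ s → s ≤ t → t ≤ T →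
      ENNReal.ofReal ‖R t s‖
        ≤ 8 * ∫⁻ r in Set.Ioc (0 : ℝ) (t - s),
              psiInvE ψinv
                (4 * (∫⁻ w in Set.Ioo (0 : ℝ) T, ∫⁻ v in Set.Ioo (0 : ℝ) w,
                        ENNReal.ofReal (ψ (‖R w v‖ / φ (w - v))))
                  / ENNReal.ofReal (r ^ 2)) ∂φ.measure
          + 9 * ∫⁻ r in Set.Ioc (0 : ℝ) (t - s),
              ENNReal.ofReal (ψinv (4 * C / r ^ 2)) ∂φ.measure := by
  -- basic facts about φ and ψ
  have hφnonneg : ∀ x : ℝ, 0 ≤ x → 0 ≤ φ x := by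
    intro x hx
    rw [← hφ0]
    rcases eq_or_lt_of_le hx with h | h
    · rw [← h]
    · exact (hφmono (Set.mem_Ici.2 (le_refl 0)) (Set.mem_Ici.2 hx) h).le
  have hφpos : ∀ x : ℝ, 0 < x → 0 < φ x := by
    intro x hx
    rw [← hφ0]
    exact hφmono (Set.mem_Ici.2 (le_refl 0)) (Set.mem_Ici.2 hx.le) hx
  have hφle : ∀ a b : ℝ, 0 ≤ a → a ≤ b → φ a ≤ φ b := by
    intro a b ha hab
    rcases eq_or_lt_of_le hab with h | h
    · rw [h]
    · exact (hφmono (Set.mem_Ici.2 ha) (Set.mem_Ici.2 (ha.trans hab)) h).le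
  have hφltlt : ∀ a b : ℝ, 0 ≤ a → 0 ≤ b → φ a < φ b → a < b := by
    intro a b ha hb hab
    by_contra hle
    exact absurd (hφle b a hb (not_lt.1 hle)) (not_le.2 hab)
  have hψnonneg : ∀ x : ℝ, 0 ≤ x → 0 ≤ ψ x := by
    intro x hx
    rw [← hψ0]
    rcases eq_or_lt_of_le hx with h | h
    · rw [← h]
    · exact (hψmono (Set.mem_Ici.2 (le_refl 0)) (Set.mem_Ici.2 hx) h).le
  have hψinvmono : ∀ y₁ y₂ : ℝ, 0 ≤ y₁ → y₁ ≤ y₂ → ψinv y₁ ≤ ψinv y₂ := by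
    intro y₁ y₂ hy₁ h12
    by_contra hcon
    have hlt : ψinv y₂ < ψinv y₁ := not_le.1 hcon
    have := hψmono (Set.mem_Ici.2 (hψinv3 y₂ (hy₁.trans h12))) (Set.mem_Ici.2 (hψinv3 y₁ hy₁)) hlt
    rw [hψinv2 y₂ (hy₁.trans h12), hψinv2 y₁ hy₁] at this
    exact absurd this (not_lt.2 h12)
  have hinvle : ∀ z c : ℝ, 0 ≤ z → 0 ≤ c → ψ z ≤ c → z ≤ ψinv c := by
    intro z c hz hc hzc
    have := hψinvmono (ψ z) c (hψnonneg z hz) hzc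
    rwa [hψinv1 z hz] at this
  intro s t hs hst htT
  rcases eq_or_lt_of_le hst with heq | hlt
  · subst heq
    rw [hRtt s hs htT]
    simp
  have hh : 0 < t - s := sub_pos.2 hlt
  set U := (∫⁻ w in Set.Ioo (0:ℝ) T, ∫⁻ v in Set.Ioo (0:ℝ) w,
      ENNReal.ofReal (ψ (‖R w v‖ / φ (w - v)))) with hU_def
  -- the case U = ⊤ : right-hand side is infinite
  by_cases hU : U = ⊤
  · have hint : (∫⁻ r in Set.Ioc (0:ℝ) (t - s),
        psiInvE ψinv (4 * U / ENNReal.ofReal (r ^ 2)) ∂φ.measure) = ⊤ := by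
      have hcongr : ∀ r ∈ Set.Ioc (0:ℝ) (t - s),
          psiInvE ψinv (4 * U / ENNReal.ofReal (r ^ 2)) = (⊤ : ℝ≥0∞) := by
        intro r hr
        rw [hU]
        rw [ENNReal.mul_top (by norm_num : (4:ℝ≥0∞) ≠ 0),
          ENNReal.top_div_of_ne_top ENNReal.ofReal_ne_top]
        simp [psiInvE]
      rw [setLIntegral_congr_fun measurableSet_Ioc
        hcongr]
      rw [setLIntegral_const]
      rw [φ.measure_Ioc]
      rw [ENNReal.top_mul]
      simp only [ne_eq, ENNReal.ofReal_eq_zero, not_le, hφ0, sub_zero]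
      exact hφpos _ hh
    rw [hint]
    rw [ENNReal.mul_top (by norm_num : (8:ℝ≥0∞) ≠ 0)]
    simp
  -- main case : U < ∞
  set In1 := (∫⁻ r in Set.Ioc (0 : ℝ) (t - s),
      psiInvE ψinv (4 * U / ENNReal.ofReal (r ^ 2)) ∂φ.measure) with hIn1_def
  set In2 := (∫⁻ r in Set.Ioc (0 : ℝ) (t - s),
      ENNReal.ofReal (ψinv (4 * C / r ^ 2)) ∂φ.measure) with hIn2_def
  -- the open region and the (jointly measurable) integrand
  set E : Set (ℝ × ℝ) := {p : ℝ × ℝ | s < p.2 ∧ p.2 < p.1 ∧ p.1 < t} with hE_def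
  have hEopen : IsOpen E := by
    have hEeq : E = ({p : ℝ × ℝ | s < p.2} ∩ {p : ℝ × ℝ | p.2 < p.1}) ∩ {p : ℝ × ℝ | p.1 < t} := by
      ext p; simp only [hE_def, Set.mem_setOf_eq, Set.mem_inter_iff, and_assoc]
    rw [hEeq]
    exact ((isOpen_lt continuous_const continuous_snd).inter
      (isOpen_lt continuous_snd continuous_fst)).inter
      (isOpen_lt continuous_fst continuous_const)
  have hEsub : E ⊆ {p : ℝ × ℝ | 0 ≤ p.2 ∧ p.2 ≤ p.1 ∧ p.1 ≤ T} := by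
    rintro p ⟨h1, h2, h3⟩
    exact ⟨hs.trans h1.le, h2.le, h3.le.trans htT⟩
  have hFcont : ContinuousOn (fun p : ℝ × ℝ =>
      ENNReal.ofReal (ψ (‖R p.1 p.2‖ / φ (p.1 - p.2)))) E := by
    have hnorm : ContinuousOn (fun p : ℝ × ℝ => ‖R p.1 p.2‖) E := (hRcont.mono hEsub).norm
    have hphi : ContinuousOn (fun p : ℝ × ℝ => φ (p.1 - p.2)) E := by
      refine hφcont.comp ((continuous_fst.sub continuous_snd).continuousOn) ?_
      rintro p ⟨h1, h2, h3⟩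
      exact Set.mem_Ici.2 (by simp only [sub_nonneg]; exact h2.le)
    have hdiv : ContinuousOn (fun p : ℝ × ℝ => ‖R p.1 p.2‖ / φ (p.1 - p.2)) E := by
      refine hnorm.div hphi ?_
      rintro p ⟨h1, h2, h3⟩
      exact (hφpos _ (sub_pos.2 h2)).ne'
    have hpsi : ContinuousOn (fun p : ℝ × ℝ => ψ (‖R p.1 p.2‖ / φ (p.1 - p.2))) E := by
      refine hψcont.comp hdiv ?_
      rintro p ⟨h1, h2, h3⟩
      exact Set.mem_Ici.2 (div_nonneg (norm_nonneg _) (hφnonneg _ (sub_pos.2 h2).le))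
    exact ENNReal.continuous_ofReal.comp_continuousOn hpsi
  set H : ℝ × ℝ → ℝ≥0∞ :=
    E.indicator (fun p => ENNReal.ofReal (ψ (‖R p.1 p.2‖ / φ (p.1 - p.2)))) with hH_def
  have hHmeas : Measurable H := grr_meas_indicator_of_continuousOn hEopen hFcont
  have hHE : ∀ p : ℝ × ℝ, p ∈ E → H p = ENNReal.ofReal (ψ (‖R p.1 p.2‖ / φ (p.1 - p.2))) :=
    fun p hp => Set.indicator_of_mem hp _
  have hHnE : ∀ p : ℝ × ℝ, p ∉ E → H p = 0 := fun p hp => Set.indicator_of_notMem hp _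
  set IH : ℝ → ℝ≥0∞ := fun w => ∫⁻ v, H (w, v) with hIH_def
  set JH : ℝ → ℝ≥0∞ := fun v => ∫⁻ w, H (w, v) with hJH_def
  have hIHmeas : Measurable IH := by
    refine Measurable.lintegral_prod_right (f := fun w v => H (w, v)) ?_
    exact hHmeas.comp (measurable_fst.prodMk measurable_snd)
  have hJHmeas : Measurable JH := by
    refine Measurable.lintegral_prod_right (f := fun v w => H (w, v)) ?_
    exact hHmeas.comp (measurable_snd.prodMk measurable_fst)
  set QI := (∫⁻ w, IH w) with hQI_def
  set QJ := (∫⁻ v, JH v) with hQJ_def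
  have hswap : QI = QJ := by
    rw [hQI_def, hQJ_def]
    exact lintegral_lintegral_swap
      ((hHmeas.comp (measurable_fst.prodMk measurable_snd)).aemeasurable)
  have hQI_le_U : QI ≤ U := by
    have hIH_ind : ∀ w : ℝ, IH w = (Set.Ioo s t).indicator
        (fun w => ∫⁻ v in Set.Ioo s w, ENNReal.ofReal (ψ (‖R w v‖ / φ (w - v)))) w := by
      intro w
      by_cases hw : w ∈ Set.Ioo s t
      · rw [Set.indicator_of_mem hw]
        show (∫⁻ v, H (w, v)) = _
        have : (fun v => H (w, v)) = (Set.Ioo s w).indicator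
            (fun v => ENNReal.ofReal (ψ (‖R w v‖ / φ (w - v)))) := by
          funext v
          by_cases hv : v ∈ Set.Ioo s w
          · rw [Set.indicator_of_mem hv]
            exact hHE (w, v) ⟨hv.1, hv.2, hw.2⟩
          · rw [Set.indicator_of_notMem hv]
            refine hHnE (w, v) ?_
            rintro ⟨h1, h2, h3⟩
            exact hv ⟨h1, h2⟩
        rw [this, lintegral_indicator measurableSet_Ioo]
      · rw [Set.indicator_of_notMem hw]
        show (∫⁻ v, H (w, v)) = 0
        have : (fun v => H (w, v)) = fun _ => (0:ℝ≥0∞) := by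
          funext v
          refine hHnE (w, v) ?_
          rintro ⟨h1, h2, h3⟩
          exact hw ⟨h1.trans h2, h3⟩
        rw [this]
        simp
    calc QI = ∫⁻ w in Set.Ioo s t,
        ∫⁻ v in Set.Ioo s w, ENNReal.ofReal (ψ (‖R w v‖ / φ (w - v))) := by
          rw [hQI_def, lintegral_congr hIH_ind, lintegral_indicator measurableSet_Ioo]
      _ ≤ ∫⁻ w in Set.Ioo s t,
        ∫⁻ v in Set.Ioo 0 w, ENNReal.ofReal (ψ (‖R w v‖ / φ (w - v))) := by
          refine lintegral_mono fun w => ?_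
          exact lintegral_mono_set (Set.Ioo_subset_Ioo (le_refl _) (le_refl _) |>.trans
            (Set.Ioo_subset_Ioo hs (le_refl _)))
      _ ≤ U := by
          rw [hU_def]
          exact lintegral_mono_set (Set.Ioo_subset_Ioo hs htT)
  have hQIfin : QI ≠ ⊤ := fun habs => hU (top_le_iff.1 (habs ▸ hQI_le_U))
  have hQJfin : QJ ≠ ⊤ := hswap ▸ hQIfin
  -- the selection principle
  have hsel : ∀ (G1 G2 : ℝ → ℝ≥0∞), Measurable G1 → Measurable G2 → ∀ α β : ℝ, α < β →
      ∀ Y1 Y2 : ℝ≥0∞, (∫⁻ v in Set.Ioo α β, G1 v) ≤ Y1 → (∫⁻ v in Set.Ioo α β, G2 v) ≤ Y2 →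
      ∃ v, v ∈ Set.Ioo α β ∧ G1 v ≤ 2 * Y1 / ENNReal.ofReal (β - α) ∧
        G2 v ≤ 2 * Y2 / ENNReal.ofReal (β - α) := by
    intro G1 G2 hG1 hG2 α β hab Y1 Y2 h1 h2
    have hd : 0 < β - α := sub_pos.2 hab
    have key : ∀ (Y : ℝ≥0∞) (G : ℝ → ℝ≥0∞), Measurable G → (∫⁻ v in Set.Ioo α β, G v) ≤ Y →
        (∫⁻ v in Set.Ioo α β, G v * (ENNReal.ofReal (β - α) / (2 * Y)))
          ≤ ENNReal.ofReal (β - α) / 2 := by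
      intro Y G hG hGY
      rcases eq_or_ne Y 0 with rfl | hY0
      · have hG0 : ∀ᵐ v ∂(volume.restrict (Set.Ioo α β)), G v = 0 :=
          (lintegral_eq_zero_iff hG).1 (le_antisymm hGY (zero_le))
        have : (∫⁻ v in Set.Ioo α β, G v * (ENNReal.ofReal (β - α) / (2 * 0))) = 0 := by
          rw [lintegral_eq_zero_iff (hG.mul_const _)]
          filter_upwards [hG0] with v hv
          simp [hv]
        rw [this]
        exact zero_le
      have hrne : ENNReal.ofReal (β - α) / (2 * Y) ≠ ⊤ := by
        rw [ne_eq, ENNReal.div_eq_top]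
        push_neg
        constructor
        · intro _; simp [hY0]
        · intro habs; exact absurd habs ENNReal.ofReal_ne_top
      rw [lintegral_mul_const' _ _ hrne]
      calc (∫⁻ v in Set.Ioo α β, G v) * (ENNReal.ofReal (β - α) / (2 * Y))
          ≤ Y * (ENNReal.ofReal (β - α) / (2 * Y)) := mul_le_mul_left hGY _
        _ ≤ ENNReal.ofReal (β - α) / 2 := by
            rcases eq_or_ne Y ⊤ with rfl | hYt
            · rw [ENNReal.mul_top (by norm_num : (2:ℝ≥0∞) ≠ 0), ENNReal.div_top, mul_zero]
              exact zero_le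
            · have : ENNReal.ofReal (β - α) / (2 * Y) = ENNReal.ofReal (β - α) / 2 / Y := by
                rw [div_eq_mul_inv, div_eq_mul_inv, div_eq_mul_inv,
                  ENNReal.mul_inv (Or.inl (by norm_num)) (Or.inl (by norm_num)), ← mul_assoc]
              rw [this, mul_comm, ENNReal.div_mul_cancel hY0 hYt]
    have hsum : (∫⁻ v in Set.Ioo α β,
        (G1 v * (ENNReal.ofReal (β - α) / (2 * Y1)) +
          G2 v * (ENNReal.ofReal (β - α) / (2 * Y2)))) ≤ ENNReal.ofReal (β - α) := by
      rw [lintegral_add_left' ((hG1.mul_const _).aemeasurable) _]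
      calc _ ≤ ENNReal.ofReal (β - α) / 2 + ENNReal.ofReal (β - α) / 2 :=
            add_le_add (key Y1 G1 hG1 h1) (key Y2 G2 hG2 h2)
        _ = ENNReal.ofReal (β - α) := ENNReal.add_halves _
    obtain ⟨v, hv, hgv⟩ := grr_exists_le_one_of_lintegral_le
      (((hG1.mul_const _).add (hG2.mul_const _))) hab hsum
    refine ⟨v, hv, ?_, ?_⟩
    · refine grr_le_div_of_mul_div_le (y := 2 * Y1) hd ?_
      exact le_trans (le_add_of_nonneg_right (zero_le)) hgv
    · refine grr_le_div_of_mul_div_le (y := 2 * Y2) hd ?_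
      exact le_trans (le_add_of_nonneg_left (zero_le)) hgv
  -- choice of the midpoint u₀
  obtain ⟨u₀, hu₀mem, hu₀I, hu₀J⟩ := hsel IH JH hIHmeas hJHmeas s t hlt QI QJ
    (setLIntegral_le_lintegral _ _) (setLIntegral_le_lintegral _ _)
  -- the downward chain invariant and step
  set DP : ℝ × ℝ → Prop := fun p =>
    s < p.1 ∧ p.1 < t ∧ p.1 - s < p.2 ∧ p.2 ≤ t - s ∧
      IH p.1 ≤ 2 * QI / ENNReal.ofReal p.2 with hDP_def
  have hDstep : ∀ p : ℝ × ℝ, DP p → ∃ q : ℝ × ℝ, DP q ∧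
      (q.1 < p.1 ∧ 0 < q.2 ∧ q.2 ≤ p.2 ∧ 2 * φ q.2 = φ (p.1 - s) ∧
        H (p.1, q.1) ≤ 2 * IH p.1 / ENNReal.ofReal q.2) := by
    rintro p ⟨hp1, hp2, hp3, hp4, hp5⟩
    have hd0 : 0 < p.1 - s := sub_pos.2 hp1
    have hφd : 0 < φ (p.1 - s) := hφpos _ hd0
    have hmem : φ (p.1 - s) / 2 ∈ Set.Ioo (φ 0) (φ (p.1 - s)) := by
      rw [hφ0]; constructor <;> linarith
    obtain ⟨δ', hδ'mem, hδ'eq⟩ := intermediate_value_Ioo hd0.le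
      (hφcont.mono (fun x hx => Set.mem_Ici.2 hx.1)) hmem
    obtain ⟨hδ'pos, hδ'lt⟩ := hδ'mem
    obtain ⟨v, hvmem, hvI, hvH⟩ := hsel IH (fun v => H (p.1, v)) hIHmeas
      (hHmeas.comp measurable_prodMk_left) s (s + δ') (by linarith) QI (IH p.1)
      (setLIntegral_le_lintegral _ _) (setLIntegral_le_lintegral _ _)
    rw [add_sub_cancel_left] at hvI hvH
    obtain ⟨hv1, hv2⟩ := hvmem
    refine ⟨(v, δ'), ⟨hv1, by simp only; linarith, by simp only; linarith,
      by simp only; linarith, hvI⟩, by simp only; linarith, hδ'pos, by simp only; linarith,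
      by simp only; linarith, hvH⟩
  have hp₀ : DP (u₀, t - s) := by
    obtain ⟨h1, h2⟩ := hu₀mem
    exact ⟨h1, h2, by simp only; linarith, le_refl _, hu₀I⟩
  choose dnext hdnext1 hdnext2 using hDstep
  let dseq : ℕ → {p : ℝ × ℝ // DP p} := fun n =>
    Nat.rec ⟨(u₀, t - s), hp₀⟩ (fun _ x => ⟨dnext x.1 x.2, hdnext1 x.1 x.2⟩) n
  set τ : ℕ → ℝ := fun n => (dseq n).1.1 with hτ_def
  set δd : ℕ → ℝ := fun n => (dseq n).1.2 with hδd_def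
  have hτ0 : τ 0 = u₀ := rfl
  have hδd0 : δd 0 = t - s := rfl
  have hDPn : ∀ n, s < τ n ∧ τ n < t ∧ τ n - s < δd n ∧ δd n ≤ t - s ∧
      IH (τ n) ≤ 2 * QI / ENNReal.ofReal (δd n) := fun n => (dseq n).2
  have hDRn : ∀ n, τ (n+1) < τ n ∧ 0 < δd (n+1) ∧ δd (n+1) ≤ δd n ∧
      2 * φ (δd (n+1)) = φ (τ n - s) ∧
      H (τ n, τ (n+1)) ≤ 2 * IH (τ n) / ENNReal.ofReal (δd (n+1)) :=
    fun n => hdnext2 (dseq n).1 (dseq n).2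
  have hτs : ∀ n, s < τ n := fun n => (hDPn n).1
  have hτt : ∀ n, τ n < t := fun n => (hDPn n).2.1
  have hdlt : ∀ n, τ n - s < δd n := fun n => (hDPn n).2.2.1
  have hδdle : ∀ n, δd n ≤ t - s := fun n => (hDPn n).2.2.2.1
  have hIHτ : ∀ n, IH (τ n) ≤ 2 * QI / ENNReal.ofReal (δd n) := fun n => (hDPn n).2.2.2.2
  have hδdpos : ∀ n, 0 < δd n := fun n => lt_trans (sub_pos.2 (hτs n)) (hdlt n)
  have hττ : ∀ n, τ (n+1) < τ n := fun n => (hDRn n).1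
  have hδddec : ∀ n, δd (n+1) ≤ δd n := fun n => (hDRn n).2.2.1
  -- the upward chain invariant and step
  set UP : ℝ × ℝ → Prop := fun p =>
    p.1 < t ∧ s < p.1 ∧ t - p.1 < p.2 ∧ p.2 ≤ t - s ∧
      JH p.1 ≤ 2 * QJ / ENNReal.ofReal p.2 with hUP_def
  have hUstep : ∀ p : ℝ × ℝ, UP p → ∃ q : ℝ × ℝ, UP q ∧
      (p.1 < q.1 ∧ 0 < q.2 ∧ q.2 ≤ p.2 ∧ 2 * φ q.2 = φ (t - p.1) ∧
        H (q.1, p.1) ≤ 2 * JH p.1 / ENNReal.ofReal q.2) := by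
    rintro p ⟨hp1, hp2, hp3, hp4, hp5⟩
    have hd0 : 0 < t - p.1 := sub_pos.2 hp1
    have hφd : 0 < φ (t - p.1) := hφpos _ hd0
    have hmem : φ (t - p.1) / 2 ∈ Set.Ioo (φ 0) (φ (t - p.1)) := by
      rw [hφ0]; constructor <;> linarith
    obtain ⟨ε', hε'mem, hε'eq⟩ := intermediate_value_Ioo hd0.le
      (hφcont.mono (fun x hx => Set.mem_Ici.2 hx.1)) hmem
    obtain ⟨hε'pos, hε'lt⟩ := hε'mem
    obtain ⟨w, hwmem, hwJ, hwH⟩ := hsel JH (fun w => H (w, p.1)) hJHmeas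
      (hHmeas.comp measurable_prodMk_right) (t - ε') t (by linarith) QJ (JH p.1)
      (setLIntegral_le_lintegral _ _) (setLIntegral_le_lintegral _ _)
    rw [sub_sub_cancel] at hwJ hwH
    obtain ⟨hw1, hw2⟩ := hwmem
    refine ⟨(w, ε'), ⟨hw2, by simp only; linarith, by simp only; linarith,
      by simp only; linarith, hwJ⟩, by simp only; linarith, hε'pos, by simp only; linarith,
      by simp only; linarith, hwH⟩
  have hq₀ : UP (u₀, t - s) := by
    obtain ⟨h1, h2⟩ := hu₀mem
    exact ⟨h2, h1, by simp only; linarith, le_refl _, hu₀J⟩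
  choose unext hunext1 hunext2 using hUstep
  let useq : ℕ → {p : ℝ × ℝ // UP p} := fun n =>
    Nat.rec ⟨(u₀, t - s), hq₀⟩ (fun _ x => ⟨unext x.1 x.2, hunext1 x.1 x.2⟩) n
  set σ : ℕ → ℝ := fun n => (useq n).1.1 with hσ_def
  set εd : ℕ → ℝ := fun n => (useq n).1.2 with hεd_def
  have hσ0 : σ 0 = u₀ := rfl
  have hUPn : ∀ n, σ n < t ∧ s < σ n ∧ t - σ n < εd n ∧ εd n ≤ t - s ∧
      JH (σ n) ≤ 2 * QJ / ENNReal.ofReal (εd n) := fun n => (useq n).2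
  have hURn : ∀ n, σ n < σ (n+1) ∧ 0 < εd (n+1) ∧ εd (n+1) ≤ εd n ∧
      2 * φ (εd (n+1)) = φ (t - σ n) ∧
      H (σ (n+1), σ n) ≤ 2 * JH (σ n) / ENNReal.ofReal (εd (n+1)) :=
    fun n => hunext2 (useq n).1 (useq n).2
  have hσt : ∀ n, σ n < t := fun n => (hUPn n).1
  have hsσ : ∀ n, s < σ n := fun n => (hUPn n).2.1
  have helt : ∀ n, t - σ n < εd n := fun n => (hUPn n).2.2.1
  have hεdle : ∀ n, εd n ≤ t - s := fun n => (hUPn n).2.2.2.1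
  have hJHσ : ∀ n, JH (σ n) ≤ 2 * QJ / ENNReal.ofReal (εd n) := fun n => (hUPn n).2.2.2.2
  have hεdpos : ∀ n, 0 < εd n := fun n => lt_trans (sub_pos.2 (hσt n)) (helt n)
  have hσσ : ∀ n, σ n < σ (n+1) := fun n => (hURn n).1
  have hεddec : ∀ n, εd (n+1) ≤ εd n := fun n => (hURn n).2.2.1
  have hφhalfU : ∀ n, 2 * φ (εd (n+1)) = φ (t - σ n) := fun n => (hURn n).2.2.2.1
  have hHU : ∀ n, H (σ (n+1), σ n) ≤ 2 * JH (σ n) / ENNReal.ofReal (εd (n+1)) :=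
    fun n => (hURn n).2.2.2.2
  have hφhalfD : ∀ n, 2 * φ (δd (n+1)) = φ (τ n - s) := fun n => (hDRn n).2.2.2.1
  have hHD : ∀ n, H (τ n, τ (n+1)) ≤ 2 * IH (τ n) / ENNReal.ofReal (δd (n+1)) :=
    fun n => (hDRn n).2.2.2.2
  have hEmem : ∀ a b : ℝ, s < b → b < a → a < t → (a, b) ∈ E :=
    fun a b h1 h2 h3 => ⟨h1, h2, h3⟩
  -- from now on, everything is opaque
  clear hDRn hURn hDPn hUPn
  clear_value σ εd
  clear_value τ δd
  clear hεd_def hσ_def hδd_def hτ_def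
  clear useq dseq
  clear hq₀ hp₀ hunext2 hunext1 unext hdnext2 hdnext1 dnext hsel
  clear hUP_def hDP_def UP DP
  clear hFcont hEopen
  clear_value QJ QI JH IH H E U
  have hQIr : ENNReal.ofReal QI.toReal = QI := ENNReal.ofReal_toReal hQIfin
  have hQrUr : QI.toReal ≤ U.toReal := ENNReal.toReal_mono hU hQI_le_U
  have Dmain : ∀ n, ENNReal.ofReal ‖R (τ n) (τ (n+1))‖ ≤
      4 * ∫⁻ r in Set.Ioc (δd (n+2)) (δd (n+1)),
        psiInvE ψinv (4 * U / ENNReal.ofReal (r^2)) ∂φ.measure := by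
    intro n
    set c := 4 * QI.toReal / (δd n * δd (n+1)) with hc_def
    have hc0 : 0 ≤ c := by
      rw [hc_def]
      exact div_nonneg (by positivity) (mul_pos (hδdpos n) (hδdpos (n+1))).le
    have h1 : H (τ n, τ (n+1)) ≤ 2 * (2 * QI / ENNReal.ofReal (δd n))
        / ENNReal.ofReal (δd (n+1)) :=
      le_trans (hHD n) (ENNReal.div_le_div_right (mul_le_mul_right (hIHτ n) 2) _)
    have hx0 : ENNReal.ofReal (δd n) ≠ 0 := by
      simp only [ne_eq, ENNReal.ofReal_eq_zero, not_le]; exact hδdpos n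
    have hxt : ENNReal.ofReal (δd n) ≠ ⊤ := ENNReal.ofReal_ne_top
    have hEq : 2 * (2 * QI / ENNReal.ofReal (δd n)) / ENNReal.ofReal (δd (n+1))
        = ENNReal.ofReal c := by
      rw [hc_def, ENNReal.ofReal_div_of_pos (mul_pos (hδdpos n) (hδdpos (n+1))),
        ENNReal.ofReal_mul (by norm_num : (0:ℝ) ≤ 4), hQIr,
        ENNReal.ofReal_mul (hδdpos n).le, ENNReal.ofReal_ofNat,
        div_eq_mul_inv, div_eq_mul_inv, div_eq_mul_inv,
        ENNReal.mul_inv (Or.inl hx0) (Or.inl hxt)]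
      ring
    have hmemE : (τ n, τ (n+1)) ∈ E := hEmem _ _ (hτs (n+1)) (hττ n) (hτt n)
    have hHval := hHE _ hmemE
    have hψle : ψ (‖R (τ n) (τ (n+1))‖ / φ (τ n - τ (n+1))) ≤ c := by
      have h2 := h1
      rw [hEq, hHval] at h2
      exact (ENNReal.ofReal_le_ofReal_iff hc0).1 h2
    have hΔpos : 0 < τ n - τ (n+1) := sub_pos.2 (hττ n)
    have hφΔpos : 0 < φ (τ n - τ (n+1)) := hφpos _ hΔpos
    have hzle : ‖R (τ n) (τ (n+1))‖ / φ (τ n - τ (n+1)) ≤ ψinv c :=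
      hinvle _ c (div_nonneg (norm_nonneg _) hφΔpos.le) hc0 hψle
    have hRle : ‖R (τ n) (τ (n+1))‖ ≤ ψinv c * φ (τ n - τ (n+1)) := (div_le_iff₀ hφΔpos).1 hzle
    have hφhalf := hφhalfD n
    have hφhalf' := hφhalfD (n+1)
    have hd1 : φ (τ (n+1) - s) ≤ φ (δd (n+1)) :=
      hφle _ _ (sub_pos.2 (hτs (n+1))).le (hdlt (n+1)).le
    have hφΔle : φ (τ n - τ (n+1)) ≤ 4 * (φ (δd (n+1)) - φ (δd (n+2))) := by
      have h2 : φ (τ n - τ (n+1)) ≤ φ (τ n - s) :=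
        hφle _ _ hΔpos.le (by linarith [hτs (n+1)])
      linarith
    have hptwise : ∀ r ∈ Set.Ioc (δd (n+2)) (δd (n+1)),
        ENNReal.ofReal (ψinv c) ≤ psiInvE ψinv (4 * U / ENNReal.ofReal (r^2)) := by
      intro r hr
      have hr0 : 0 < r := lt_trans (hδdpos (n+2)) hr.1
      have hne : 4 * U / ENNReal.ofReal (r^2) ≠ ⊤ := by
        intro habs
        rw [ENNReal.div_eq_top] at habs
        rcases habs with ⟨_, h2⟩ | ⟨h3, _⟩
        · rw [ENNReal.ofReal_eq_zero] at h2; nlinarith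
        · exact absurd h3 (ENNReal.mul_ne_top (by norm_num) hU)
      rw [psiInvE.eq_def, if_neg hne]
      apply ENNReal.ofReal_le_ofReal
      have htoReal : (4 * U / ENNReal.ofReal (r^2)).toReal = 4 * U.toReal / r^2 := by
        rw [ENNReal.toReal_div, ENNReal.toReal_mul, ENNReal.toReal_ofNat,
          ENNReal.toReal_ofReal (by positivity)]
      rw [htoReal]
      apply hψinvmono c _ hc0
      have hrsq : r^2 ≤ δd n * δd (n+1) := by
        have h3 : r ≤ δd (n+1) := hr.2
        have h4 : δd (n+1) ≤ δd n := hδddec n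
        nlinarith [hδdpos (n+1)]
      calc c ≤ 4 * QI.toReal / r^2 := by
            rw [hc_def, div_le_div_iff₀ (mul_pos (hδdpos n) (hδdpos (n+1))) (by positivity)]
            exact mul_le_mul_of_nonneg_left hrsq (by positivity)
        _ ≤ 4 * U.toReal / r^2 := by gcongr
    calc ENNReal.ofReal ‖R (τ n) (τ (n+1))‖
        ≤ ENNReal.ofReal (ψinv c * φ (τ n - τ (n+1))) := ENNReal.ofReal_le_ofReal hRle
      _ = ENNReal.ofReal (ψinv c) * ENNReal.ofReal (φ (τ n - τ (n+1))) :=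
          ENNReal.ofReal_mul (hψinv3 c hc0)
      _ ≤ ENNReal.ofReal (ψinv c) * ENNReal.ofReal (4 * (φ (δd (n+1)) - φ (δd (n+2)))) :=
          mul_le_mul_right (ENNReal.ofReal_le_ofReal hφΔle) _
      _ = 4 * (ENNReal.ofReal (ψinv c) * ENNReal.ofReal (φ (δd (n+1)) - φ (δd (n+2)))) := by
          rw [ENNReal.ofReal_mul (by norm_num : (0:ℝ) ≤ 4), ENNReal.ofReal_ofNat]; ring
      _ = 4 * (ENNReal.ofReal (ψinv c) * φ.measure (Set.Ioc (δd (n+2)) (δd (n+1)))) := by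
          rw [φ.measure_Ioc]
      _ ≤ 4 * ∫⁻ r in Set.Ioc (δd (n+2)) (δd (n+1)),
            psiInvE ψinv (4 * U / ENNReal.ofReal (r^2)) ∂φ.measure := by
          apply mul_le_mul_right
          rw [← setLIntegral_const]
          exact lintegral_mono_ae ((ae_restrict_iff' measurableSet_Ioc).2
            (Filter.Eventually.of_forall hptwise))
  -- upward main estimate
  have hQJr : ENNReal.ofReal QJ.toReal = QJ := ENNReal.ofReal_toReal hQJfin
  have hQrUr' : QJ.toReal ≤ U.toReal := ENNReal.toReal_mono hU (hswap ▸ hQI_le_U)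
  have Umain : ∀ n, ENNReal.ofReal ‖R (σ (n+1)) (σ n)‖ ≤
      4 * ∫⁻ r in Set.Ioc (εd (n+2)) (εd (n+1)),
        psiInvE ψinv (4 * U / ENNReal.ofReal (r^2)) ∂φ.measure := by
    intro n
    set c := 4 * QJ.toReal / (εd n * εd (n+1)) with hc_def
    have hc0 : 0 ≤ c := by
      rw [hc_def]
      exact div_nonneg (by positivity) (mul_pos (hεdpos n) (hεdpos (n+1))).le
    have h1 : H (σ (n+1), σ n) ≤ 2 * (2 * QJ / ENNReal.ofReal (εd n))
        / ENNReal.ofReal (εd (n+1)) :=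
      le_trans (hHU n) (ENNReal.div_le_div_right (mul_le_mul_right (hJHσ n) 2) _)
    have hx0 : ENNReal.ofReal (εd n) ≠ 0 := by
      simp only [ne_eq, ENNReal.ofReal_eq_zero, not_le]; exact hεdpos n
    have hxt : ENNReal.ofReal (εd n) ≠ ⊤ := ENNReal.ofReal_ne_top
    have hEq : 2 * (2 * QJ / ENNReal.ofReal (εd n)) / ENNReal.ofReal (εd (n+1))
        = ENNReal.ofReal c := by
      rw [hc_def, ENNReal.ofReal_div_of_pos (mul_pos (hεdpos n) (hεdpos (n+1))),
        ENNReal.ofReal_mul (by norm_num : (0:ℝ) ≤ 4), hQJr,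
        ENNReal.ofReal_mul (hεdpos n).le, ENNReal.ofReal_ofNat,
        div_eq_mul_inv, div_eq_mul_inv, div_eq_mul_inv,
        ENNReal.mul_inv (Or.inl hx0) (Or.inl hxt)]
      ring
    have hmemE : (σ (n+1), σ n) ∈ E := hEmem _ _ (hsσ n) (hσσ n) (hσt (n+1))
    have hHval := hHE _ hmemE
    have hψle : ψ (‖R (σ (n+1)) (σ n)‖ / φ (σ (n+1) - σ n)) ≤ c := by
      have h2 := h1
      rw [hEq, hHval] at h2
      exact (ENNReal.ofReal_le_ofReal_iff hc0).1 h2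
    have hΔpos : 0 < σ (n+1) - σ n := sub_pos.2 (hσσ n)
    have hφΔpos : 0 < φ (σ (n+1) - σ n) := hφpos _ hΔpos
    have hzle : ‖R (σ (n+1)) (σ n)‖ / φ (σ (n+1) - σ n) ≤ ψinv c :=
      hinvle _ c (div_nonneg (norm_nonneg _) hφΔpos.le) hc0 hψle
    have hRle : ‖R (σ (n+1)) (σ n)‖ ≤ ψinv c * φ (σ (n+1) - σ n) := (div_le_iff₀ hφΔpos).1 hzle
    have hφhalf := hφhalfU n
    have hφhalf' := hφhalfU (n+1)
    have hd1 : φ (t - σ (n+1)) ≤ φ (εd (n+1)) :=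
      hφle _ _ (sub_pos.2 (hσt (n+1))).le (helt (n+1)).le
    have hφΔle : φ (σ (n+1) - σ n) ≤ 4 * (φ (εd (n+1)) - φ (εd (n+2))) := by
      have h2 : φ (σ (n+1) - σ n) ≤ φ (t - σ n) :=
        hφle _ _ hΔpos.le (by linarith [hσt (n+1)])
      linarith
    have hptwise : ∀ r ∈ Set.Ioc (εd (n+2)) (εd (n+1)),
        ENNReal.ofReal (ψinv c) ≤ psiInvE ψinv (4 * U / ENNReal.ofReal (r^2)) := by
      intro r hr
      have hr0 : 0 < r := lt_trans (hεdpos (n+2)) hr.1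
      have hne : 4 * U / ENNReal.ofReal (r^2) ≠ ⊤ := by
        intro habs
        rw [ENNReal.div_eq_top] at habs
        rcases habs with ⟨_, h2⟩ | ⟨h3, _⟩
        · rw [ENNReal.ofReal_eq_zero] at h2; nlinarith
        · exact absurd h3 (ENNReal.mul_ne_top (by norm_num) hU)
      rw [psiInvE.eq_def, if_neg hne]
      apply ENNReal.ofReal_le_ofReal
      have htoReal : (4 * U / ENNReal.ofReal (r^2)).toReal = 4 * U.toReal / r^2 := by
        rw [ENNReal.toReal_div, ENNReal.toReal_mul, ENNReal.toReal_ofNat,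
          ENNReal.toReal_ofReal (by positivity)]
      rw [htoReal]
      apply hψinvmono c _ hc0
      have hrsq : r^2 ≤ εd n * εd (n+1) := by
        have h3 : r ≤ εd (n+1) := hr.2
        have h4 : εd (n+1) ≤ εd n := hεddec n
        nlinarith [hεdpos (n+1)]
      calc c ≤ 4 * QJ.toReal / r^2 := by
            rw [hc_def, div_le_div_iff₀ (mul_pos (hεdpos n) (hεdpos (n+1))) (by positivity)]
            exact mul_le_mul_of_nonneg_left hrsq (by positivity)
        _ ≤ 4 * U.toReal / r^2 := by gcongr
    calc ENNReal.ofReal ‖R (σ (n+1)) (σ n)‖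
        ≤ ENNReal.ofReal (ψinv c * φ (σ (n+1) - σ n)) := ENNReal.ofReal_le_ofReal hRle
      _ = ENNReal.ofReal (ψinv c) * ENNReal.ofReal (φ (σ (n+1) - σ n)) :=
          ENNReal.ofReal_mul (hψinv3 c hc0)
      _ ≤ ENNReal.ofReal (ψinv c) * ENNReal.ofReal (4 * (φ (εd (n+1)) - φ (εd (n+2)))) :=
          mul_le_mul_right (ENNReal.ofReal_le_ofReal hφΔle) _
      _ = 4 * (ENNReal.ofReal (ψinv c) * ENNReal.ofReal (φ (εd (n+1)) - φ (εd (n+2)))) := by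
          rw [ENNReal.ofReal_mul (by norm_num : (0:ℝ) ≤ 4), ENNReal.ofReal_ofNat]; ring
      _ = 4 * (ENNReal.ofReal (ψinv c) * φ.measure (Set.Ioc (εd (n+2)) (εd (n+1)))) := by
          rw [φ.measure_Ioc]
      _ ≤ 4 * ∫⁻ r in Set.Ioc (εd (n+2)) (εd (n+1)),
            psiInvE ψinv (4 * U / ENNReal.ofReal (r^2)) ∂φ.measure := by
          apply mul_le_mul_right
          rw [← setLIntegral_const]
          exact lintegral_mono_ae ((ae_restrict_iff' measurableSet_Ioc).2
            (Filter.Eventually.of_forall hptwise))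
  -- correction estimates
  have Dcorr : ∀ n, ENNReal.ofReal (ψinv (4*C/(τ n - s)^2) * φ (τ n - s)) ≤
      2 * ∫⁻ r in Set.Ioc (τ (n+1) - s) (τ n - s),
        ENNReal.ofReal (ψinv (4 * C / r ^ 2)) ∂φ.measure := by
    intro n
    have hdn : 0 < τ n - s := sub_pos.2 (hτs n)
    have hdn1 : 0 < τ (n+1) - s := sub_pos.2 (hτs (n+1))
    have hK0 : 0 ≤ ψinv (4*C/(τ n - s)^2) := hψinv3 _ (by positivity)
    have hφd1 : φ (τ (n+1) - s) ≤ φ (δd (n+1)) := hφle _ _ hdn1.le (hdlt (n+1)).le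
    have hhalf := hφhalfD n
    have hm : φ (τ n - s) ≤ 2 * (φ (τ n - s) - φ (τ (n+1) - s)) := by linarith
    have hptw : ∀ r ∈ Set.Ioc (τ (n+1) - s) (τ n - s),
        ENNReal.ofReal (ψinv (4*C/(τ n - s)^2)) ≤ ENNReal.ofReal (ψinv (4 * C / r ^ 2)) := by
      intro r hr
      apply ENNReal.ofReal_le_ofReal
      apply hψinvmono _ _ (by positivity)
      have hr0 : 0 < r := lt_trans hdn1 hr.1
      have hsq : r^2 ≤ (τ n - s)^2 := by nlinarith [hr.2]
      rw [div_le_div_iff₀ (by positivity) (by positivity)]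
      exact mul_le_mul_of_nonneg_left hsq (by positivity)
    calc ENNReal.ofReal (ψinv (4*C/(τ n - s)^2) * φ (τ n - s))
        = ENNReal.ofReal (ψinv (4*C/(τ n - s)^2)) * ENNReal.ofReal (φ (τ n - s)) :=
          ENNReal.ofReal_mul hK0
      _ ≤ ENNReal.ofReal (ψinv (4*C/(τ n - s)^2)) *
            ENNReal.ofReal (2 * (φ (τ n - s) - φ (τ (n+1) - s))) :=
          mul_le_mul_right (ENNReal.ofReal_le_ofReal hm) _
      _ = 2 * (ENNReal.ofReal (ψinv (4*C/(τ n - s)^2)) *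
            φ.measure (Set.Ioc (τ (n+1) - s) (τ n - s))) := by
          rw [φ.measure_Ioc, ENNReal.ofReal_mul (by norm_num : (0:ℝ) ≤ 2),
            ENNReal.ofReal_ofNat]
          ring
      _ ≤ 2 * ∫⁻ r in Set.Ioc (τ (n+1) - s) (τ n - s),
            ENNReal.ofReal (ψinv (4 * C / r ^ 2)) ∂φ.measure := by
          apply mul_le_mul_right
          rw [← setLIntegral_const]
          exact lintegral_mono_ae ((ae_restrict_iff' measurableSet_Ioc).2
            (Filter.Eventually.of_forall hptw))
  have Ucorr : ∀ n, ENNReal.ofReal (ψinv (4*C/(t - σ n)^2) * φ (t - σ n)) ≤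
      2 * ∫⁻ r in Set.Ioc (t - σ (n+1)) (t - σ n),
        ENNReal.ofReal (ψinv (4 * C / r ^ 2)) ∂φ.measure := by
    intro n
    have hdn : 0 < t - σ n := sub_pos.2 (hσt n)
    have hdn1 : 0 < t - σ (n+1) := sub_pos.2 (hσt (n+1))
    have hK0 : 0 ≤ ψinv (4*C/(t - σ n)^2) := hψinv3 _ (by positivity)
    have hφd1 : φ (t - σ (n+1)) ≤ φ (εd (n+1)) := hφle _ _ hdn1.le (helt (n+1)).le
    have hhalf := hφhalfU n
    have hm : φ (t - σ n) ≤ 2 * (φ (t - σ n) - φ (t - σ (n+1))) := by linarith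
    have hptw : ∀ r ∈ Set.Ioc (t - σ (n+1)) (t - σ n),
        ENNReal.ofReal (ψinv (4*C/(t - σ n)^2)) ≤ ENNReal.ofReal (ψinv (4 * C / r ^ 2)) := by
      intro r hr
      apply ENNReal.ofReal_le_ofReal
      apply hψinvmono _ _ (by positivity)
      have hr0 : 0 < r := lt_trans hdn1 hr.1
      have hsq : r^2 ≤ (t - σ n)^2 := by nlinarith [hr.2]
      rw [div_le_div_iff₀ (by positivity) (by positivity)]
      exact mul_le_mul_of_nonneg_left hsq (by positivity)
    calc ENNReal.ofReal (ψinv (4*C/(t - σ n)^2) * φ (t - σ n))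
        = ENNReal.ofReal (ψinv (4*C/(t - σ n)^2)) * ENNReal.ofReal (φ (t - σ n)) :=
          ENNReal.ofReal_mul hK0
      _ ≤ ENNReal.ofReal (ψinv (4*C/(t - σ n)^2)) *
            ENNReal.ofReal (2 * (φ (t - σ n) - φ (t - σ (n+1)))) :=
          mul_le_mul_right (ENNReal.ofReal_le_ofReal hm) _
      _ = 2 * (ENNReal.ofReal (ψinv (4*C/(t - σ n)^2)) *
            φ.measure (Set.Ioc (t - σ (n+1)) (t - σ n))) := by
          rw [φ.measure_Ioc, ENNReal.ofReal_mul (by norm_num : (0:ℝ) ≤ 2),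
            ENNReal.ofReal_ofNat]
          ring
      _ ≤ 2 * ∫⁻ r in Set.Ioc (t - σ (n+1)) (t - σ n),
            ENNReal.ofReal (ψinv (4 * C / r ^ 2)) ∂φ.measure := by
          apply mul_le_mul_right
          rw [← setLIntegral_const]
          exact lintegral_mono_ae ((ae_restrict_iff' measurableSet_Ioc).2
            (Filter.Eventually.of_forall hptw))
  -- telescoping
  have hexp1 : ∀ x : ℝ, 0 ≤ x → Real.exp (-ξ * x) ≤ 1 := by
    intro x hx
    rw [Real.exp_le_one_iff]
    nlinarith [mul_nonneg hξ hx]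
  have hstepD : ∀ n, ‖R (τ n) s‖ ≤ ‖R (τ n) (τ (n+1))‖ +
      ψinv (4*C/(τ n - s)^2) * φ (τ n - s) + ‖R (τ (n+1)) s‖ := by
    intro n
    have hb := hδR s (τ n) hs (hτs n) ((hτt n).le.trans htT) (τ (n+1))
      (hτs (n+1)).le (hττ n).le
    have hsm : ‖Real.exp (-ξ * (τ n - τ (n+1))) • R (τ (n+1)) s‖ ≤ ‖R (τ (n+1)) s‖ := by
      rw [norm_smul, Real.norm_eq_abs, abs_of_pos (Real.exp_pos _)]
      exact mul_le_of_le_one_left (norm_nonneg _) (hexp1 _ (sub_pos.2 (hττ n)).le)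
    have hdecomp : R (τ n) s =
        (R (τ n) s - R (τ n) (τ (n+1)) - Real.exp (-ξ * (τ n - τ (n+1))) • R (τ (n+1)) s)
          + Real.exp (-ξ * (τ n - τ (n+1))) • R (τ (n+1)) s + R (τ n) (τ (n+1)) := by abel
    calc ‖R (τ n) s‖ = ‖(R (τ n) s - R (τ n) (τ (n+1))
          - Real.exp (-ξ * (τ n - τ (n+1))) • R (τ (n+1)) s)
          + Real.exp (-ξ * (τ n - τ (n+1))) • R (τ (n+1)) s + R (τ n) (τ (n+1))‖ := by
          rw [← hdecomp]
      _ ≤ ‖R (τ n) s - R (τ n) (τ (n+1))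
            - Real.exp (-ξ * (τ n - τ (n+1))) • R (τ (n+1)) s‖
          + ‖Real.exp (-ξ * (τ n - τ (n+1))) • R (τ (n+1)) s‖
          + ‖R (τ n) (τ (n+1))‖ := norm_add₃_le
      _ ≤ ψinv (4*C/(τ n - s)^2) * φ (τ n - s) + ‖R (τ (n+1)) s‖ + ‖R (τ n) (τ (n+1))‖ :=
          add_le_add (add_le_add hb hsm) le_rfl
      _ = _ := by ring
  have hstepU : ∀ n, ‖R t (σ n)‖ ≤ ‖R (σ (n+1)) (σ n)‖ +
      ψinv (4*C/(t - σ n)^2) * φ (t - σ n) + ‖R t (σ (n+1))‖ := by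
    intro n
    have hb := hδR (σ n) t (hs.trans (hsσ n).le) (hσt n) htT (σ (n+1))
      (hσσ n).le (hσt (n+1)).le
    have hsm : ‖Real.exp (-ξ * (t - σ (n+1))) • R (σ (n+1)) (σ n)‖ ≤ ‖R (σ (n+1)) (σ n)‖ := by
      rw [norm_smul, Real.norm_eq_abs, abs_of_pos (Real.exp_pos _)]
      exact mul_le_of_le_one_left (norm_nonneg _) (hexp1 _ (sub_pos.2 (hσt (n+1))).le)
    have hdecomp : R t (σ n) =
        (R t (σ n) - R t (σ (n+1)) - Real.exp (-ξ * (t - σ (n+1))) • R (σ (n+1)) (σ n))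
          + Real.exp (-ξ * (t - σ (n+1))) • R (σ (n+1)) (σ n) + R t (σ (n+1)) := by abel
    calc ‖R t (σ n)‖ = ‖(R t (σ n) - R t (σ (n+1))
          - Real.exp (-ξ * (t - σ (n+1))) • R (σ (n+1)) (σ n))
          + Real.exp (-ξ * (t - σ (n+1))) • R (σ (n+1)) (σ n) + R t (σ (n+1))‖ := by
          rw [← hdecomp]
      _ ≤ ‖R t (σ n) - R t (σ (n+1))
            - Real.exp (-ξ * (t - σ (n+1))) • R (σ (n+1)) (σ n)‖
          + ‖Real.exp (-ξ * (t - σ (n+1))) • R (σ (n+1)) (σ n)‖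
          + ‖R t (σ (n+1))‖ := norm_add₃_le
      _ ≤ ψinv (4*C/(t - σ n)^2) * φ (t - σ n) + ‖R (σ (n+1)) (σ n)‖ + ‖R t (σ (n+1))‖ :=
          add_le_add (add_le_add hb hsm) le_rfl
      _ = _ := by ring
  have Dtele : ∀ N, ‖R u₀ s‖ ≤ (∑ n ∈ Finset.range N,
      (‖R (τ n) (τ (n+1))‖ + ψinv (4*C/(τ n - s)^2) * φ (τ n - s))) + ‖R (τ N) s‖ := by
    intro N
    induction N with
    | zero => simp [hτ0]
    | succ N ih =>
      rw [Finset.sum_range_succ]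
      have h1 := hstepD N
      calc ‖R u₀ s‖ ≤ (∑ n ∈ Finset.range N,
          (‖R (τ n) (τ (n+1))‖ + ψinv (4*C/(τ n - s)^2) * φ (τ n - s))) + ‖R (τ N) s‖ := ih
        _ ≤ _ := by linarith
  have Utele : ∀ N, ‖R t u₀‖ ≤ (∑ n ∈ Finset.range N,
      (‖R (σ (n+1)) (σ n)‖ + ψinv (4*C/(t - σ n)^2) * φ (t - σ n))) + ‖R t (σ N)‖ := by
    intro N
    induction N with
    | zero => simp [hσ0]
    | succ N ih =>
      rw [Finset.sum_range_succ]
      have h1 := hstepU N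
      calc ‖R t u₀‖ ≤ (∑ n ∈ Finset.range N,
          (‖R (σ (n+1)) (σ n)‖ + ψinv (4*C/(t - σ n)^2) * φ (t - σ n))) + ‖R t (σ N)‖ := ih
        _ ≤ _ := by linarith
  -- summing up (down chain)
  have DownSum : ∀ N, ENNReal.ofReal ‖R u₀ s‖
      ≤ 4 * In1 + 2 * In2 + ENNReal.ofReal ‖R (τ N) s‖ := by
    intro N
    have hKnn : ∀ n : ℕ, 0 ≤ ψinv (4*C/(τ n - s)^2) * φ (τ n - s) := fun n =>
      mul_nonneg (hψinv3 _ (by positivity)) (hφnonneg _ (sub_pos.2 (hτs n)).le)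
    have hsum_nonneg : ∀ n ∈ Finset.range N,
        0 ≤ ‖R (τ n) (τ (n+1))‖ + ψinv (4*C/(τ n - s)^2) * φ (τ n - s) := fun n _ =>
      add_nonneg (norm_nonneg _) (hKnn n)
    have hinner : ENNReal.ofReal (∑ n ∈ Finset.range N,
        (‖R (τ n) (τ (n+1))‖ + ψinv (4*C/(τ n - s)^2) * φ (τ n - s)))
        ≤ 4 * In1 + 2 * In2 := by
      calc ENNReal.ofReal (∑ n ∈ Finset.range N,
          (‖R (τ n) (τ (n+1))‖ + ψinv (4*C/(τ n - s)^2) * φ (τ n - s)))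
          = ∑ n ∈ Finset.range N, (ENNReal.ofReal ‖R (τ n) (τ (n+1))‖
              + ENNReal.ofReal (ψinv (4*C/(τ n - s)^2) * φ (τ n - s))) := by
            rw [ENNReal.ofReal_sum_of_nonneg hsum_nonneg]
            exact Finset.sum_congr rfl fun n _ =>
              ENNReal.ofReal_add (norm_nonneg _) (hKnn n)
        _ = (∑ n ∈ Finset.range N, ENNReal.ofReal ‖R (τ n) (τ (n+1))‖)
            + ∑ n ∈ Finset.range N,
              ENNReal.ofReal (ψinv (4*C/(τ n - s)^2) * φ (τ n - s)) :=
            Finset.sum_add_distrib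
        _ ≤ (∑ n ∈ Finset.range N, 4 * ∫⁻ r in Set.Ioc (δd (n+2)) (δd (n+1)),
              psiInvE ψinv (4 * U / ENNReal.ofReal (r^2)) ∂φ.measure)
            + ∑ n ∈ Finset.range N, 2 * ∫⁻ r in Set.Ioc (τ (n+1) - s) (τ n - s),
              ENNReal.ofReal (ψinv (4 * C / r ^ 2)) ∂φ.measure :=
            add_le_add (Finset.sum_le_sum fun n _ => Dmain n)
              (Finset.sum_le_sum fun n _ => Dcorr n)
        _ = 4 * (∑ n ∈ Finset.range N, ∫⁻ r in Set.Ioc (δd (n+2)) (δd (n+1)),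
              psiInvE ψinv (4 * U / ENNReal.ofReal (r^2)) ∂φ.measure)
            + 2 * ∑ n ∈ Finset.range N, ∫⁻ r in Set.Ioc (τ (n+1) - s) (τ n - s),
              ENNReal.ofReal (ψinv (4 * C / r ^ 2)) ∂φ.measure := by
            rw [Finset.mul_sum, Finset.mul_sum]
        _ ≤ 4 * In1 + 2 * In2 := by
            apply add_le_add
            · apply mul_le_mul_right
              rw [hIn1_def]
              exact grr_sum_lintegral_Ioc_le φ.measure _ (fun n => δd (n+1)) (t - s)
                (fun n => hδdpos (n+1)) (fun n => hδddec (n+1)) (hδdle 1) N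
            · apply mul_le_mul_right
              rw [hIn2_def]
              exact grr_sum_lintegral_Ioc_le φ.measure _ (fun n => τ n - s) (t - s)
                (fun n => sub_pos.2 (hτs n))
                (fun n => by show τ (n+1) - s ≤ τ n - s; linarith [hττ n])
                (by show τ 0 - s ≤ t - s; rw [hτ0]; linarith [hu₀mem.2]) N
    calc ENNReal.ofReal ‖R u₀ s‖
        ≤ ENNReal.ofReal ((∑ n ∈ Finset.range N,
            (‖R (τ n) (τ (n+1))‖ + ψinv (4*C/(τ n - s)^2) * φ (τ n - s))) + ‖R (τ N) s‖) :=
          ENNReal.ofReal_le_ofReal (Dtele N)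
      _ ≤ ENNReal.ofReal (∑ n ∈ Finset.range N,
            (‖R (τ n) (τ (n+1))‖ + ψinv (4*C/(τ n - s)^2) * φ (τ n - s)))
          + ENNReal.ofReal ‖R (τ N) s‖ := ENNReal.ofReal_add_le
      _ ≤ 4 * In1 + 2 * In2 + ENNReal.ofReal ‖R (τ N) s‖ := add_le_add_left hinner _
  have UpSum : ∀ N, ENNReal.ofReal ‖R t u₀‖
      ≤ 4 * In1 + 2 * In2 + ENNReal.ofReal ‖R t (σ N)‖ := by
    intro N
    have hKnn : ∀ n : ℕ, 0 ≤ ψinv (4*C/(t - σ n)^2) * φ (t - σ n) := fun n =>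
      mul_nonneg (hψinv3 _ (by positivity)) (hφnonneg _ (sub_pos.2 (hσt n)).le)
    have hsum_nonneg : ∀ n ∈ Finset.range N,
        0 ≤ ‖R (σ (n+1)) (σ n)‖ + ψinv (4*C/(t - σ n)^2) * φ (t - σ n) := fun n _ =>
      add_nonneg (norm_nonneg _) (hKnn n)
    have hinner : ENNReal.ofReal (∑ n ∈ Finset.range N,
        (‖R (σ (n+1)) (σ n)‖ + ψinv (4*C/(t - σ n)^2) * φ (t - σ n)))
        ≤ 4 * In1 + 2 * In2 := by
      calc ENNReal.ofReal (∑ n ∈ Finset.range N,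
          (‖R (σ (n+1)) (σ n)‖ + ψinv (4*C/(t - σ n)^2) * φ (t - σ n)))
          = ∑ n ∈ Finset.range N, (ENNReal.ofReal ‖R (σ (n+1)) (σ n)‖
              + ENNReal.ofReal (ψinv (4*C/(t - σ n)^2) * φ (t - σ n))) := by
            rw [ENNReal.ofReal_sum_of_nonneg hsum_nonneg]
            exact Finset.sum_congr rfl fun n _ =>
              ENNReal.ofReal_add (norm_nonneg _) (hKnn n)
        _ = (∑ n ∈ Finset.range N, ENNReal.ofReal ‖R (σ (n+1)) (σ n)‖)
            + ∑ n ∈ Finset.range N,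
              ENNReal.ofReal (ψinv (4*C/(t - σ n)^2) * φ (t - σ n)) :=
            Finset.sum_add_distrib
        _ ≤ (∑ n ∈ Finset.range N, 4 * ∫⁻ r in Set.Ioc (εd (n+2)) (εd (n+1)),
              psiInvE ψinv (4 * U / ENNReal.ofReal (r^2)) ∂φ.measure)
            + ∑ n ∈ Finset.range N, 2 * ∫⁻ r in Set.Ioc (t - σ (n+1)) (t - σ n),
              ENNReal.ofReal (ψinv (4 * C / r ^ 2)) ∂φ.measure :=
            add_le_add (Finset.sum_le_sum fun n _ => Umain n)
              (Finset.sum_le_sum fun n _ => Ucorr n)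
        _ = 4 * (∑ n ∈ Finset.range N, ∫⁻ r in Set.Ioc (εd (n+2)) (εd (n+1)),
              psiInvE ψinv (4 * U / ENNReal.ofReal (r^2)) ∂φ.measure)
            + 2 * ∑ n ∈ Finset.range N, ∫⁻ r in Set.Ioc (t - σ (n+1)) (t - σ n),
              ENNReal.ofReal (ψinv (4 * C / r ^ 2)) ∂φ.measure := by
            rw [Finset.mul_sum, Finset.mul_sum]
        _ ≤ 4 * In1 + 2 * In2 := by
            apply add_le_add
            · apply mul_le_mul_right
              rw [hIn1_def]
              exact grr_sum_lintegral_Ioc_le φ.measure _ (fun n => εd (n+1)) (t - s)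
                (fun n => hεdpos (n+1)) (fun n => hεddec (n+1)) (hεdle 1) N
            · apply mul_le_mul_right
              rw [hIn2_def]
              exact grr_sum_lintegral_Ioc_le φ.measure _ (fun n => t - σ n) (t - s)
                (fun n => sub_pos.2 (hσt n))
                (fun n => by show t - σ (n+1) ≤ t - σ n; linarith [hσσ n])
                (by show t - σ 0 ≤ t - s; rw [hσ0]; linarith [hu₀mem.1]) N
    calc ENNReal.ofReal ‖R t u₀‖
        ≤ ENNReal.ofReal ((∑ n ∈ Finset.range N,
            (‖R (σ (n+1)) (σ n)‖ + ψinv (4*C/(t - σ n)^2) * φ (t - σ n))) + ‖R t (σ N)‖) :=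
          ENNReal.ofReal_le_ofReal (Utele N)
      _ ≤ ENNReal.ofReal (∑ n ∈ Finset.range N,
            (‖R (σ (n+1)) (σ n)‖ + ψinv (4*C/(t - σ n)^2) * φ (t - σ n)))
          + ENNReal.ofReal ‖R t (σ N)‖ := ENNReal.ofReal_add_le
      _ ≤ 4 * In1 + 2 * In2 + ENNReal.ofReal ‖R t (σ N)‖ := add_le_add_left hinner _
  -- convergence of the chains
  have hφgeomD : ∀ n, φ (τ n - s) ≤ (1/2:ℝ)^n * φ (u₀ - s) := by
    intro n
    induction n with
    | zero => rw [hτ0]; simp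
    | succ n ih =>
      have hhalf := hφhalfD n
      calc φ (τ (n+1) - s) ≤ φ (δd (n+1)) :=
            hφle _ _ (sub_pos.2 (hτs (n+1))).le (hdlt (n+1)).le
        _ = φ (τ n - s) / 2 := by linarith
        _ ≤ ((1/2:ℝ)^n * φ (u₀ - s)) / 2 := by linarith
        _ = (1/2:ℝ)^(n+1) * φ (u₀ - s) := by ring
  have hφgeomU : ∀ n, φ (t - σ n) ≤ (1/2:ℝ)^n * φ (t - u₀) := by
    intro n
    induction n with
    | zero => rw [hσ0]; simp
    | succ n ih =>
      have hhalf := hφhalfU n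
      calc φ (t - σ (n+1)) ≤ φ (εd (n+1)) :=
            hφle _ _ (sub_pos.2 (hσt (n+1))).le (helt (n+1)).le
        _ = φ (t - σ n) / 2 := by linarith
        _ ≤ ((1/2:ℝ)^n * φ (t - u₀)) / 2 := by linarith
        _ = (1/2:ℝ)^(n+1) * φ (t - u₀) := by ring
  have hτtend : Filter.Tendsto (fun n => τ n) Filter.atTop (nhds s) := by
    rw [Metric.tendsto_atTop]
    intro ε hε
    have hd₀ : 0 < u₀ - s := sub_pos.2 hu₀mem.1
    have hε'0 : 0 < min ε (u₀ - s) := lt_min hε hd₀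
    have hratio : 0 < φ (min ε (u₀ - s)) / φ (u₀ - s) :=
      div_pos (hφpos _ hε'0) (hφpos _ hd₀)
    obtain ⟨N, hN⟩ := exists_pow_lt_of_lt_one hratio (by norm_num : (1/2:ℝ) < 1)
    refine ⟨N, fun n hn => ?_⟩
    have h1 : φ (τ n - s) ≤ (1/2:ℝ)^n * φ (u₀ - s) := hφgeomD n
    have h2 : (1/2:ℝ)^n ≤ (1/2:ℝ)^N :=
      pow_le_pow_of_le_one (by norm_num) (by norm_num) hn
    have h3 : φ (τ n - s) < φ (min ε (u₀ - s)) := by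
      have h4 := mul_lt_mul_of_pos_right hN (hφpos _ hd₀)
      rw [div_mul_cancel₀ _ (hφpos _ hd₀).ne'] at h4
      nlinarith [hφpos _ hd₀]
    have h5 : τ n - s < min ε (u₀ - s) :=
      hφltlt _ _ (sub_pos.2 (hτs n)).le hε'0.le h3
    rw [Real.dist_eq, abs_of_pos (sub_pos.2 (hτs n))]
    exact lt_of_lt_of_le h5 (min_le_left _ _)
  have hσtend : Filter.Tendsto (fun n => σ n) Filter.atTop (nhds t) := by
    rw [Metric.tendsto_atTop]
    intro ε hε
    have hd₀ : 0 < t - u₀ := sub_pos.2 hu₀mem.2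
    have hε'0 : 0 < min ε (t - u₀) := lt_min hε hd₀
    have hratio : 0 < φ (min ε (t - u₀)) / φ (t - u₀) :=
      div_pos (hφpos _ hε'0) (hφpos _ hd₀)
    obtain ⟨N, hN⟩ := exists_pow_lt_of_lt_one hratio (by norm_num : (1/2:ℝ) < 1)
    refine ⟨N, fun n hn => ?_⟩
    have h1 : φ (t - σ n) ≤ (1/2:ℝ)^n * φ (t - u₀) := hφgeomU n
    have h2 : (1/2:ℝ)^n ≤ (1/2:ℝ)^N :=
      pow_le_pow_of_le_one (by norm_num) (by norm_num) hn
    have h3 : φ (t - σ n) < φ (min ε (t - u₀)) := by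
      have h4 := mul_lt_mul_of_pos_right hN (hφpos _ hd₀)
      rw [div_mul_cancel₀ _ (hφpos _ hd₀).ne'] at h4
      nlinarith [hφpos _ hd₀]
    have h5 : t - σ n < min ε (t - u₀) :=
      hφltlt _ _ (sub_pos.2 (hσt n)).le hε'0.le h3
    rw [Real.dist_eq, abs_sub_comm, abs_of_pos (sub_pos.2 (hσt n))]
    exact lt_of_lt_of_le h5 (min_le_left _ _)
  have hRtendD : Filter.Tendsto (fun n => ‖R (τ n) s‖) Filter.atTop (nhds 0) := by
    have hmem : ((s:ℝ), s) ∈ {p : ℝ × ℝ | 0 ≤ p.2 ∧ p.2 ≤ p.1 ∧ p.1 ≤ T} :=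
      ⟨hs, le_refl s, le_trans hst htT⟩
    have hcw := hRcont _ hmem
    have hseq : Filter.Tendsto (fun n => ((τ n : ℝ), s)) Filter.atTop
        (nhdsWithin ((s:ℝ), s) {p : ℝ × ℝ | 0 ≤ p.2 ∧ p.2 ≤ p.1 ∧ p.1 ≤ T}) := by
      rw [tendsto_nhdsWithin_iff]
      exact ⟨hτtend.prodMk_nhds tendsto_const_nhds,
        Filter.Eventually.of_forall fun n => ⟨hs, (hτs n).le, (hτt n).le.trans htT⟩⟩
    have h5 := hcw.tendsto.comp hseq
    rw [hRtt s hs (le_trans hst htT)] at h5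
    have h6 := h5.norm
    rwa [norm_zero] at h6
  have hRtendU : Filter.Tendsto (fun n => ‖R t (σ n)‖) Filter.atTop (nhds 0) := by
    have hmem : ((t:ℝ), t) ∈ {p : ℝ × ℝ | 0 ≤ p.2 ∧ p.2 ≤ p.1 ∧ p.1 ≤ T} :=
      ⟨hs.trans hst, le_refl t, htT⟩
    have hcw := hRcont _ hmem
    have hseq : Filter.Tendsto (fun n => ((t:ℝ), σ n)) Filter.atTop
        (nhdsWithin ((t:ℝ), t) {p : ℝ × ℝ | 0 ≤ p.2 ∧ p.2 ≤ p.1 ∧ p.1 ≤ T}) := by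
      rw [tendsto_nhdsWithin_iff]
      exact ⟨tendsto_const_nhds.prodMk_nhds hσtend,
        Filter.Eventually.of_forall fun n => ⟨hs.trans (hsσ n).le, (hσt n).le, htT⟩⟩
    have h5 := hcw.tendsto.comp hseq
    rw [hRtt t (hs.trans hst) htT] at h5
    have h6 := h5.norm
    rwa [norm_zero] at h6
  have DownBound : ENNReal.ofReal ‖R u₀ s‖ ≤ 4 * In1 + 2 * In2 := by
    refine ENNReal.le_of_forall_pos_le_add fun ε hε hfin => ?_
    obtain ⟨N, hN⟩ := Metric.tendsto_atTop.1 hRtendD ε (by exact_mod_cast hε)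
    have h6 := hN N (le_refl N)
    rw [Real.dist_eq, sub_zero, abs_of_nonneg (norm_nonneg _)] at h6
    calc ENNReal.ofReal ‖R u₀ s‖
        ≤ 4 * In1 + 2 * In2 + ENNReal.ofReal ‖R (τ N) s‖ := DownSum N
      _ ≤ 4 * In1 + 2 * In2 + ε := by
          apply add_le_add_right
          calc ENNReal.ofReal ‖R (τ N) s‖ ≤ ENNReal.ofReal (ε:ℝ) :=
                ENNReal.ofReal_le_ofReal h6.le
            _ = (ε : ℝ≥0∞) := ENNReal.ofReal_coe_nnreal
  have UpBound : ENNReal.ofReal ‖R t u₀‖ ≤ 4 * In1 + 2 * In2 := by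
    refine ENNReal.le_of_forall_pos_le_add fun ε hε hfin => ?_
    obtain ⟨N, hN⟩ := Metric.tendsto_atTop.1 hRtendU ε (by exact_mod_cast hε)
    have h6 := hN N (le_refl N)
    rw [Real.dist_eq, sub_zero, abs_of_nonneg (norm_nonneg _)] at h6
    calc ENNReal.ofReal ‖R t u₀‖
        ≤ 4 * In1 + 2 * In2 + ENNReal.ofReal ‖R t (σ N)‖ := UpSum N
      _ ≤ 4 * In1 + 2 * In2 + ε := by
          apply add_le_add_right
          calc ENNReal.ofReal ‖R t (σ N)‖ ≤ ENNReal.ofReal (ε:ℝ) :=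
                ENNReal.ofReal_le_ofReal h6.le
            _ = (ε : ℝ≥0∞) := ENNReal.ofReal_coe_nnreal
  -- the final assembly
  have htopstep := hδR s t hs hlt htT u₀ hu₀mem.1.le hu₀mem.2.le
  have hsm : ‖Real.exp (-ξ * (t - u₀)) • R u₀ s‖ ≤ ‖R u₀ s‖ := by
    rw [norm_smul, Real.norm_eq_abs, abs_of_pos (Real.exp_pos _)]
    exact mul_le_of_le_one_left (norm_nonneg _) (hexp1 _ (sub_pos.2 hu₀mem.2).le)
  have hfinR : ‖R t s‖ ≤ ψinv (4*C/(t-s)^2) * φ (t-s) + ‖R t u₀‖ + ‖R u₀ s‖ := by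
    have hdecomp : R t s =
        (R t s - R t u₀ - Real.exp (-ξ * (t - u₀)) • R u₀ s)
          + Real.exp (-ξ * (t - u₀)) • R u₀ s + R t u₀ := by abel
    calc ‖R t s‖ = ‖(R t s - R t u₀ - Real.exp (-ξ * (t - u₀)) • R u₀ s)
          + Real.exp (-ξ * (t - u₀)) • R u₀ s + R t u₀‖ := by rw [← hdecomp]
      _ ≤ ‖R t s - R t u₀ - Real.exp (-ξ * (t - u₀)) • R u₀ s‖
          + ‖Real.exp (-ξ * (t - u₀)) • R u₀ s‖ + ‖R t u₀‖ := norm_add₃_le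
      _ ≤ ψinv (4*C/(t-s)^2) * φ (t-s) + ‖R u₀ s‖ + ‖R t u₀‖ :=
          add_le_add (add_le_add htopstep hsm) le_rfl
      _ = _ := by ring
  have hK₀ : ENNReal.ofReal (ψinv (4*C/(t-s)^2) * φ (t-s)) ≤ In2 := by
    have hK0' : 0 ≤ ψinv (4*C/(t-s)^2) := hψinv3 _ (by positivity)
    have hptw : ∀ r ∈ Set.Ioc (0:ℝ) (t - s),
        ENNReal.ofReal (ψinv (4*C/(t-s)^2)) ≤ ENNReal.ofReal (ψinv (4 * C / r ^ 2)) := by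
      intro r hr
      apply ENNReal.ofReal_le_ofReal
      apply hψinvmono _ _ (by positivity)
      have hr0 : 0 < r := hr.1
      have hsq : r^2 ≤ (t - s)^2 := by nlinarith [hr.2]
      rw [div_le_div_iff₀ (by positivity) (by positivity)]
      exact mul_le_mul_of_nonneg_left hsq (by positivity)
    calc ENNReal.ofReal (ψinv (4*C/(t-s)^2) * φ (t-s))
        = ENNReal.ofReal (ψinv (4*C/(t-s)^2)) * ENNReal.ofReal (φ (t-s)) :=
          ENNReal.ofReal_mul hK0'
      _ = ENNReal.ofReal (ψinv (4*C/(t-s)^2)) * φ.measure (Set.Ioc (0:ℝ) (t-s)) := by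
          rw [φ.measure_Ioc, hφ0, sub_zero]
      _ ≤ In2 := by
          rw [hIn2_def, ← setLIntegral_const]
          exact lintegral_mono_ae ((ae_restrict_iff' measurableSet_Ioc).2
            (Filter.Eventually.of_forall hptw))
  calc ENNReal.ofReal ‖R t s‖
      ≤ ENNReal.ofReal (ψinv (4*C/(t-s)^2) * φ (t-s) + ‖R t u₀‖ + ‖R u₀ s‖) :=
        ENNReal.ofReal_le_ofReal hfinR
    _ ≤ ENNReal.ofReal (ψinv (4*C/(t-s)^2) * φ (t-s) + ‖R t u₀‖)
        + ENNReal.ofReal ‖R u₀ s‖ := ENNReal.ofReal_add_le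
    _ ≤ (ENNReal.ofReal (ψinv (4*C/(t-s)^2) * φ (t-s)) + ENNReal.ofReal ‖R t u₀‖)
        + ENNReal.ofReal ‖R u₀ s‖ := add_le_add_left ENNReal.ofReal_add_le _
    _ ≤ (In2 + (4 * In1 + 2 * In2)) + (4 * In1 + 2 * In2) :=
        add_le_add (add_le_add hK₀ UpBound) DownBound
    _ = 8 * In1 + 5 * In2 := by ring
    _ ≤ 8 * In1 + 9 * In2 :=
        add_le_add le_rfl (mul_le_mul_left (by norm_num) In2)
end
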